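/- arXiv:1608.07614 — 6 statements merged into one kernel-verified Lean document; each statement's English description precedes it below -/
import Mathlib

section
/- Let τ be a permutation pattern of length k+1 and let G be a graph that can be represented by a τ-avoiding word. If x is a vertex of G with degree at least k, then every τ-avoiding word w representing G contains at most k occurrences of the letter x. -/
/-- Two letters `x` and `y` alternate in the word `w`: between any two occurrences of `x`
there is an occurrence of `y`, and between any two occurrences of `y` there is an
occurrence of `x`. -/
def Alternates {α : Type*} (w : List α) (x y : α) : Prop :=
  (∀ i j : ℕ, i < j → w[i]? = some x → w[j]? = some x →
      ∃ k : ℕ, i < k ∧ k < j ∧ w[k]? = some y) ∧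
  (∀ i j : ℕ, i < j → w[i]? = some y → w[j]? = some y →
      ∃ k : ℕ, i < k ∧ k < j ∧ w[k]? = some x)

/-- A word `w` over the vertex set of `G` represents `G`: every vertex occurs in `w`, and
two distinct vertices alternate in `w` iff they are adjacent in `G`. -/
def Represents {α : Type*} (G : SimpleGraph α) (w : List α) : Prop :=
  (∀ v : α, v ∈ w) ∧ ∀ x y : α, x ≠ y → (Alternates w x y ↔ G.Adj x y)

/-- A word `w` over the labels represents `G` via the (injective) labeling `f` of the
vertices: every letter of `w` is the label of a vertex, every vertex's label occurs in `w`,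
and the labels of two distinct vertices alternate in `w` iff the vertices are adjacent. -/
def RepresentsLab {V L : Type*} (G : SimpleGraph V) (f : V → L) (w : List L) : Prop :=
  (∀ l ∈ w, ∃ v : V, f v = l) ∧ (∀ v : V, f v ∈ w) ∧
  ∀ x y : V, x ≠ y → (Alternates w (f x) (f y) ↔ G.Adj x y)

/-- `w` avoids the pattern 123: it has no strictly increasing subsequence of length 3. -/
def Avoids123 {α : Type*} [LinearOrder α] (w : List α) : Prop :=
  ¬ ∃ (i j k : ℕ) (a b c : α), i < j ∧ j < k ∧
    w[i]? = some a ∧ w[j]? = some b ∧ w[k]? = some c ∧ a < b ∧ b < c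

/-- `w` avoids the pattern 132: there are no indices `i < j < k` with `w_i < w_k < w_j`. -/
def Avoids132 {α : Type*} [LinearOrder α] (w : List α) : Prop :=
  ¬ ∃ (i j k : ℕ) (a b c : α), i < j ∧ j < k ∧
    w[i]? = some a ∧ w[j]? = some b ∧ w[k]? = some c ∧ a < c ∧ c < b

/-- `w` is 2-uniform: every letter occurring in `w` occurs exactly twice. -/
def TwoUniform {α : Type*} (w : List α) : Prop :=
  ∀ x ∈ w, ∃ i j : ℕ, i ≠ j ∧ w[i]? = some x ∧ w[j]? = some x ∧
    ∀ k : ℕ, w[k]? = some x → k = i ∨ k = j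

/-- `s` and `τ` are order-isomorphic words: same length and entries in corresponding
positions compare the same way. -/
def OrderIsoWords {α β : Type*} [LinearOrder α] [LinearOrder β]
    (s : List α) (τ : List β) : Prop :=
  s.length = τ.length ∧
  ∀ (i j : ℕ) (a b : α) (c d : β),
    s[i]? = some a → s[j]? = some b → τ[i]? = some c → τ[j]? = some d →
    (a < b ↔ c < d)

/-- `w` contains the pattern `τ`: some subsequence of `w` is order-isomorphic to `τ`. -/
def ContainsPattern {α β : Type*} [LinearOrder α] [LinearOrder β]
    (w : List α) (τ : List β) : Prop :=
  ∃ s : List α, s.Sublist w ∧ OrderIsoWords s τ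

/-- `G` is 123-representable: after relabeling the vertices injectively by elements of some
linearly ordered set, `G` is represented by a 123-avoiding word. -/
def Rep123 {V : Type*} (G : SimpleGraph V) : Prop :=
  ∃ (L : Type) (inst : LinearOrder L) (f : V → L), Function.Injective f ∧
    ∃ w : List L, @Avoids123 L inst w ∧ RepresentsLab G f w

/-- `G` is 132-representable: after relabeling the vertices injectively by elements of some
linearly ordered set, `G` is represented by a 132-avoiding word. -/
def Rep132 {V : Type*} (G : SimpleGraph V) : Prop :=
  ∃ (L : Type) (inst : LinearOrder L) (f : V → L), Function.Injective f ∧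
    ∃ w : List L, @Avoids132 L inst w ∧ RepresentsLab G f w

/-- If `τ` is a permutation pattern of length `k+1`, `G` is a graph that can be
represented by a `τ`-avoiding word, and `x` is a vertex of `G` of degree at least `k`, then
every `τ`-avoiding word representing `G` contains at most `k` occurrences of `x`. -/
theorem stmt_0 {α β : Type*} [LinearOrder α] [Fintype α] [LinearOrder β]
    (G : SimpleGraph α) [DecidableRel G.Adj]
    (k : ℕ) (τ : List β) (hτlen : τ.length = k + 1) (hτnodup : τ.Nodup)
    (hGrep : ∃ w₀ : List α, ¬ ContainsPattern w₀ τ ∧ Represents G w₀)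
    (x : α) (hdeg : k ≤ G.degree x) :
    ∀ w : List α, ¬ ContainsPattern w τ → Represents G w → w.count x ≤ k := by
  clear hGrep
  intro w havoid hrep
  by_contra hcnt
  push_neg at hcnt
  exfalso
  apply havoid
  -- occurrences of x : an order embedding q with w[q n]? = some x for n ≤ k
  have hrepl : (List.replicate (k+1) x).Sublist w :=
    List.replicate_sublist_iff.2 hcnt
  obtain ⟨q, hq⟩ := List.sublist_iff_exists_orderEmbedding_getElem?_eq.1 hrepl
  have hqx : ∀ n : ℕ, n ≤ k → w[(q n : ℕ)]? = some x := by
    intro n hn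
    have := hq n
    rw [List.getElem?_replicate] at this
    rw [← this]
    simp [Nat.lt_succ_of_le hn]
  -- a set S of k neighbours of x
  obtain ⟨S, hSsub, hScard⟩ :=
    Finset.exists_subset_card_eq (s := G.neighborFinset x) (n := k) (by simpa using hdeg)
  have hxS : x ∉ S := fun h => G.loopless.irrefl x (by simpa using hSsub h)
  have hadj : ∀ y ∈ S, G.Adj x y := fun y hy => by simpa using hSsub hy
  -- every neighbour appears strictly between consecutive occurrences of x
  have hgap : ∀ y ∈ S, ∀ a b : ℕ, a < b → b ≤ k →
      ∃ m : ℕ, (q a : ℕ) < m ∧ m < q b ∧ w[m]? = some y := by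
    intro y hy a b hab hbk
    have hxy : x ≠ y := (hadj y hy).ne
    have halt : Alternates w x y := (hrep.2 x y hxy).2 (hadj y hy)
    exact halt.1 (q a) (q b) (q.strictMono hab) (hqx a (le_of_lt (lt_of_lt_of_le hab hbk)))
      (hqx b hbk)
  -- the vertex set T = insert x S and its order iso with Fin (k+1)
  set T : Finset α := insert x S with hT
  have hTcard : T.card = k + 1 := by
    rw [hT, Finset.card_insert_of_notMem hxS, hScard]
  set oT := T.orderIsoOfFin hTcard with hoT
  -- the pattern values
  have hτU : τ.toFinset.card = k + 1 := by rw [List.toFinset_card_of_nodup hτnodup, hτlen]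
  set oU := τ.toFinset.orderIsoOfFin hτU with hoU
  have hτget : ∀ i : Fin (k+1), τ[(i:ℕ)]? = some (τ.get ⟨i, by omega⟩) := by
    intro i
    rw [List.getElem?_eq_getElem (by omega)]
    rfl
  set c : Fin (k+1) → β := fun i => τ.get ⟨i, by omega⟩ with hc
  have hcmem : ∀ i, c i ∈ τ.toFinset := fun i => List.mem_toFinset.2 (τ.get_mem _)
  set ρ : Fin (k+1) → Fin (k+1) := fun i => oU.symm ⟨c i, hcmem i⟩ with hρ
  have hcinj : Function.Injective c := by
    intro i j hij
    have h2 : (⟨(i:ℕ), by omega⟩ : Fin τ.length) = ⟨(j:ℕ), by omega⟩ :=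
      List.nodup_iff_injective_get.1 hτnodup hij
    have h3 := congrArg Fin.val h2
    exact Fin.ext (by simpa using h3)
  have hoUρ : ∀ i, (oU (ρ i) : β) = c i := by
    intro i
    rw [hρ]
    simp only [OrderIso.apply_symm_apply]
  have hρinj : Function.Injective ρ := by
    intro i j hij
    apply hcinj
    rw [← hoUρ i, ← hoUρ j, hij]
  have hρbij : Function.Bijective ρ := Finite.injective_iff_bijective.1 hρinj
  set r : Fin (k+1) := oT.symm ⟨x, Finset.mem_insert_self x S⟩ with hr
  obtain ⟨p, hp⟩ := hρbij.2 r
  -- the letters of the pattern occurrence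
  set s : Fin (k+1) → α := fun i => (oT (ρ i) : α) with hs
  have hsp : s p = x := by
    rw [hs]; simp only [hp, hr, OrderIso.apply_symm_apply]
  have hsS : ∀ i, i ≠ p → s i ∈ S := by
    intro i hip
    have hmem : s i ∈ T := (oT (ρ i)).2
    rcases Finset.mem_insert.1 hmem with h | h
    · exfalso
      apply hip
      apply hρinj
      rw [hp, hr]
      apply_fun oT
      simp only [OrderIso.apply_symm_apply]
      exact Subtype.ext h
    · exact h
  -- order-iso property of s with c
  have hiso : ∀ i j : Fin (k+1), (s i < s j ↔ c i < c j) := by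
    intro i j
    have h1 : s i < s j ↔ ρ i < ρ j := Subtype.coe_lt_coe.trans oT.lt_iff_lt
    have h2 : c i < c j ↔ ρ i < ρ j := by
      rw [← hoUρ i, ← hoUρ j, Subtype.coe_lt_coe, oU.lt_iff_lt]
    rw [h1, h2]
  -- choose positions
  have hEx : ∀ i : Fin (k+1), ∃ m : ℕ,
      (((i:ℕ) < (p:ℕ) → (q i : ℕ) < m ∧ m < q ((i:ℕ)+1)) ∧
       ((i:ℕ) = (p:ℕ) → m = q (i:ℕ)) ∧
       ((p:ℕ) < (i:ℕ) → (q ((i:ℕ)-1) : ℕ) < m ∧ m < q (i:ℕ))) ∧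
      w[m]? = some (s i) := by
    intro i
    rcases lt_trichotomy (i:ℕ) (p:ℕ) with h | h | h
    · obtain ⟨m, hm1, hm2, hm3⟩ := hgap (s i) (hsS i (by intro hc; rw [hc] at h; omega))
        i ((i:ℕ)+1) (by omega) (by omega)
      exact ⟨m, ⟨fun _ => ⟨hm1, hm2⟩, fun h' => by omega, fun h' => by omega⟩, hm3⟩
    · refine ⟨q (i:ℕ), ⟨fun h' => by omega, fun _ => rfl, fun h' => by omega⟩, ?_⟩
      have : i = p := Fin.ext h
      rw [this, hsp]
      exact hqx p (by omega)
    · obtain ⟨m, hm1, hm2, hm3⟩ := hgap (s i) (hsS i (by intro hc; rw [hc] at h; omega))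
        ((i:ℕ)-1) i (by omega) (by omega)
      exact ⟨m, ⟨fun h' => by omega, fun h' => by omega, fun _ => ⟨hm1, hm2⟩⟩, hm3⟩
  choose e he hew using hEx
  -- e is strictly monotone
  have hemono : ∀ i j : Fin (k+1), i < j → e i < e j := by
    intro i j hij
    have hij' : (i:ℕ) < (j:ℕ) := hij
    have hqm : ∀ a b : ℕ, a < b → (q a : ℕ) < q b := fun a b h => q.strictMono h
    have hqle : ∀ a b : ℕ, a ≤ b → (q a : ℕ) ≤ q b := fun a b h => q.monotone h
    rcases lt_trichotomy (i:ℕ) (p:ℕ) with hi | hi | hi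
    · obtain ⟨hi1, hi2⟩ := (he i).1 hi
      rcases lt_trichotomy (j:ℕ) (p:ℕ) with hj | hj | hj
      · obtain ⟨hj1, _⟩ := (he j).1 hj
        exact lt_of_lt_of_le hi2 (le_trans (hqle _ _ (by omega)) (le_of_lt hj1))
      · have hthis := (he j).2.1 hj
        rw [hthis]
        exact lt_of_lt_of_le hi2 (hqle _ _ (by omega))
      · obtain ⟨hj1, _⟩ := (he j).2.2 hj
        calc e i < q ((i:ℕ)+1) := hi2
          _ ≤ q ((j:ℕ)-1) := hqle _ _ (by omega)
          _ < e j := hj1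
    · have hei := (he i).2.1 hi
      have hj : (p:ℕ) < (j:ℕ) := by omega
      obtain ⟨hj1, _⟩ := (he j).2.2 hj
      rw [hei]
      exact lt_of_le_of_lt (hqle _ _ (by omega)) hj1
    · have hj : (p:ℕ) < (j:ℕ) := by omega
      obtain ⟨_, hi2⟩ := (he i).2.2 hi
      obtain ⟨hj1, _⟩ := (he j).2.2 hj
      exact lt_of_lt_of_le hi2 (le_trans (hqle _ _ (by omega)) (le_of_lt hj1))
  -- the subsequence as a list
  set L : List α := List.ofFn s with hL
  have hLlen : L.length = k + 1 := by rw [hL, List.length_ofFn]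
  have hLget : ∀ i : Fin (k+1), L[(i:ℕ)]? = some (s i) := by
    intro i
    rw [hL, List.getElem?_ofFn]
    simp [List.ofFnNthVal, i.isLt]
  have hewlt : ∀ i, e i < w.length := by
    intro i
    have := hew i
    by_contra h
    rw [List.getElem?_eq_none (by omega)] at this
    exact Option.some_ne_none _ this.symm
  have hgmono : StrictMono (fun n : ℕ => if h : n < k + 1 then e ⟨n, h⟩ else w.length + n) := by
    intro a b hab
    dsimp only
    by_cases ha : a < k + 1 <;> by_cases hb : b < k + 1
    · rw [dif_pos ha, dif_pos hb]
      exact hemono ⟨a, ha⟩ ⟨b, hb⟩ (by exact hab)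
    · rw [dif_pos ha, dif_neg hb]
      exact lt_of_lt_of_le (hewlt _) (by omega)
    · omega
    · rw [dif_neg ha, dif_neg hb]; omega
  refine ⟨L, ?_, ?_⟩
  · -- L is a sublist of w
    apply List.sublist_of_orderEmbedding_getElem?_eq (OrderEmbedding.ofStrictMono _ hgmono)
    intro n
    show L[n]? = w[(if h : n < k + 1 then e ⟨n, h⟩ else w.length + n)]?
    by_cases h : n < k + 1
    · rw [dif_pos h]
      rw [hew ⟨n, h⟩]
      have := hLget ⟨n, h⟩
      simpa using this
    · rw [dif_neg h,
        List.getElem?_eq_none (by omega), List.getElem?_eq_none (by omega)]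
  · -- order isomorphic to τ
    refine ⟨by rw [hLlen, hτlen], ?_⟩
    intro i j a b cc d hLi hLj hτi hτj
    have hik : i < k + 1 := by
      by_contra h
      rw [List.getElem?_eq_none (by omega)] at hLi
      exact Option.some_ne_none _ hLi.symm
    have hjk : j < k + 1 := by
      by_contra h
      rw [List.getElem?_eq_none (by omega)] at hLj
      exact Option.some_ne_none _ hLj.symm
    have ha : a = s ⟨i, hik⟩ := by
      have := hLget ⟨i, hik⟩
      simp only at this
      rw [hLi] at this
      exact Option.some_injective _ this
    have hb : b = s ⟨j, hjk⟩ := by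
      have := hLget ⟨j, hjk⟩
      rw [hLj] at this
      exact Option.some_injective _ this
    have hcc : cc = c ⟨i, hik⟩ := by
      have := hτget ⟨i, hik⟩
      rw [hτi] at this
      exact Option.some_injective _ this
    have hd : d = c ⟨j, hjk⟩ := by
      have := hτget ⟨j, hjk⟩
      rw [hτj] at this
      exact Option.some_injective _ this
    rw [ha, hb, hcc, hd]
    exact hiso _ _
end

section
/- Let τ be a permutation pattern of length k+1 and let w be a τ-avoiding word representing a graph G. If a vertex x of G is adjacent to some vertex a of degree at least k, then the letter x occurs at most k+1 times in w. -/
/-- If `τ` is a permutation pattern of length `k+1`, `w` is a `τ`-avoiding word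
representing a graph `G`, and the vertex `x` is adjacent to some vertex `a` of degree at
least `k`, then the letter `x` occurs at most `k+1` times in `w`. -/
theorem stmt_1 {α β : Type*} [LinearOrder α] [Fintype α] [LinearOrder β]
    (G : SimpleGraph α) [DecidableRel G.Adj]
    (k : ℕ) (τ : List β) (hτlen : τ.length = k + 1) (hτnodup : τ.Nodup)
    (w : List α) (hw : ¬ ContainsPattern w τ) (hrep : Represents G w)
    (x a : α) (hadj : G.Adj x a) (hdeg : k ≤ G.degree a) :
    w.count x ≤ k + 1 := by
  classical
  by_contra hcnt
  push_neg at hcnt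
  have hxa : x ≠ a := G.ne_of_adj hadj
  -- extract k+2 positions of x
  have hrepl : (List.replicate (k + 2) x).Sublist w :=
    List.replicate_sublist_iff.mpr (by omega)
  obtain ⟨r, hr⟩ := List.sublist_iff_exists_orderEmbedding_getElem?_eq.mp hrepl
  have hrx : ∀ i : ℕ, i < k + 2 → w[(r i : ℕ)]? = some x := by
    intro i hi
    have h := hr i
    rw [← h, List.getElem?_replicate, if_pos hi]
  -- x and a alternate
  have haltxa : Alternates w x a := (hrep.2 x a hxa).mpr hadj
  -- positions of a in each gap between consecutive x's
  have hpa : ∀ i : ℕ, ∃ m : ℕ, i < k + 1 →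
      (r i : ℕ) < m ∧ m < r (i + 1) ∧ w[m]? = some a := by
    intro i
    by_cases hi : i < k + 1
    · obtain ⟨m, h1, h2, h3⟩ := haltxa.1 (r i) (r (i + 1))
        (r.strictMono (by omega)) (hrx i (by omega)) (hrx (i + 1) (by omega))
      exact ⟨m, fun _ => ⟨h1, h2, h3⟩⟩
    · exact ⟨0, fun h => absurd h hi⟩
  choose p hp using hpa
  have hpw : ∀ i : ℕ, i < k + 1 → w[p i]? = some a := fun i hi => (hp i hi).2.2
  have hpmono : ∀ i j : ℕ, i < j → j ≤ k → p i < p j := by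
    intro i j hij hj
    have h1 : p i < (r (i + 1) : ℕ) := (hp i (by omega)).2.1
    have h2 : (r j : ℕ) < p j := (hp j (by omega)).1
    have h3 : (r (i + 1) : ℕ) ≤ r j := r.monotone (by omega)
    omega
  have hpmono' : ∀ i j : ℕ, i ≤ j → j ≤ k → p i ≤ p j := by
    intro i j hij hj
    rcases eq_or_lt_of_le hij with h | h
    · subst h; exact le_rfl
    · exact le_of_lt (hpmono i j h hj)
  -- k neighbors of a
  obtain ⟨B, hBsub, hBcard⟩ := Finset.exists_subset_card_eq
    (s := G.neighborFinset a) (n := k)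
    (by rwa [SimpleGraph.card_neighborFinset_eq_degree])
  have haB : a ∉ B := by
    intro h
    exact G.irrefl ((SimpleGraph.mem_neighborFinset G a a).mp (hBsub h))
  have hScard : (insert a B).card = k + 1 := by
    rw [Finset.card_insert_of_notMem haB, hBcard]
  set S : Finset α := insert a B with hS
  set e := S.orderEmbOfFin hScard with he
  set T : Finset β := τ.toFinset with hT
  have hTcard : T.card = k + 1 := by
    rw [hT, List.toFinset_card_of_nodup hτnodup, hτlen]
  set eτ := T.orderEmbOfFin hTcard with heτ
  -- ranks of τ's letters
  have hτget : ∀ i : Fin (k + 1), ∃ j : Fin (k + 1),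
      eτ j = τ[(i : ℕ)]'(by omega) := by
    intro i
    have hmem : τ[(i : ℕ)]'(by omega) ∈ T :=
      List.mem_toFinset.mpr (List.getElem_mem (by omega))
    have : τ[(i : ℕ)]'(by omega) ∈ Set.range ⇑eτ := by
      rw [heτ, Finset.range_orderEmbOfFin]; exact hmem
    exact this
  choose σ hσ using hτget
  have hσinj : Function.Injective σ := by
    intro i j hij
    have h1 : τ[(i : ℕ)]'(by omega) = τ[(j : ℕ)]'(by omega) := by
      rw [← hσ i, ← hσ j, hij]
    exact Fin.ext (hτnodup.getElem_inj_iff.mp h1)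
  have hσsurj : Function.Surjective σ := Finite.injective_iff_surjective.mp hσinj
  -- rank of a
  have haS : a ∈ S := Finset.mem_insert_self a B
  obtain ⟨ra, hra⟩ : ∃ ra : Fin (k + 1), e ra = a := by
    have : a ∈ Set.range ⇑e := by rw [he, Finset.range_orderEmbOfFin]; exact haS
    exact this
  obtain ⟨istar, histar⟩ := hσsurj ra
  -- target letters
  set t : Fin (k + 1) → α := fun i => e (σ i) with ht
  have htistar : t istar = a := by rw [ht]; simp only []; rw [histar, hra]
  have htadj : ∀ j : Fin (k + 1), j ≠ istar → G.Adj a (t j) := by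
    intro j hj
    have htS : t j ∈ S := Finset.orderEmbOfFin_mem S hScard (σ j)
    have htna : t j ≠ a := by
      intro h
      apply hj
      apply hσinj
      rw [histar]
      exact e.injective (by rw [hra]; exact h)
    have : t j ∈ B := by
      rcases Finset.mem_insert.mp htS with h | h
      · exact absurd h htna
      · exact h
    exact (SimpleGraph.mem_neighborFinset G a (t j)).mp (hBsub this)
  have halt : ∀ j : Fin (k + 1), j ≠ istar → Alternates w a (t j) := by
    intro j hj
    exact (hrep.2 a (t j) (G.ne_of_adj (htadj j hj))).mpr (htadj j hj)
  set iN : ℕ := (istar : ℕ) with hiN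
  have hiNk : iN ≤ k := by omega
  -- the positions realizing the pattern
  have hqex : ∀ j : Fin (k + 1), ∃ m : ℕ,
      w[m]? = some (t j) ∧
      ((j : ℕ) < iN → p (j : ℕ) < m ∧ m < p ((j : ℕ) + 1)) ∧
      ((j : ℕ) = iN → m = p iN) ∧
      (iN < (j : ℕ) → p ((j : ℕ) - 1) < m ∧ m < p (j : ℕ)) := by
    intro j
    rcases lt_trichotomy (j : ℕ) iN with hlt | heq | hgt
    · have hjne : j ≠ istar := by intro h; rw [h] at hlt; omega
      obtain ⟨m, h1, h2, h3⟩ := (halt j hjne).1 (p (j : ℕ)) (p ((j : ℕ) + 1))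
        (hpmono _ _ (by omega) (by omega))
        (hpw _ (by omega)) (hpw _ (by omega))
      exact ⟨m, h3, fun _ => ⟨h1, h2⟩, fun h => by omega, fun h => by omega⟩
    · have hje : j = istar := Fin.ext heq
      refine ⟨p iN, ?_, fun h => by omega, fun _ => rfl, fun h => by omega⟩
      rw [hje, htistar]
      exact hpw iN (by omega)
    · have hjne : j ≠ istar := by intro h; rw [h] at hgt; omega
      obtain ⟨m, h1, h2, h3⟩ := (halt j hjne).1 (p ((j : ℕ) - 1)) (p (j : ℕ))
        (hpmono _ _ (by omega) (by omega))
        (hpw _ (by omega)) (hpw _ (by omega))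
      exact ⟨m, h3, fun h => by omega, fun h => by omega, fun _ => ⟨h1, h2⟩⟩
  choose q hq1 hq2 hq3 hq4 using hqex
  -- q is strictly monotone
  have hqmono : ∀ i j : Fin (k + 1), (i : ℕ) < (j : ℕ) → q i < q j := by
    intro i j hij
    rcases lt_trichotomy (j : ℕ) iN with hjlt | hjeq | hjgt
    · have h1 := hq2 i (by omega)
      have h2 := hq2 j hjlt
      have h3 := hpmono' ((i : ℕ) + 1) (j : ℕ) (by omega) (by omega)
      omega
    · have h1 := hq2 i (by omega)
      have h2 := hq3 j hjeq
      have h3 := hpmono' ((i : ℕ) + 1) iN (by omega) (by omega)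
      omega
    · have h2 := hq4 j hjgt
      have h3 : p ((i : ℕ) + 1) ≤ p ((j : ℕ) - 1) ∨ True := Or.inr trivial
      rcases lt_trichotomy (i : ℕ) iN with hilt | hieq | higt
      · have h1 := hq2 i hilt
        have h4 := hpmono' ((i : ℕ) + 1) ((j : ℕ) - 1) (by omega) (by omega)
        omega
      · have h1 := hq3 i hieq
        have h4 := hpmono' iN ((j : ℕ) - 1) (by omega) (by omega)
        omega
      · have h1 := hq4 i higt
        have h4 := hpmono' (i : ℕ) ((j : ℕ) - 1) (by omega) (by omega)
        omega
  have hqlt : ∀ i : Fin (k + 1), q i < w.length := by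
    intro i
    obtain ⟨h, -⟩ := List.getElem?_eq_some_iff.mp (hq1 i)
    exact h
  -- the pattern occurrence as a sublist
  set s : List α := List.ofFn t with hsdef
  have hslen : s.length = k + 1 := List.length_ofFn (f := t)
  have hsub : s.Sublist w := by
    rw [List.sublist_iff_exists_orderEmbedding_getElem?_eq]
    have hf : StrictMono (fun n : ℕ =>
        if h : n < k + 1 then q ⟨n, h⟩ else w.length + n) := by
      intro m n hmn
      by_cases hm : m < k + 1 <;> by_cases hn : n < k + 1
      · simp only [dif_pos hm, dif_pos hn]
        exact hqmono ⟨m, hm⟩ ⟨n, hn⟩ hmn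
      · simp only [dif_pos hm, dif_neg hn]
        have := hqlt ⟨m, hm⟩
        omega
      · omega
      · simp only [dif_neg hm, dif_neg hn]; omega
    refine ⟨OrderEmbedding.ofStrictMono _ hf, ?_⟩
    intro ix
    by_cases hix : ix < k + 1
    · simp only [OrderEmbedding.coe_ofStrictMono, dif_pos hix]
      rw [hsdef, List.getElem?_ofFn]
      rw [dif_pos hix, hq1 ⟨ix, hix⟩]
    · simp only [OrderEmbedding.coe_ofStrictMono, dif_neg hix]
      rw [List.getElem?_eq_none (l := s) (by simp only [hsdef, List.length_ofFn]; omega),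
        List.getElem?_eq_none (by omega)]
  -- order isomorphism with τ
  apply hw
  refine ⟨s, hsub, by rw [hslen, hτlen], ?_⟩
  intro i j a' b' c' d' h1 h2 h3 h4
  obtain ⟨hi, ha'⟩ := List.getElem?_eq_some_iff.mp h1
  obtain ⟨hj, hb'⟩ := List.getElem?_eq_some_iff.mp h2
  obtain ⟨hi', hc'⟩ := List.getElem?_eq_some_iff.mp h3
  obtain ⟨hj', hd'⟩ := List.getElem?_eq_some_iff.mp h4
  rw [hslen] at hi hj
  have hsi : a' = t ⟨i, hi⟩ := by
    have hh : s[i]? = some (t ⟨i, hi⟩) := by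
      rw [hsdef, List.getElem?_ofFn]; simp [hi]
    rw [h1] at hh; exact Option.some_inj.mp hh
  have hsj : b' = t ⟨j, hj⟩ := by
    have hh : s[j]? = some (t ⟨j, hj⟩) := by
      rw [hsdef, List.getElem?_ofFn]; simp [hj]
    rw [h2] at hh; exact Option.some_inj.mp hh
  have hci : c' = eτ (σ ⟨i, hi⟩) := by
    have h := hσ ⟨i, hi⟩
    rw [← hc']; exact h.symm
  have hdj : d' = eτ (σ ⟨j, hj⟩) := by
    have h := hσ ⟨j, hj⟩
    rw [← hd']; exact h.symm
  rw [hsi, hsj, hci, hdj]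
  simp only [ht]
  rw [e.lt_iff_lt, eτ.lt_iff_lt]
end

section
/- Suppose w is a 123-avoiding word representing a graph G = (V, E) and w = u·a·b·v has a factor ab (two consecutive letters) with a < b. Let w' = u·b·a·v be the word obtained by switching these two consecutive letters. Then w' is 123-avoiding. Moreover, if ab ∉ E and the letters a and b do not alternate in w', then w' also represents G. -/
def sw (n k : ℕ) : ℕ := if k = n then n + 1 else if k = n + 1 then n else k

lemma sw_sw (n k : ℕ) : sw n (sw n k) = k := by unfold sw; split_ifs <;> omega

lemma sw_lt {n i j : ℕ} (h : i < j) (h2 : ¬(i = n ∧ j = n + 1)) : sw n i < sw n j := by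
  unfold sw; split_ifs <;> omega

lemma sw_eq {n k : ℕ} (h1 : k ≠ n) (h2 : k ≠ n + 1) : sw n k = k := by
  unfold sw; split_ifs <;> omega

lemma get_at {α : Type*} (u l : List α) (c : α) : (u ++ c :: l)[u.length]? = some c := by
  rw [List.getElem?_append_right le_rfl]; simp

lemma get_sw {α : Type*} (u v : List α) (p q : α) (k : ℕ) :
    (u ++ q :: p :: v)[k]? = (u ++ p :: q :: v)[sw u.length k]? := by
  unfold sw
  split_ifs with h1 h2
  · subst h1
    rw [List.getElem?_append_right le_rfl, List.getElem?_append_right (by omega)]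
    simp
  · subst h2
    rw [List.getElem?_append_right (by omega), List.getElem?_append_right le_rfl]
    simp
  · rcases lt_or_ge k u.length with h | h
    · rw [List.getElem?_append, List.getElem?_append, if_pos h, if_pos h]
    · rw [List.getElem?_append_right h, List.getElem?_append_right h]
      have : 2 ≤ k - u.length := by omega
      obtain ⟨m, hm⟩ : ∃ m, k - u.length = m + 2 := ⟨k - u.length - 2, by omega⟩
      rw [hm]; simp

lemma alt_comp {α : Type*} (u v : List α) (p q : α) (x y : α) (hpq : p ≠ q)
    (hc : (x ≠ p ∧ x ≠ q) ∨ (y ≠ p ∧ y ≠ q))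
    (h : ∀ i j : ℕ, i < j → (u ++ p :: q :: v)[i]? = some x →
        (u ++ p :: q :: v)[j]? = some x →
        ∃ k, i < k ∧ k < j ∧ (u ++ p :: q :: v)[k]? = some y) :
    ∀ i j : ℕ, i < j → (u ++ q :: p :: v)[i]? = some x →
        (u ++ q :: p :: v)[j]? = some x →
        ∃ k, i < k ∧ k < j ∧ (u ++ q :: p :: v)[k]? = some y := by
  set n := u.length with hn
  have hwn : (u ++ q :: p :: v)[n]? = some q := get_at u _ q
  have hwn1 : (u ++ q :: p :: v)[n + 1]? = some p := by
    rw [List.getElem?_append_right (by omega)]; simp [hn]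
  have hvn : (u ++ p :: q :: v)[n]? = some p := get_at u _ p
  have hvn1 : (u ++ p :: q :: v)[n + 1]? = some q := by
    rw [List.getElem?_append_right (by omega)]; simp [hn]
  intro i j hij hi hj
  rcases hc with ⟨hxp, hxq⟩ | ⟨hyp, hyq⟩
  · -- x ∉ {p, q} : occurrence positions unchanged
    have hi1 : i ≠ n := by rintro rfl; rw [hwn] at hi; exact hxq (Option.some_injective _ hi).symm
    have hi2 : i ≠ n + 1 := by rintro rfl; rw [hwn1] at hi; exact hxp (Option.some_injective _ hi).symm
    have hj1 : j ≠ n := by rintro rfl; rw [hwn] at hj; exact hxq (Option.some_injective _ hj).symm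
    have hj2 : j ≠ n + 1 := by rintro rfl; rw [hwn1] at hj; exact hxp (Option.some_injective _ hj).symm
    rw [get_sw, sw_eq hi1 hi2] at hi
    rw [get_sw, sw_eq hj1 hj2] at hj
    obtain ⟨k, hk1, hk2, hk⟩ := h i j hij hi hj
    refine ⟨sw n k, ?_, ?_, ?_⟩
    · have := sw_lt (n := n) hk1 (by rintro ⟨rfl, -⟩; exact hi1 rfl)
      rwa [sw_eq hi1 hi2] at this
    · have := sw_lt (n := n) hk2 (by rintro ⟨-, rfl⟩; exact hj2 rfl)
      rwa [sw_eq hj1 hj2] at this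
    · rw [get_sw, sw_sw]; exact hk
  · -- y ∉ {p, q}
    have hij' : ¬(i = n ∧ j = n + 1) := by
      rintro ⟨rfl, rfl⟩
      rw [hwn] at hi; rw [hwn1] at hj
      exact hpq ((Option.some_injective _ hj).trans (Option.some_injective _ hi).symm)
    rw [get_sw] at hi hj
    obtain ⟨k, hk1, hk2, hk⟩ := h _ _ (sw_lt hij hij') hi hj
    have hk3 : k ≠ n := by rintro rfl; rw [hvn] at hk; exact hyp (Option.some_injective _ hk).symm
    have hk4 : k ≠ n + 1 := by rintro rfl; rw [hvn1] at hk; exact hyq (Option.some_injective _ hk).symm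
    refine ⟨k, ?_, ?_, ?_⟩
    · have := sw_lt (n := n) hk1 (by rintro ⟨-, rfl⟩; exact hk4 rfl)
      rwa [sw_sw, sw_eq hk3 hk4] at this
    · have := sw_lt (n := n) hk2 (by rintro ⟨rfl, -⟩; exact hk3 rfl)
      rwa [sw_sw, sw_eq hk3 hk4] at this
    · rw [get_sw, sw_eq hk3 hk4]; exact hk

lemma alt_swap {α : Type*} (u v : List α) (p q : α) (x y : α) (hpq : p ≠ q)
    (hc : (x ≠ p ∧ x ≠ q) ∨ (y ≠ p ∧ y ≠ q)) :
    Alternates (u ++ p :: q :: v) x y → Alternates (u ++ q :: p :: v) x y := by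
  rintro ⟨h1, h2⟩
  exact ⟨alt_comp u v p q x y hpq hc h1, alt_comp u v p q y x hpq hc.symm h2⟩

/-- if the 123-avoiding word `w = u·a·b·v` (with `a < b` consecutive) represents
`G`, then the word `w' = u·b·a·v` obtained by switching the two consecutive letters is also
123-avoiding; moreover, if `ab ∉ E` and `a`, `b` do not alternate in `w'`, then `w'` also
represents `G`. -/
theorem stmt_2 {α : Type*} [LinearOrder α] (G : SimpleGraph α) (u v : List α) (a b : α)
    (hab : a < b)
    (havoid : Avoids123 (u ++ a :: b :: v))
    (hrep : Represents G (u ++ a :: b :: v)) :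
    Avoids123 (u ++ b :: a :: v) ∧
      (¬ G.Adj a b → ¬ Alternates (u ++ b :: a :: v) a b →
        Represents G (u ++ b :: a :: v)) := by
  set n := u.length with hn
  have hwn : (u ++ b :: a :: v)[n]? = some b := get_at u _ b
  have hwn1 : (u ++ b :: a :: v)[n + 1]? = some a := by
    rw [List.getElem?_append_right (by omega)]; simp [hn]
  constructor
  · rintro ⟨i, j, k, p', q', r', hij, hjk, hi, hj, hk, h1, h2⟩
    have hij' : ¬(i = n ∧ j = n + 1) := by
      rintro ⟨rfl, rfl⟩
      rw [hwn] at hi; rw [hwn1] at hj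
      rw [(Option.some_injective _ hi).symm, (Option.some_injective _ hj).symm] at h1
      exact absurd h1 (not_lt.2 hab.le)
    have hjk' : ¬(j = n ∧ k = n + 1) := by
      rintro ⟨rfl, rfl⟩
      rw [hwn] at hj; rw [hwn1] at hk
      rw [(Option.some_injective _ hj).symm, (Option.some_injective _ hk).symm] at h2
      exact absurd h2 (not_lt.2 hab.le)
    rw [get_sw] at hi hj hk
    exact havoid ⟨sw n i, sw n j, sw n k, p', q', r',
      sw_lt hij hij', sw_lt hjk hjk', hi, hj, hk, h1, h2⟩
  · intro hadj halt
    obtain ⟨hmem, hiff⟩ := hrep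
    have perm : (u ++ a :: b :: v).Perm (u ++ b :: a :: v) :=
      List.Perm.append_left u (List.Perm.swap b a v)
    refine ⟨fun z => perm.mem_iff.1 (hmem z), fun x y hxy => ?_⟩
    by_cases hpair : (x = a ∧ y = b) ∨ (x = b ∧ y = a)
    · have hAdjf : ¬ G.Adj x y := by
        rcases hpair with ⟨rfl, rfl⟩ | ⟨rfl, rfl⟩
        · exact hadj
        · exact fun h => hadj h.symm
      have hAltf : ¬ Alternates (u ++ b :: a :: v) x y := by
        rcases hpair with ⟨rfl, rfl⟩ | ⟨rfl, rfl⟩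
        · exact halt
        · exact fun ⟨h1, h2⟩ => halt ⟨h2, h1⟩
      exact iff_of_false hAltf hAdjf
    · have hc : (x ≠ a ∧ x ≠ b) ∨ (y ≠ a ∧ y ≠ b) := by
        rcases eq_or_ne x a with rfl | hxa
        · exact Or.inr ⟨Ne.symm hxy, fun hyb => hpair (Or.inl ⟨rfl, hyb⟩)⟩
        rcases eq_or_ne x b with rfl | hxb
        · exact Or.inr ⟨fun hya => hpair (Or.inr ⟨rfl, hya⟩), Ne.symm hxy⟩
        exact Or.inl ⟨hxa, hxb⟩
      have hc' : (x ≠ b ∧ x ≠ a) ∨ (y ≠ b ∧ y ≠ a) :=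
        hc.imp (fun h => ⟨h.2, h.1⟩) (fun h => ⟨h.2, h.1⟩)
      rw [← hiff x y hxy]
      exact ⟨alt_swap u v b a x y hab.ne' hc', alt_swap u v a b x y hab.ne hc⟩
end

section
/- If a finite graph G is 123-representable, then there exists a 123-avoiding word w representing G (after a suitable relabeling of the vertices) in which every letter appears at most twice. -/
set_option linter.unusedSectionVars false

namespace P123

variable {α β : Type*}

lemma two_le_count_of {w : List α} [DecidableEq α] {x : α} {i j : ℕ} (hij : i < j)
    (hi : w[i]? = some x) (hj : w[j]? = some x) : 2 ≤ w.count x := by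
  induction w generalizing i j with
  | nil => simp at hi
  | cons d t ih =>
    cases i with
    | zero =>
      rw [List.getElem?_cons_zero] at hi
      obtain ⟨j', rfl⟩ : ∃ j', j = j' + 1 := ⟨j - 1, by omega⟩
      rw [List.getElem?_cons_succ] at hj
      have h1 : 1 ≤ t.count x := List.count_pos_iff.mpr (List.mem_of_getElem? hj)
      have hdx : d = x := by injection hi
      subst hdx
      rw [List.count_cons_self]; omega
    | succ i' =>
      obtain ⟨j', rfl⟩ : ∃ j', j = j' + 1 := ⟨j - 1, by omega⟩
      rw [List.getElem?_cons_succ] at hi hj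
      have := ih (i := i') (j := j') (by omega) hi hj
      simp only [List.count_cons]
      omega

lemma three_le_count_of {w : List α} [DecidableEq α] {x : α} {i j m : ℕ} (hij : i < j)
    (hjm : j < m) (hi : w[i]? = some x) (hj : w[j]? = some x) (hm : w[m]? = some x) :
    3 ≤ w.count x := by
  induction w generalizing i j m with
  | nil => simp at hi
  | cons d t ih =>
    cases i with
    | zero =>
      rw [List.getElem?_cons_zero] at hi
      obtain ⟨j', rfl⟩ : ∃ j', j = j' + 1 := ⟨j - 1, by omega⟩
      obtain ⟨m', rfl⟩ : ∃ m', m = m' + 1 := ⟨m - 1, by omega⟩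
      rw [List.getElem?_cons_succ] at hj hm
      have h2 := two_le_count_of (i := j') (j := m') (by omega) hj hm
      have hdx : d = x := by injection hi
      subst hdx
      rw [List.count_cons_self]; omega
    | succ i' =>
      obtain ⟨j', rfl⟩ : ∃ j', j = j' + 1 := ⟨j - 1, by omega⟩
      obtain ⟨m', rfl⟩ : ∃ m', m = m' + 1 := ⟨m - 1, by omega⟩
      rw [List.getElem?_cons_succ] at hi hj hm
      have := ih (i := i') (j := j') (m := m') (by omega) (by omega) hi hj hm
      simp only [List.count_cons]
      omega

lemma exists_two_of_count {w : List α} [DecidableEq α] {x : α} (h : 2 ≤ w.count x) :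
    ∃ i j : ℕ, i < j ∧ w[i]? = some x ∧ w[j]? = some x := by
  induction w with
  | nil => simp at h
  | cons d t ih =>
    by_cases hd : d = x
    · subst hd
      have : d ∈ t := by
        have : 1 ≤ t.count d := by rw [List.count_cons_self] at h; omega
        exact List.count_pos_iff.mp this
      obtain ⟨i, hi, hval⟩ := List.getElem_of_mem this
      exact ⟨0, i + 1, by omega, List.getElem?_cons_zero,
        by rw [List.getElem?_cons_succ]; exact List.getElem?_eq_some_iff.mpr ⟨hi, hval⟩⟩
    · have : 2 ≤ t.count x := by rw [List.count_cons_of_ne hd] at h; exact h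
      obtain ⟨i, j, hij, hi, hj⟩ := ih this
      exact ⟨i + 1, j + 1, by omega, by rw [List.getElem?_cons_succ]; exact hi,
        by rw [List.getElem?_cons_succ]; exact hj⟩

lemma exists_three_of_count {w : List α} [DecidableEq α] {x : α} (h : 3 ≤ w.count x) :
    ∃ i j m : ℕ, i < j ∧ j < m ∧ w[i]? = some x ∧ w[j]? = some x ∧ w[m]? = some x := by
  induction w with
  | nil => simp at h
  | cons d t ih =>
    by_cases hd : d = x
    · subst hd
      have h1 : 2 ≤ t.count d := by rw [List.count_cons_self] at h; omega
      obtain ⟨i, j, hij, hi, hj⟩ := exists_two_of_count h1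
      exact ⟨0, i + 1, j + 1, by omega, by omega, List.getElem?_cons_zero,
        by rw [List.getElem?_cons_succ]; exact hi, by rw [List.getElem?_cons_succ]; exact hj⟩
    · have : 3 ≤ t.count x := by rw [List.count_cons_of_ne hd] at h; exact h
      obtain ⟨i, j, m, hij, hjm, hi, hj, hm⟩ := ih this
      exact ⟨i + 1, j + 1, m + 1, by omega, by omega, by rw [List.getElem?_cons_succ]; exact hi,
        by rw [List.getElem?_cons_succ]; exact hj, by rw [List.getElem?_cons_succ]; exact hm⟩

/-- split a list at the first occurrence of a member -/
lemma exists_first_split {w : List α} [DecidableEq α] {x : α} (h : x ∈ w) :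
    ∃ u t, w = u ++ x :: t ∧ x ∉ u := by
  induction w with
  | nil => simp at h
  | cons d t ih =>
    by_cases hd : d = x
    · exact ⟨[], t, by simp [hd], by simp⟩
    · have : x ∈ t := by rcases List.mem_cons.mp h with h' | h'; exacts [absurd h'.symm hd, h']
      obtain ⟨u, s, rfl, hnx⟩ := ih this
      exact ⟨d :: u, s, by simp, by simp [hnx, Ne.symm hd]⟩

/-- split a list at the last occurrence of a member -/
lemma exists_last_split {w : List α} [DecidableEq α] {x : α} (h : x ∈ w) :
    ∃ u t, w = u ++ x :: t ∧ x ∉ t := by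
  have h' : x ∈ w.reverse := List.mem_reverse.mpr h
  obtain ⟨u, t, heq, hnx⟩ := exists_first_split h'
  refine ⟨t.reverse, u.reverse, ?_, by simp [hnx]⟩
  have := congrArg List.reverse heq
  simpa using this

lemma count_eq_one_unique {w : List α} [DecidableEq α] {x : α} (h : w.count x = 1) :
    ∃ s : ℕ, w[s]? = some x ∧ ∀ t : ℕ, w[t]? = some x → t = s := by
  have hx : x ∈ w := List.count_pos_iff.mp (by omega)
  obtain ⟨s, hs, hval⟩ := List.getElem_of_mem hx
  refine ⟨s, List.getElem?_eq_some_iff.mpr ⟨hs, hval⟩, ?_⟩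
  intro t ht
  by_contra hne
  have := two_le_count_of (i := min s t) (j := max s t) (by omega)
    (by rcases Nat.lt_or_ge s t with h'|h'
        · simpa [Nat.min_eq_left h'.le] using List.getElem?_eq_some_iff.mpr ⟨hs, hval⟩
        · have : min s t = t := by omega
          rw [this]; exact ht)
    (by rcases Nat.lt_or_ge s t with h'|h'
        · have : max s t = t := by omega
          rw [this]; exact ht
        · have : max s t = s := by omega
          rw [this]; exact List.getElem?_eq_some_iff.mpr ⟨hs, hval⟩)
  omega


open List

lemma alternates_comm {w : List α} {a b : α} : Alternates w a b ↔ Alternates w b a :=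
  ⟨fun ⟨h1, h2⟩ => ⟨h2, h1⟩, fun ⟨h1, h2⟩ => ⟨h2, h1⟩⟩

lemma alt_transfer {w₁ : List α} {w₂ : List β} {a b : α} {a' b' : β}
    (hab : a ≠ b) (σ : ℕ → ℕ)
    (hmono : ∀ i j : ℕ, (w₁[i]? = some a ∨ w₁[i]? = some b) →
      (w₁[j]? = some a ∨ w₁[j]? = some b) → i < j → σ i < σ j)
    (ha : ∀ i : ℕ, w₁[i]? = some a → w₂[σ i]? = some a')
    (hb : ∀ i : ℕ, w₁[i]? = some b → w₂[σ i]? = some b')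
    (ha' : ∀ j : ℕ, w₂[j]? = some a' → ∃ i, w₁[i]? = some a ∧ σ i = j)
    (hb' : ∀ j : ℕ, w₂[j]? = some b' → ∃ i, w₁[i]? = some b ∧ σ i = j) :
    Alternates w₁ a b ↔ Alternates w₂ a' b' := by
  constructor
  · rintro ⟨h1, h2⟩
    constructor
    · intro i' j' hij hi hj
      obtain ⟨i, hi₁, rfl⟩ := ha' i' hi
      obtain ⟨j, hj₁, rfl⟩ := ha' j' hj
      have hij₁ : i < j := by
        rcases lt_trichotomy i j with h | h | h
        · exact h
        · subst h; exact absurd hij (lt_irrefl _)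
        · exact absurd (hmono j i (Or.inl hj₁) (Or.inl hi₁) h) (by omega)
      obtain ⟨k, hk₁, hk₂, hk₃⟩ := h1 i j hij₁ hi₁ hj₁
      exact ⟨σ k, hmono i k (Or.inl hi₁) (Or.inr hk₃) hk₁,
        hmono k j (Or.inr hk₃) (Or.inl hj₁) hk₂, hb k hk₃⟩
    · intro i' j' hij hi hj
      obtain ⟨i, hi₁, rfl⟩ := hb' i' hi
      obtain ⟨j, hj₁, rfl⟩ := hb' j' hj
      have hij₁ : i < j := by
        rcases lt_trichotomy i j with h | h | h
        · exact h
        · subst h; exact absurd hij (lt_irrefl _)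
        · exact absurd (hmono j i (Or.inr hj₁) (Or.inr hi₁) h) (by omega)
      obtain ⟨k, hk₁, hk₂, hk₃⟩ := h2 i j hij₁ hi₁ hj₁
      exact ⟨σ k, hmono i k (Or.inr hi₁) (Or.inl hk₃) hk₁,
        hmono k j (Or.inl hk₃) (Or.inr hj₁) hk₂, ha k hk₃⟩
  · rintro ⟨h1, h2⟩
    constructor
    · intro i j hij hi hj
      obtain ⟨k', hk₁, hk₂, hk₃⟩ := h1 (σ i) (σ j)
        (hmono i j (Or.inl hi) (Or.inl hj) hij) (ha i hi) (ha j hj)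
      obtain ⟨k, hk₄, rfl⟩ := hb' k' hk₃
      refine ⟨k, ?_, ?_, hk₄⟩
      · rcases lt_trichotomy i k with h | h | h
        · exact h
        · exfalso; rw [h] at hi; rw [hi] at hk₄
          exact hab (Option.some.inj hk₄)
        · exact absurd (hmono k i (Or.inr hk₄) (Or.inl hi) h) (by omega)
      · rcases lt_trichotomy k j with h | h | h
        · exact h
        · exfalso; rw [← h] at hj; rw [hj] at hk₄
          exact hab (Option.some.inj hk₄)
        · exact absurd (hmono j k (Or.inl hj) (Or.inr hk₄) h) (by omega)
    · intro i j hij hi hj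
      obtain ⟨k', hk₁, hk₂, hk₃⟩ := h2 (σ i) (σ j)
        (hmono i j (Or.inr hi) (Or.inr hj) hij) (hb i hi) (hb j hj)
      obtain ⟨k, hk₄, rfl⟩ := ha' k' hk₃
      refine ⟨k, ?_, ?_, hk₄⟩
      · rcases lt_trichotomy i k with h | h | h
        · exact h
        · exfalso; rw [h] at hi; rw [hi] at hk₄
          exact hab (Option.some.inj hk₄).symm
        · exact absurd (hmono k i (Or.inl hk₄) (Or.inr hi) h) (by omega)
      · rcases lt_trichotomy k j with h | h | h
        · exact h
        · exfalso; rw [← h] at hj; rw [hj] at hk₄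
          exact hab (Option.some.inj hk₄).symm
        · exact absurd (hmono j k (Or.inr hj) (Or.inl hk₄) h) (by omega)

/-! ### getElem? helpers -/

lemma getl {l₁ l₂ : List α} {i : ℕ} (h : i < l₁.length) : (l₁ ++ l₂)[i]? = l₁[i]? := by
  rw [List.getElem?_append]; simp [h]

lemma getr {l₁ l₂ : List α} {i : ℕ} (h : l₁.length ≤ i) :
    (l₁ ++ l₂)[i]? = l₂[i - l₁.length]? := List.getElem?_append_right h

lemma getr0 (l₁ l₂ : List α) : (l₁ ++ l₂)[l₁.length]? = l₂[0]? := by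
  rw [getr (le_refl _), Nat.sub_self]

lemma getrk (l₁ l₂ : List α) (k : ℕ) : (l₁ ++ l₂)[l₁.length + k]? = l₂[k]? := by
  rw [getr (by omega)]
  congr 1
  omega

/-! ### keepCnt machinery for filters -/

def keepCnt (p : α → Bool) (w : List α) (i : ℕ) : ℕ := ((w.take i).filter p).length

lemma keepCnt_zero (p : α → Bool) (w : List α) : keepCnt p w 0 = 0 := by simp [keepCnt]

lemma keepCnt_cons (p : α → Bool) (d : α) (t : List α) (i : ℕ) :
    keepCnt p (d :: t) (i + 1) = (if p d then 1 else 0) + keepCnt p t i := by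
  simp only [keepCnt, List.take_succ_cons, List.filter_cons]
  split <;> simp [Nat.add_comm]

lemma keepCnt_mono (p : α → Bool) (w : List α) {i j : ℕ} (h : i ≤ j) :
    keepCnt p w i ≤ keepCnt p w j := by
  have h1 : (w.take j).take i = w.take i := by
    rw [List.take_take]
    congr 1
    omega
  have hs : w.take i <+ w.take j := h1 ▸ List.take_sublist i (w.take j)
  exact (hs.filter p).length_le

lemma keepCnt_lt_len {p : α → Bool} {w : List α} {i : ℕ} {c : α} (h : w[i]? = some c)
    (hp : p c = true) : keepCnt p w i < (w.filter p).length := by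
  have hlen : i < w.length := (List.getElem?_eq_some_iff.mp h).1
  have hsplit : w = w.take i ++ w.drop i := (List.take_append_drop i w).symm
  have hdrop : w.drop i = c :: w.drop (i + 1) := by
    rw [List.drop_eq_getElem_cons hlen, (List.getElem?_eq_some_iff.mp h).2]
  have filterEq : w.filter p = (w.take i).filter p ++ c :: ((w.drop (i + 1)).filter p) := by
    conv_lhs => rw [hsplit]
    rw [List.filter_append, hdrop, List.filter_cons_of_pos hp]
  rw [filterEq]
  simp [keepCnt]

lemma keepCnt_strict {p : α → Bool} {w : List α} {i : ℕ} {c : α} (h : w[i]? = some c)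
    (hp : p c = true) {j : ℕ} (hij : i < j) : keepCnt p w i < keepCnt p w j := by
  have hstep : keepCnt p w (i + 1) = keepCnt p w i + 1 := by
    unfold keepCnt
    rw [List.take_succ, h]
    simp [List.filter_append, hp]
  have := keepCnt_mono p w (show i + 1 ≤ j from hij)
  omega

lemma keepCnt_get {p : α → Bool} {w : List α} {i : ℕ} {c : α} (h : w[i]? = some c)
    (hp : p c = true) : (w.filter p)[keepCnt p w i]? = some c := by
  have hlen : i < w.length := (List.getElem?_eq_some_iff.mp h).1
  have hsplit : w = w.take i ++ w.drop i := (List.take_append_drop i w).symm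
  have hdrop : w.drop i = c :: w.drop (i + 1) := by
    rw [List.drop_eq_getElem_cons hlen, (List.getElem?_eq_some_iff.mp h).2]
  have filterEq : w.filter p = (w.take i).filter p ++ c :: ((w.drop (i + 1)).filter p) := by
    conv_lhs => rw [hsplit]
    rw [List.filter_append, hdrop, List.filter_cons_of_pos hp]
  have hlen2 : ((w.take i).filter p).length = keepCnt p w i := rfl
  rw [filterEq, getr (le_of_eq hlen2), hlen2, Nat.sub_self, List.getElem?_cons_zero]

lemma keepCnt_surj {p : α → Bool} {w : List α} {j : ℕ} {c : α}
    (h : (w.filter p)[j]? = some c) : ∃ i, w[i]? = some c ∧ keepCnt p w i = j := by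
  induction w generalizing j with
  | nil => simp at h
  | cons d t ih =>
    by_cases hd : p d
    · rw [List.filter_cons_of_pos hd] at h
      cases j with
      | zero =>
        rw [List.getElem?_cons_zero] at h
        exact ⟨0, by rw [List.getElem?_cons_zero]; exact h, keepCnt_zero p _⟩
      | succ j' =>
        rw [List.getElem?_cons_succ] at h
        obtain ⟨i, hi, hk⟩ := ih h
        exact ⟨i + 1, by rw [List.getElem?_cons_succ]; exact hi,
          by rw [keepCnt_cons, if_pos hd, hk]; omega⟩
    · rw [List.filter_cons_of_neg (by simpa using hd)] at h
      obtain ⟨i, hi, hk⟩ := ih h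
      exact ⟨i + 1, by rw [List.getElem?_cons_succ]; exact hi,
        by rw [keepCnt_cons, if_neg hd, hk]; omega⟩

/-- filtering away letters different from `a`, `b` preserves alternation -/
lemma alternates_filter {p : α → Bool} {w : List α} {a b : α} (hab : a ≠ b)
    (pa : p a = true) (pb : p b = true) :
    Alternates (w.filter p) a b ↔ Alternates w a b := by
  refine (alt_transfer hab (keepCnt p w) ?_ ?_ ?_ ?_ ?_).symm
  · rintro i j (hi | hi) (hj | hj) hij
    · exact keepCnt_strict hi pa hij
    · exact keepCnt_strict hi pa hij
    · exact keepCnt_strict hi pb hij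
    · exact keepCnt_strict hi pb hij
  · exact fun i hi => keepCnt_get hi pa
  · exact fun i hi => keepCnt_get hi pb
  · exact fun j hj => keepCnt_surj hj
  · exact fun j hj => keepCnt_surj hj

lemma alternates_map {g : α → β} (hg : Function.Injective g) {w : List α} {a b : α}
    (hab : a ≠ b) : Alternates (w.map g) (g a) (g b) ↔ Alternates w a b := by
  have key : ∀ (c : α) (i : ℕ), w[i]? = some c → (w.map g)[i]? = some (g c) := by
    intro c i hi
    rw [List.getElem?_map, hi]
    rfl
  have key' : ∀ (c : α) (j : ℕ), (w.map g)[j]? = some (g c) →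
      ∃ i, w[i]? = some c ∧ i = j := by
    intro c j hj
    rw [List.getElem?_map] at hj
    cases hw : w[j]? with
    | none => rw [hw] at hj; simp at hj
    | some d =>
      rw [hw] at hj
      simp only [Option.map_some] at hj
      have : d = c := hg (by injection hj)
      exact ⟨j, by rw [hw, this], rfl⟩
  refine (alt_transfer hab (fun i => i) (fun i j _ _ h => h) ?_ ?_ ?_ ?_).symm
  · exact fun i hi => key a i hi
  · exact fun i hi => key b i hi
  · exact fun j hj => key' a j hj
  · exact fun j hj => key' b j hj

lemma alternates_append_left {B w : List α} {a b : α} (hab : a ≠ b)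
    (haB : a ∉ B) (hbB : b ∉ B) :
    Alternates (B ++ w) a b ↔ Alternates w a b := by
  have key : ∀ (c : α) (i : ℕ), w[i]? = some c → (B ++ w)[B.length + i]? = some c := by
    intro c i hi
    rw [getrk]
    exact hi
  have key' : ∀ (c : α), c ∉ B → ∀ j : ℕ, (B ++ w)[j]? = some c →
      ∃ i, w[i]? = some c ∧ B.length + i = j := by
    intro c hc j hj
    rcases Nat.lt_or_ge j B.length with h | h
    · rw [getl h] at hj
      exact absurd (List.mem_of_getElem? hj) hc
    · refine ⟨j - B.length, ?_, by omega⟩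
      rw [getr h] at hj
      exact hj
  refine (alt_transfer hab (fun i => B.length + i)
    (fun i j _ _ h => by exact Nat.add_lt_add_left h B.length) ?_ ?_ ?_ ?_).symm
  · exact fun i hi => key a i hi
  · exact fun i hi => key b i hi
  · exact fun j hj => key' a haB j hj
  · exact fun j hj => key' b hbB j hj

/-- inserting letter `e` just before and just after position `|A|`
    preserves alternation of letters different from `e` -/
lemma alternates_insert2 {A B : List α} {y₀ e a b : α} (hab : a ≠ b)
    (hea : e ≠ a) (heb : e ≠ b) :
    Alternates (A ++ y₀ :: B) a b ↔ Alternates (A ++ e :: y₀ :: e :: B) a b := by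
  set m := A.length with hm
  have key : ∀ (c : α) (i : ℕ), (A ++ y₀ :: B)[i]? = some c →
      (A ++ e :: y₀ :: e :: B)[if i < m then i else if i = m then i + 1 else i + 2]? = some c := by
    intro c i hi
    rcases Nat.lt_trichotomy i m with h | h | h
    · rw [if_pos h, getl (by omega), ← getl (l₂ := y₀ :: B) (by omega)]
      exact hi
    · rw [if_neg (by omega), if_pos h, h]
      have h1 : m + 1 = m + 1 := rfl
      rw [show m + 1 = A.length + 1 from rfl, getrk]
      rw [List.getElem?_cons_succ, List.getElem?_cons_zero]
      rw [h, getr0] at hi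
      rw [List.getElem?_cons_zero] at hi
      exact hi
    · rw [if_neg (by omega), if_neg (by omega)]
      obtain ⟨d, rfl⟩ : ∃ d, i = m + 1 + d := ⟨i - m - 1, by omega⟩
      rw [show m + 1 + d = A.length + (1 + d) from by omega, getrk] at hi
      rw [show 1 + d = d + 1 from by omega, List.getElem?_cons_succ] at hi
      rw [show m + 1 + d + 2 = A.length + (d + 3) from by omega, getrk]
      simp only [List.getElem?_cons_succ]
      exact hi
  have key' : ∀ (c : α), e ≠ c → ∀ j : ℕ, (A ++ e :: y₀ :: e :: B)[j]? = some c →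
      ∃ i, (A ++ y₀ :: B)[i]? = some c ∧
        (if i < m then i else if i = m then i + 1 else i + 2) = j := by
    intro c hc j hj
    rcases Nat.lt_trichotomy j m with h | h | h
    · refine ⟨j, ?_, by rw [if_pos h]⟩
      rw [getl (by omega)] at hj
      rw [getl (by omega)]
      exact hj
    · exfalso
      rw [h, getr0, List.getElem?_cons_zero] at hj
      exact hc (by injection hj)
    · rcases Nat.lt_trichotomy j (m + 2) with h2 | h2 | h2
      · have hj1 : j = m + 1 := by omega
        subst hj1
        refine ⟨m, ?_, by rw [if_neg (by omega), if_pos rfl]⟩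
        rw [show m + 1 = A.length + 1 from rfl, getrk,
          List.getElem?_cons_succ, List.getElem?_cons_zero] at hj
        rw [getr0, List.getElem?_cons_zero]
        exact hj
      · exfalso
        rw [h2] at hj
        rw [show m + 2 = A.length + 2 from rfl, getrk] at hj
        simp only [List.getElem?_cons_succ, List.getElem?_cons_zero] at hj
        exact hc (by injection hj)
      · refine ⟨j - 2, ?_, by rw [if_neg (by omega), if_neg (by omega)]; omega⟩
        obtain ⟨d, rfl⟩ : ∃ d, j = m + 3 + d := ⟨j - m - 3, by omega⟩
        rw [show m + 3 + d = A.length + (d + 3) from by omega, getrk] at hj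
        simp only [List.getElem?_cons_succ] at hj
        rw [show m + 3 + d - 2 = A.length + (d + 1) from by omega, getrk,
          List.getElem?_cons_succ]
        exact hj
  refine alt_transfer hab (fun i => if i < m then i else if i = m then i + 1 else i + 2)
    (fun i j _ _ h => by split_ifs <;> omega) ?_ ?_ ?_ ?_
  · exact fun i hi => key a i hi
  · exact fun i hi => key b i hi
  · exact fun j hj => key' a hea j hj
  · exact fun j hj => key' b heb j hj



lemma keepCnt_reflect {p : α → Bool} {w : List α} {i j : ℕ}
    (h : keepCnt p w i < keepCnt p w j) : i < j := by
  by_contra hc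
  exact absurd (keepCnt_mono p w (by omega : j ≤ i)) (by omega)

lemma length_filter_ne [DecidableEq α] (w : List α) (c : α) :
    (w.filter (fun l => decide (l ≠ c))).length + w.count c = w.length := by
  induction w with
  | nil => simp
  | cons d t ih =>
    by_cases hd : d = c
    · subst hd
      rw [List.filter_cons_of_neg (by simp), List.count_cons_self, List.length_cons]
      omega
    · rw [List.filter_cons_of_pos (by simpa using hd), List.count_cons_of_ne hd]
      simp only [List.length_cons]
      omega

section Graph

variable {V : Type*} {L : Type*} [LinearOrder L] {G : SimpleGraph V} {f : V → L} {w : List L}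

lemma mk123 (hav : Avoids123 w) {i j k : ℕ} {a b c : L} (hij : i < j) (hjk : j < k)
    (hi : w[i]? = some a) (hj : w[j]? = some b) (hk : w[k]? = some c)
    (h1 : a < b) (h2 : b < c) : False :=
  hav ⟨i, j, k, a, b, c, hij, hjk, hi, hj, hk, h1, h2⟩

/-- a letter occurring at least three times has at most one neighbour -/
lemma deg_le_one (hf : Function.Injective f) (hav : Avoids123 w)
    (hrep : RepresentsLab G f w) {vx : V} (h3 : 3 ≤ w.count (f vx))
    {u v : V} (hu : G.Adj vx u) (hv : G.Adj vx v) : u = v := by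
  by_contra hne
  obtain ⟨p₁, p₂, p₃, h12, h23, hp₁, hp₂, hp₃⟩ := exists_three_of_count h3
  have core : ∀ u v : V, G.Adj vx u → G.Adj vx v → f u < f v → False := by
    intro u v hu hv hlt
    have hAu : Alternates w (f vx) (f u) := (hrep.2.2 vx u (G.ne_of_adj hu)).mpr hu
    have hAv : Alternates w (f vx) (f v) := (hrep.2.2 vx v (G.ne_of_adj hv)).mpr hv
    obtain ⟨a₁, ha₁l, ha₁r, ha₁⟩ := hAu.1 p₁ p₂ h12 hp₁ hp₂
    obtain ⟨b₂, hb₂l, hb₂r, hb₂⟩ := hAv.1 p₂ p₃ h23 hp₂ hp₃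
    have hxu : f vx ≠ f u := fun h => (G.ne_of_adj hu) (hf h)
    have hxv : f vx ≠ f v := fun h => (G.ne_of_adj hv) (hf h)
    rcases lt_trichotomy (f v) (f vx) with h | h | h
    · exact mk123 hav (show a₁ < b₂ by omega) hb₂r ha₁ hb₂ hp₃ hlt h
    · exact hxv h.symm
    · rcases lt_trichotomy (f u) (f vx) with h' | h' | h'
      · exact mk123 hav ha₁r hb₂l ha₁ hp₂ hb₂ h' h
      · exact hxu h'.symm
      · exact mk123 hav (show p₁ < a₁ by omega) (show a₁ < b₂ by omega) hp₁ ha₁ hb₂ h' hlt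
  rcases lt_trichotomy (f u) (f v) with h | h | h
  · exact core u v hu hv h
  · exact hne (hf h)
  · exact core v u hv hu h

/-- the unique neighbour of a letter occurring at least three times occurs at least twice -/
lemma nbr_two (hrep : RepresentsLab G f w) {vx vy : V} (hadj : G.Adj vx vy)
    (h3 : 3 ≤ w.count (f vx)) : 2 ≤ w.count (f vy) := by
  obtain ⟨p₁, p₂, p₃, h12, h23, hp₁, hp₂, hp₃⟩ := exists_three_of_count h3
  have hAxy : Alternates w (f vx) (f vy) := (hrep.2.2 vx vy (G.ne_of_adj hadj)).mpr hadj
  obtain ⟨k₁, hk₁l, hk₁r, hk₁⟩ := hAxy.1 p₁ p₂ h12 hp₁ hp₂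
  obtain ⟨k₂, hk₂l, hk₂r, hk₂⟩ := hAxy.1 p₂ p₃ h23 hp₂ hp₃
  exact two_le_count_of (show k₁ < k₂ by omega) hk₁ hk₂

end Graph

lemma decode_blk {p : α → Bool} (g : α → β) (B : List β) (w : List α) :
    ∀ (n : ℕ) (v : β), (B ++ (w.filter p).map g)[n]? = some v →
      (n < B.length ∧ B[n]? = some v) ∨
      (B.length ≤ n ∧ ∃ (l : α) (n₀ : ℕ), v = g l ∧ w[n₀]? = some l ∧ p l = true ∧
        keepCnt p w n₀ = n - B.length) := by
  intro n v hv
  rcases Nat.lt_or_ge n B.length with h | h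
  · left
    exact ⟨h, by rw [getl h] at hv; exact hv⟩
  · right
    refine ⟨h, ?_⟩
    rw [getr h, List.getElem?_map] at hv
    cases hm : (w.filter p)[n - B.length]? with
    | none => rw [hm] at hv; simp at hv
    | some l =>
      rw [hm] at hv
      simp only [Option.map_some] at hv
      obtain ⟨n₀, hn₀, hk⟩ := keepCnt_surj hm
      have hpl : p l = true := (List.mem_filter.mp (List.mem_of_getElem? hm)).2
      exact ⟨l, n₀, (Option.some.inj hv).symm, hn₀, hpl, by omega⟩

section Graph2

variable {V : Type*} {L : Type} [LinearOrder L] {G : SimpleGraph V} {f : V → L} {w : List L}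

/-- Surgery for an isolated letter occurring at least three times. -/
lemma surgery_iso (hf : Function.Injective f) (hav : Avoids123 w) (hrep : RepresentsLab G f w)
    {vx : V} (h3 : 3 ≤ w.count (f vx)) (hdeg : ∀ u : V, ¬ G.Adj vx u) :
    ∃ (f' : V → (L ⊕ₗ Fin 2)) (w' : List (L ⊕ₗ Fin 2)), Function.Injective f' ∧
      Avoids123 w' ∧ RepresentsLab G f' w' ∧ w'.length < w.length := by
  classical
  set fx := f vx with hfx
  set g : L → L ⊕ₗ Fin 2 := fun l => toLex (Sum.inl l) with hg
  set x' : L ⊕ₗ Fin 2 := toLex (Sum.inr 1) with hx'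
  set p : L → Bool := fun l => decide (l ≠ fx) with hp
  set T : List (L ⊕ₗ Fin 2) := (w.filter p).map g with hT
  set w' : List (L ⊕ₗ Fin 2) := x' :: x' :: T with hw'
  have hginj : Function.Injective g := fun a b h => Sum.inl_injective (toLex.injective h)
  have hgneq : ∀ l : L, g l ≠ x' := by
    intro l h
    have := toLex.injective h
    simp [hg, hx'] at this
  have hgg : ∀ {l l' : L}, g l < g l' ↔ l < l' := by
    intro l l'
    constructor
    · intro h; exact Sum.lex_inl_inl.mp h
    · intro h; exact Sum.Lex.inl h
  have hxg : ∀ l : L, ¬ x' < g l := fun l h => Sum.lex_inr_inl h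
  have hw'B : w' = [x', x'] ++ T := rfl
  have hget0 : w'[0]? = some x' := by rw [hw']; exact List.getElem?_cons_zero
  have hget1 : w'[1]? = some x' := by
    rw [hw', List.getElem?_cons_succ]; exact List.getElem?_cons_zero
  have hpfv : ∀ v : V, v ≠ vx → p (f v) = true := by
    intro v hv
    exact decide_eq_true (fun h => hv (hf h))
  classical
  set f' : V → L ⊕ₗ Fin 2 := fun v => if v = vx then x' else g (f v) with hf'
  have hf'x : f' vx = x' := by simp [hf']
  have hf'o : ∀ v : V, v ≠ vx → f' v = g (f v) := by
    intro v hv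
    simp [hf', hv]
  refine ⟨f', w', ?_, ?_, ?_, ?_⟩
  · -- injectivity
    intro u v h
    by_cases hu : u = vx <;> by_cases hv : v = vx <;> simp [hf', hu, hv] at h ⊢
    · exact absurd h.symm (hgneq _)
    · exact absurd h (hgneq _)
    · exact hf (hginj h)
  · -- Avoids123
    rintro ⟨i, j, k, a, b, c, hij, hjk, hi, hj, hk, hab, hbc⟩
    rw [hw'B] at hi hj hk
    have hBchar : ∀ (n : ℕ) (v : L ⊕ₗ Fin 2), n < 2 → [x', x'][n]? = some v → v = x' := by
      intro n v hn hv
      rcases (by omega : n = 0 ∨ n = 1) with rfl | rfl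
      · rw [List.getElem?_cons_zero] at hv; exact (Option.some.inj hv).symm
      · rw [List.getElem?_cons_succ, List.getElem?_cons_zero] at hv
        exact (Option.some.inj hv).symm
    rcases decode_blk g [x', x'] w k c hk with ⟨hk1, _⟩ | ⟨hk1, l_c, n_c, rfl, hnc, _, hkc⟩
    · simp at hk1; omega
    · rcases decode_blk g [x', x'] w j b hj with ⟨hj1, hjB⟩ | ⟨hj1, l_b, n_b, rfl, hnb, _, hkb⟩
      · have : b = x' := hBchar j b (by simpa using hj1) hjB
        exact hxg l_c (this ▸ hbc)
      · rcases decode_blk g [x', x'] w i a hi with ⟨hi1, hiB⟩ | ⟨hi1, l_a, n_a, rfl, hna, _, hka⟩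
        · have : a = x' := hBchar i a (by simpa using hi1) hiB
          exact hxg l_b (this ▸ hab)
        · simp only [List.length_cons, List.length_nil] at hka hkb hkc hi1 hj1 hk1
          have h1 : n_a < n_b := keepCnt_reflect (by rw [hka, hkb]; omega)
          have h2 : n_b < n_c := keepCnt_reflect (by rw [hkb, hkc]; omega)
          exact mk123 hav h1 h2 hna hnb hnc (hgg.mp hab) (hgg.mp hbc)
  · -- RepresentsLab
    refine ⟨?_, ?_, ?_⟩
    · intro l' hl'
      rw [hw'] at hl'
      rcases List.mem_cons.mp hl' with rfl | hl'
      · exact ⟨vx, if_pos rfl⟩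
      rcases List.mem_cons.mp hl' with rfl | hl'
      · exact ⟨vx, if_pos rfl⟩
      · obtain ⟨l, hlmem, rfl⟩ := List.mem_map.mp hl'
        have hlw : l ∈ w := (List.mem_filter.mp hlmem).1
        have hlnx : l ≠ fx := of_decide_eq_true (List.mem_filter.mp hlmem).2
        obtain ⟨v, rfl⟩ := hrep.1 l hlw
        have : v ≠ vx := fun h => hlnx (by rw [h])
        exact ⟨v, hf'o v this⟩
    · intro v
      by_cases hv : v = vx
      · rw [hv, hf'x, hw']
        exact List.mem_cons_self
      · rw [hf'o v hv, hw']
        have : f v ∈ w.filter p := List.mem_filter.mpr ⟨hrep.2.1 v, hpfv v hv⟩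
        exact List.mem_cons_of_mem _ (List.mem_cons_of_mem _ (List.mem_map_of_mem (f := g) this))
    · intro y z hyz
      have hnone : ∀ u : V, u ≠ vx → ¬ Alternates w' x' (g (f u)) := by
        intro u hu hAlt
        obtain ⟨k, hk1, hk2, _⟩ := hAlt.1 0 1 (by omega) hget0 hget1
        omega
      by_cases hy : y = vx
      · subst hy
        rw [hf'x, hf'o z (Ne.symm hyz)]
        constructor
        · intro hAlt; exact absurd hAlt (hnone z (Ne.symm hyz))
        · intro hAdj; exact absurd hAdj (hdeg z)
      · by_cases hz : z = vx
        · subst hz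
          rw [hf'x, hf'o y hy]
          constructor
          · intro hAlt
            exact absurd (alternates_comm.mp hAlt) (hnone y hy)
          · intro hAdj
            exact absurd (G.adj_symm hAdj) (hdeg y)
        · rw [hf'o y hy, hf'o z hz]
          have hfyz : f y ≠ f z := fun h => hyz (hf h)
          have hchain : Alternates w' (g (f y)) (g (f z)) ↔ Alternates w (f y) (f z) := by
            have hmemy : g (f y) ∉ [x', x'] := by
              simp only [List.mem_cons, List.not_mem_nil, or_false]
              push_neg
              exact ⟨hgneq _, hgneq _⟩
            have hmemz : g (f z) ∉ [x', x'] := by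
              simp only [List.mem_cons, List.not_mem_nil, or_false]
              push_neg
              exact ⟨hgneq _, hgneq _⟩
            rw [hw'B, alternates_append_left (fun h => hfyz (hginj h)) hmemy hmemz, hT,
              alternates_map hginj hfyz, alternates_filter hfyz (hpfv y hy) (hpfv z hz)]
          rw [hchain]
          exact hrep.2.2 y z hyz
  · -- length
    rw [hw', hT]
    have := length_filter_ne w fx
    simp only [List.length_cons, List.length_map]
    have hple : (w.filter p).length + w.count fx = w.length := this
    omega

end Graph2

lemma length_filter_ne2 [DecidableEq α] (w : List α) (c d : α) (hcd : c ≠ d) :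
    (w.filter (fun l => decide (l ≠ c ∧ l ≠ d))).length + w.count c + w.count d = w.length := by
  induction w with
  | nil => simp
  | cons e t ih =>
    by_cases hec : e = c
    · subst hec
      rw [List.filter_cons_of_neg (by simp), List.count_cons_self,
        List.count_cons_of_ne hcd, List.length_cons]
      omega
    · by_cases hed : e = d
      · subst hed
        rw [List.filter_cons_of_neg (by simp), List.count_cons_self,
          List.count_cons_of_ne (Ne.symm hcd), List.length_cons]
        omega
      · rw [List.filter_cons_of_pos (by simp [hec, hed]), List.count_cons_of_ne hec,
          List.count_cons_of_ne hed, List.length_cons, List.length_cons]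
        omega

section Graph3

variable {V : Type*} {L : Type} [LinearOrder L] {G : SimpleGraph V} {f : V → L} {w : List L}

/-- Surgery for a pair of letters, each occurring at least three times,
whose only neighbour is each other. -/
lemma surgery_pair (hf : Function.Injective f) (hav : Avoids123 w) (hrep : RepresentsLab G f w)
    {vx vy : V} (hadj : G.Adj vx vy)
    (hx3 : 3 ≤ w.count (f vx)) (hy3 : 3 ≤ w.count (f vy))
    (huX : ∀ u : V, G.Adj vx u → u = vy) (huY : ∀ u : V, G.Adj vy u → u = vx) :
    ∃ (f' : V → (L ⊕ₗ Fin 2)) (w' : List (L ⊕ₗ Fin 2)), Function.Injective f' ∧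
      Avoids123 w' ∧ RepresentsLab G f' w' ∧ w'.length < w.length := by
  classical
  have hvxy : vx ≠ vy := G.ne_of_adj hadj
  have hfxy : f vx ≠ f vy := fun h => hvxy (hf h)
  set fx := f vx with hfx
  set fy := f vy with hfy
  set g : L → L ⊕ₗ Fin 2 := fun l => toLex (Sum.inl l) with hg
  set x' : L ⊕ₗ Fin 2 := toLex (Sum.inr 1) with hx'
  set y' : L ⊕ₗ Fin 2 := toLex (Sum.inr 0) with hy'
  set p : L → Bool := fun l => decide (l ≠ fx ∧ l ≠ fy) with hp
  set T : List (L ⊕ₗ Fin 2) := (w.filter p).map g with hT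
  set w' : List (L ⊕ₗ Fin 2) := x' :: y' :: x' :: y' :: T with hw'
  have hginj : Function.Injective g := fun a b h => Sum.inl_injective (toLex.injective h)
  have hgnex : ∀ l : L, g l ≠ x' := by
    intro l h
    have := toLex.injective h
    simp [hg, hx'] at this
  have hgney : ∀ l : L, g l ≠ y' := by
    intro l h
    have := toLex.injective h
    simp [hg, hy'] at this
  have hxney : x' ≠ y' := by
    intro h
    have := Sum.inr_injective (toLex.injective h)
    simp at this
  have hgg : ∀ {l l' : L}, g l < g l' ↔ l < l' := by
    intro l l'
    constructor
    · intro h; exact Sum.lex_inl_inl.mp h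
    · intro h; exact Sum.Lex.inl h
  have hxg : ∀ l : L, ¬ x' < g l := fun l h => Sum.lex_inr_inl h
  have hyg : ∀ l : L, ¬ y' < g l := fun l h => Sum.lex_inr_inl h
  have hnxy : ¬ x' < y' := by
    intro h
    have := Sum.lex_inr_inr.mp h
    exact absurd this (by decide)
  have hnxx : ¬ x' < x' := lt_irrefl x'
  have hnyy : ¬ y' < y' := lt_irrefl y'
  have hw'B : w' = [x', y', x', y'] ++ T := rfl
  have hget0 : w'[0]? = some x' := by rw [hw']; exact List.getElem?_cons_zero
  have hget1 : w'[1]? = some y' := by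
    rw [hw', List.getElem?_cons_succ]; exact List.getElem?_cons_zero
  have hget2 : w'[2]? = some x' := by
    rw [hw', List.getElem?_cons_succ, List.getElem?_cons_succ]; exact List.getElem?_cons_zero
  have hget3 : w'[3]? = some y' := by
    rw [hw', List.getElem?_cons_succ, List.getElem?_cons_succ, List.getElem?_cons_succ]
    exact List.getElem?_cons_zero
  have hpfv : ∀ v : V, v ≠ vx → v ≠ vy → p (f v) = true := by
    intro v hvx hvy
    exact decide_eq_true ⟨fun h => hvx (hf h), fun h => hvy (hf h)⟩
  have hBchar : ∀ (n : ℕ) (v : L ⊕ₗ Fin 2), n < 4 → [x', y', x', y'][n]? = some v →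
      v = x' ∨ v = y' := by
    intro n v hn hv
    rcases (by omega : n = 0 ∨ n = 1 ∨ n = 2 ∨ n = 3) with rfl | rfl | rfl | rfl
    · exact Or.inl (Option.some.inj hv).symm
    · exact Or.inr (Option.some.inj hv).symm
    · exact Or.inl (Option.some.inj hv).symm
    · exact Or.inr (Option.some.inj hv).symm
  have occX : ∀ n : ℕ, w'[n]? = some x' → n = 0 ∨ n = 2 := by
    intro n hn
    rw [hw'B] at hn
    rcases decode_blk g [x', y', x', y'] w n x' hn with ⟨h4, hB⟩ | ⟨h4, l, n₀, hlx, _, _, _⟩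
    · simp only [List.length_cons, List.length_nil] at h4
      rcases (by omega : n = 0 ∨ n = 1 ∨ n = 2 ∨ n = 3) with rfl | rfl | rfl | rfl
      · exact Or.inl rfl
      · exact absurd (Option.some.inj hB) hxney.symm
      · exact Or.inr rfl
      · exact absurd (Option.some.inj hB) hxney.symm
    · exact absurd hlx.symm (hgnex l)
  have occY : ∀ n : ℕ, w'[n]? = some y' → n = 1 ∨ n = 3 := by
    intro n hn
    rw [hw'B] at hn
    rcases decode_blk g [x', y', x', y'] w n y' hn with ⟨h4, hB⟩ | ⟨h4, l, n₀, hly, _, _, _⟩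
    · simp only [List.length_cons, List.length_nil] at h4
      rcases (by omega : n = 0 ∨ n = 1 ∨ n = 2 ∨ n = 3) with rfl | rfl | rfl | rfl
      · exact absurd (Option.some.inj hB) hxney
      · exact Or.inl rfl
      · exact absurd (Option.some.inj hB) hxney
      · exact Or.inr rfl
    · exact absurd hly.symm (hgney l)
  set f' : V → L ⊕ₗ Fin 2 := fun v => if v = vx then x' else if v = vy then y' else g (f v)
    with hf'
  have hf'x : f' vx = x' := by simp [hf']
  have hf'y : f' vy = y' := by simp [hf', Ne.symm hvxy]
  have hf'o : ∀ v : V, v ≠ vx → v ≠ vy → f' v = g (f v) := by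
    intro v h1 h2
    simp [hf', h1, h2]
  have hAxy : Alternates w' x' y' := by
    constructor
    · intro i j hij hi hj
      rcases occX i hi with rfl | rfl <;> rcases occX j hj with rfl | rfl <;> try omega
      exact ⟨1, by omega, by omega, hget1⟩
    · intro i j hij hi hj
      rcases occY i hi with rfl | rfl <;> rcases occY j hj with rfl | rfl <;> try omega
      exact ⟨2, by omega, by omega, hget2⟩
  have hnoneX : ∀ u : V, u ≠ vx → u ≠ vy → ¬ Alternates w' x' (g (f u)) := by
    intro u h1 h2 hAlt
    obtain ⟨k, hk1, hk2, hk3⟩ := hAlt.1 0 2 (by omega) hget0 hget2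
    have : k = 1 := by omega
    subst this
    rw [hget1] at hk3
    exact hgney (f u) (Option.some.inj hk3).symm
  have hnoneY : ∀ u : V, u ≠ vx → u ≠ vy → ¬ Alternates w' y' (g (f u)) := by
    intro u h1 h2 hAlt
    obtain ⟨k, hk1, hk2, hk3⟩ := hAlt.1 1 3 (by omega) hget1 hget3
    have : k = 2 := by omega
    subst this
    rw [hget2] at hk3
    exact hgnex (f u) (Option.some.inj hk3).symm
  refine ⟨f', w', ?_, ?_, ?_, ?_⟩
  · -- injectivity
    intro u v h
    by_cases hu1 : u = vx <;> by_cases hv1 : v = vx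
    · rw [hu1, hv1]
    · by_cases hv2 : v = vy
      · rw [hu1, hf'x, hv2, hf'y] at h
        exact absurd h hxney
      · rw [hu1, hf'x, hf'o v hv1 hv2] at h
        exact absurd h.symm (hgnex _)
    · by_cases hu2 : u = vy
      · rw [hv1, hf'x, hu2, hf'y] at h
        exact absurd h.symm hxney
      · rw [hv1, hf'x, hf'o u hu1 hu2] at h
        exact absurd h (hgnex _)
    · by_cases hu2 : u = vy <;> by_cases hv2 : v = vy
      · rw [hu2, hv2]
      · rw [hu2, hf'y, hf'o v hv1 hv2] at h
        exact absurd h.symm (hgney _)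
      · rw [hv2, hf'y, hf'o u hu1 hu2] at h
        exact absurd h (hgney _)
      · rw [hf'o u hu1 hu2, hf'o v hv1 hv2] at h
        exact hf (hginj h)
  · -- Avoids123
    rintro ⟨i, j, k, a, b, c, hij, hjk, hi, hj, hk, hab, hbc⟩
    rw [hw'B] at hi hj hk
    rcases decode_blk g [x', y', x', y'] w k c hk with ⟨hk1, hkB⟩ | ⟨hk1, l_c, n_c, rfl, hnc, _, hkc⟩
    · -- all three in the block
      simp only [List.length_cons, List.length_nil] at hk1
      have hj1 : j < 4 := by omega
      have hi1 : i < 4 := by omega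
      have hcB := hBchar k c (by omega) hkB
      have hbB : b = x' ∨ b = y' := by
        rcases decode_blk g [x', y', x', y'] w j b hj with ⟨_, hjB⟩ | ⟨h4, _, _, _, _, _, _⟩
        · exact hBchar j b (by omega) hjB
        · simp only [List.length_cons, List.length_nil] at h4; omega
      have haB : a = x' ∨ a = y' := by
        rcases decode_blk g [x', y', x', y'] w i a hi with ⟨_, hiB⟩ | ⟨h4, _, _, _, _, _, _⟩
        · exact hBchar i a (by omega) hiB
        · simp only [List.length_cons, List.length_nil] at h4; omega
      rcases haB with rfl | rfl <;> rcases hbB with rfl | rfl <;> rcases hcB with rfl | rfl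
      all_goals first
        | exact absurd hab hnxx
        | exact absurd hab hnxy
        | exact absurd hbc hnxx
        | exact absurd hbc hnxy
        | exact absurd hbc hnyy
        | exact absurd hab hnyy
    · rcases decode_blk g [x', y', x', y'] w j b hj with ⟨hj1, hjB⟩ | ⟨hj1, l_b, n_b, rfl, hnb, _, hkb⟩
      · rcases hBchar j b hj1 hjB with rfl | rfl
        · exact hxg l_c hbc
        · exact hyg l_c hbc
      · rcases decode_blk g [x', y', x', y'] w i a hi with ⟨hi1, hiB⟩ | ⟨hi1, l_a, n_a, rfl, hna, _, hka⟩
        · rcases hBchar i a hi1 hiB with rfl | rfl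
          · exact hxg l_b hab
          · exact hyg l_b hab
        · simp only [List.length_cons, List.length_nil] at hka hkb hkc hi1 hj1 hk1
          have h1 : n_a < n_b := keepCnt_reflect (by rw [hka, hkb]; omega)
          have h2 : n_b < n_c := keepCnt_reflect (by rw [hkb, hkc]; omega)
          exact mk123 hav h1 h2 hna hnb hnc (hgg.mp hab) (hgg.mp hbc)
  · -- RepresentsLab
    refine ⟨?_, ?_, ?_⟩
    · intro l' hl'
      rw [hw'] at hl'
      rcases List.mem_cons.mp hl' with rfl | hl'
      · exact ⟨vx, hf'x⟩
      rcases List.mem_cons.mp hl' with rfl | hl'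
      · exact ⟨vy, hf'y⟩
      rcases List.mem_cons.mp hl' with rfl | hl'
      · exact ⟨vx, hf'x⟩
      rcases List.mem_cons.mp hl' with rfl | hl'
      · exact ⟨vy, hf'y⟩
      · obtain ⟨l, hlmem, rfl⟩ := List.mem_map.mp hl'
        have hlw : l ∈ w := (List.mem_filter.mp hlmem).1
        have hln : l ≠ fx ∧ l ≠ fy := of_decide_eq_true (List.mem_filter.mp hlmem).2
        obtain ⟨v, rfl⟩ := hrep.1 l hlw
        exact ⟨v, hf'o v (fun h => hln.1 (by rw [h])) (fun h => hln.2 (by rw [h]))⟩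
    · intro v
      by_cases hv1 : v = vx
      · rw [hv1, hf'x, hw']
        exact List.mem_cons_self
      · by_cases hv2 : v = vy
        · rw [hv2, hf'y, hw']
          exact List.mem_cons_of_mem _ (List.mem_cons_self)
        · rw [hf'o v hv1 hv2, hw']
          have : f v ∈ w.filter p := List.mem_filter.mpr ⟨hrep.2.1 v, hpfv v hv1 hv2⟩
          refine List.mem_cons_of_mem _ (List.mem_cons_of_mem _ (List.mem_cons_of_mem _
            (List.mem_cons_of_mem _ (List.mem_map_of_mem (f := g) this))))
    · intro y z hyz
      by_cases hy1 : y = vx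
      · subst hy1
        by_cases hz2 : z = vy
        · subst hz2
          rw [hf'x, hf'y]
          exact ⟨fun _ => hadj, fun _ => hAxy⟩
        · rw [hf'x, hf'o z (Ne.symm hyz) hz2]
          constructor
          · intro hAlt; exact absurd hAlt (hnoneX z (Ne.symm hyz) hz2)
          · intro hAdj; exact absurd (huX z hAdj) hz2
      · by_cases hy2 : y = vy
        · subst hy2
          by_cases hz1 : z = vx
          · subst hz1
            rw [hf'y, hf'x]
            exact ⟨fun _ => G.adj_symm hadj, fun _ => alternates_comm.mp hAxy⟩
          · rw [hf'y, hf'o z hz1 (Ne.symm hyz)]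
            constructor
            · intro hAlt; exact absurd hAlt (hnoneY z hz1 (Ne.symm hyz))
            · intro hAdj; exact absurd (huY z hAdj) hz1
        · by_cases hz1 : z = vx
          · subst hz1
            rw [hf'x, hf'o y hy1 hy2]
            constructor
            · intro hAlt
              exact absurd (alternates_comm.mp hAlt) (hnoneX y hy1 hy2)
            · intro hAdj
              exact absurd (huX y (G.adj_symm hAdj)) hy2
          · by_cases hz2 : z = vy
            · subst hz2
              rw [hf'y, hf'o y hy1 hy2]
              constructor
              · intro hAlt
                exact absurd (alternates_comm.mp hAlt) (hnoneY y hy1 hy2)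
              · intro hAdj
                exact absurd (huY y (G.adj_symm hAdj)) hy1
            · rw [hf'o y hy1 hy2, hf'o z hz1 hz2]
              have hfyz : f y ≠ f z := fun h => hyz (hf h)
              have hchain : Alternates w' (g (f y)) (g (f z)) ↔ Alternates w (f y) (f z) := by
                have hmemy : g (f y) ∉ [x', y', x', y'] := by
                  simp only [List.mem_cons, List.not_mem_nil, or_false]
                  push_neg
                  exact ⟨hgnex _, hgney _, hgnex _, hgney _⟩
                have hmemz : g (f z) ∉ [x', y', x', y'] := by
                  simp only [List.mem_cons, List.not_mem_nil, or_false]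
                  push_neg
                  exact ⟨hgnex _, hgney _, hgnex _, hgney _⟩
                rw [hw'B, alternates_append_left (fun h => hfyz (hginj h)) hmemy hmemz, hT,
                  alternates_map hginj hfyz,
                  alternates_filter hfyz (hpfv y hy1 hy2) (hpfv z hz1 hz2)]
              rw [hchain]
              exact hrep.2.2 y z hyz
  · -- length
    rw [hw', hT]
    have h := length_filter_ne2 w fx fy hfxy
    rw [← hp] at h
    simp only [List.length_cons, List.length_map]
    omega

end Graph3

section GraphHug

variable {V : Type*} {L : Type} [LinearOrder L] {G : SimpleGraph V} {f : V → L} {w : List L}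

lemma xy_struct {fx fy : L} (hAxy : Alternates w fx fy) {q₁ q₂ : ℕ} (hq12 : q₁ < q₂)
    (hyocc : ∀ n : ℕ, w[n]? = some fy → n = q₁ ∨ n = q₂)
    {P₁ P₂ P₃ : ℕ} (h12 : P₁ < P₂) (h23 : P₂ < P₃)
    (hP₁ : w[P₁]? = some fx) (hP₂ : w[P₂]? = some fx) (hP₃ : w[P₃]? = some fx) :
    P₁ < q₁ ∧ q₁ < P₂ ∧ P₂ < q₂ ∧ q₂ < P₃ := by
  obtain ⟨k₁, hk₁l, hk₁r, hk₁⟩ := hAxy.1 P₁ P₂ h12 hP₁ hP₂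
  obtain ⟨k₂, hk₂l, hk₂r, hk₂⟩ := hAxy.1 P₂ P₃ h23 hP₂ hP₃
  rcases hyocc k₁ hk₁ with h1 | h1 <;> rcases hyocc k₂ hk₂ with h2 | h2 <;> omega

/-- The hug surgery, when the letter of `vx` (occurring ≥ 3 times, with unique
neighbour `vy` whose letter occurs exactly twice) is smaller than the letter of `vy`. -/
lemma surgery_hug_high (hf : Function.Injective f) (hav : Avoids123 w)
    (hrep : RepresentsLab G f w) {vx vy : V} (hadj : G.Adj vx vy)
    (huX : ∀ u : V, G.Adj vx u → u = vy)
    (hx3 : 3 ≤ w.count (f vx)) (hy2 : w.count (f vy) = 2) (hlt : f vx < f vy) :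
    ∃ (f' : V → Lex (L × Bool)) (w' : List (Lex (L × Bool))), Function.Injective f' ∧
      Avoids123 w' ∧ RepresentsLab G f' w' ∧ w'.length < w.length := by
  classical
  have hvxy : vx ≠ vy := G.ne_of_adj hadj
  set fx := f vx with hfx
  set fy := f vy with hfy
  have hfxy : fx ≠ fy := ne_of_lt hlt
  -- decompose w at the first occurrence of fy
  obtain ⟨left, right, hwsplit, hfyl⟩ := exists_first_split (hrep.2.1 vy)
  set q₁ := left.length with hq₁def
  have hcnt1 : right.count fy = 1 := by
    have h1 : w.count fy = left.count fy + (right.count fy + 1) := by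
      rw [hwsplit, List.count_append, List.count_cons_self]
    have h2 : left.count fy = 0 := List.count_eq_zero.mpr hfyl
    omega
  obtain ⟨s₀, hs₀, hs₀u⟩ := count_eq_one_unique hcnt1
  set q₂ := q₁ + 1 + s₀ with hq₂def
  have hq12 : q₁ < q₂ := by omega
  have hq₁get : w[q₁]? = some fy := by
    rw [hwsplit, hq₁def, getr0]
    exact List.getElem?_cons_zero
  have hq₂get : w[q₂]? = some fy := by
    have he : q₂ = left.length + (s₀ + 1) := by omega
    rw [hwsplit, he, getrk, List.getElem?_cons_succ]
    exact hs₀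
  have hyocc : ∀ n : ℕ, w[n]? = some fy → n = q₁ ∨ n = q₂ := by
    intro n hn
    rcases lt_trichotomy n q₁ with h | h | h
    · exfalso
      rw [hwsplit, getl (by omega : n < left.length)] at hn
      exact hfyl (List.mem_of_getElem? hn)
    · exact Or.inl h
    · right
      have he : n = left.length + (n - q₁ - 1 + 1) := by omega
      rw [hwsplit, he, getrk, List.getElem?_cons_succ] at hn
      have := hs₀u _ hn
      omega
  obtain ⟨P₁, P₂, P₃, h12, h23, hP₁, hP₂, hP₃⟩ := exists_three_of_count hx3
  have hAxy : Alternates w fx fy := (hrep.2.2 vx vy hvxy).mpr hadj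
  obtain ⟨hP1q, hq1P2, hP2q, hq2P3⟩ := xy_struct hAxy hq12 hyocc h12 h23 hP₁ hP₂ hP₃
  -- structural facts from 123-avoidance
  have factA : ∀ (n : ℕ) (l : L), n < q₁ → w[n]? = some l → l ≠ fx → fx < l := by
    intro n l hn hl hne
    rcases lt_or_gt_of_ne hne with h | h
    · exact (mk123 hav (show n < P₂ by omega) (show P₂ < q₂ by omega) hl hP₂ hq₂get h hlt).elim
    · exact h
  have factC : ∀ (n : ℕ) (l : L), q₁ < n → w[n]? = some l → ¬ fy < l := by
    intro n l hn hl hgt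
    exact mk123 hav hP1q hn hP₁ hq₁get hl hlt hgt
  -- the new word
  set g : L → Lex (L × Bool) := fun l => toLex (l, true) with hg
  set x' : Lex (L × Bool) := toLex (fx, false) with hx'
  set pne : L → Bool := fun l => decide (l ≠ fx) with hpne
  set A₀ : List L := left.filter pne with hA₀
  set B₀ : List L := right.filter pne with hB₀
  set A : List (Lex (L × Bool)) := A₀.map g with hA
  set B : List (Lex (L × Bool)) := B₀.map g with hB
  set m := A.length with hm
  set w' : List (Lex (L × Bool)) := A ++ x' :: g fy :: x' :: B with hw'
  have hginj : Function.Injective g := fun a b h => by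
    have := toLex.injective h
    exact congrArg Prod.fst this
  have hgnex : ∀ l : L, g l ≠ x' := by
    intro l h
    have := toLex.injective h
    simp [hg, hx'] at this
  have hgg : ∀ {l l' : L}, g l < g l' ↔ l < l' := by
    intro l l'
    change toLex (l, true) < toLex (l', true) ↔ _
    rw [Prod.Lex.lt_iff]
    simp
  have hgx : ∀ {l : L}, g l < x' ↔ l < fx := by
    intro l
    change toLex (l, true) < toLex (fx, false) ↔ _
    rw [Prod.Lex.lt_iff]
    simp
  have hxg : ∀ {l : L}, x' < g l ↔ fx ≤ l := by
    intro l
    change toLex (fx, false) < toLex (l, true) ↔ _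
    rw [Prod.Lex.lt_iff]
    constructor
    · rintro (h | ⟨h, _⟩)
      · exact le_of_lt h
      · exact le_of_eq h
    · intro h
      rcases lt_or_eq_of_le h with h' | h'
      · exact Or.inl h'
      · exact Or.inr ⟨h', by simp⟩
  have hpfy : pne fy = true := decide_eq_true (Ne.symm hfxy)
  have hm₀ : A₀.length = m := by rw [hm, hA, List.length_map]
  -- getElem facts for the block
  have hw'm : w'[m]? = some x' := by
    rw [hw', hm, getr0]
    exact List.getElem?_cons_zero
  have hw'm1 : w'[m + 1]? = some (g fy) := by
    rw [hw', hm, getrk, List.getElem?_cons_succ]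
    exact List.getElem?_cons_zero
  have hw'm2 : w'[m + 2]? = some x' := by
    rw [hw', hm, getrk, List.getElem?_cons_succ, List.getElem?_cons_succ]
    exact List.getElem?_cons_zero
  -- keepCnt transfer along the decomposition of w
  have hkw_left : ∀ n₀ : ℕ, n₀ ≤ q₁ → keepCnt pne w n₀ = keepCnt pne left n₀ := by
    intro n₀ h
    unfold keepCnt
    rw [hwsplit, List.take_append_of_le_length (by omega)]
  have hkw_q1 : keepCnt pne w q₁ = m := by
    unfold keepCnt
    rw [hwsplit, hq₁def, List.take_left, ← hm₀, hA₀]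
  have hkw_right : ∀ d : ℕ, keepCnt pne w (q₁ + 1 + d) = m + 1 + keepCnt pne right d := by
    intro d
    unfold keepCnt
    have he : q₁ + 1 + d = left.length + (1 + d) := by omega
    rw [hwsplit, he, List.take_length_add_append, List.filter_append]
    rw [show (fy :: right).take (1 + d) = fy :: right.take d from by
      rw [Nat.add_comm]; rfl]
    rw [List.filter_cons_of_pos hpfy]
    simp only [List.length_append, List.length_cons]
    rw [← hA₀, hm₀]
    omega
  -- decoding non-artifact positions of w'
  have hdec : ∀ (n : ℕ) (v : Lex (L × Bool)), w'[n]? = some v → n ≠ m → n ≠ m + 2 →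
      ∃ (l : L) (n₀ : ℕ), v = g l ∧ w[n₀]? = some l ∧ l ≠ fx ∧
        ((n < m ∧ keepCnt pne w n₀ = n ∧ n₀ < q₁) ∨
         (n = m + 1 ∧ keepCnt pne w n₀ = m ∧ n₀ = q₁ ∧ l = fy) ∨
         (m + 2 < n ∧ keepCnt pne w n₀ = n - 2 ∧ q₁ < n₀)) := by
    intro n v hv hn1 hn2
    rcases lt_trichotomy n m with h | h | h
    · -- in A
      rw [hw', getl (by omega : n < A.length)] at hv
      rw [hA, List.getElem?_map] at hv
      cases hm' : A₀[n]? with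
      | none => rw [hm'] at hv; simp at hv
      | some l =>
        rw [hm'] at hv
        simp only [Option.map_some] at hv
        rw [hA₀] at hm'
        obtain ⟨n₀, hn₀, hk⟩ := keepCnt_surj hm'
        have hlt₀ : n₀ < left.length := (List.getElem?_eq_some_iff.mp hn₀).1
        have hlne : l ≠ fx := of_decide_eq_true (List.mem_filter.mp (List.mem_of_getElem? hm')).2
        refine ⟨l, n₀, (Option.some.inj hv).symm, ?_, hlne, Or.inl ⟨h, ?_, by omega⟩⟩
        · rw [hwsplit, getl hlt₀]
          exact hn₀
        · rw [hkw_left n₀ (by omega)]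
          exact hk
    · omega
    · rcases (by omega : n = m + 1 ∨ m + 2 < n) with h' | h'
      · subst h'
        rw [hw'm1] at hv
        exact ⟨fy, q₁, (Option.some.inj hv).symm, hq₁get, Ne.symm hfxy,
          Or.inr (Or.inl ⟨rfl, hkw_q1, rfl, rfl⟩)⟩
      · -- in B
        have he : n = A.length + (n - m - 3 + 3) := by omega
        rw [hw', he, getrk] at hv
        simp only [List.getElem?_cons_succ] at hv
        rw [hB, List.getElem?_map] at hv
        cases hm' : B₀[n - m - 3]? with
        | none => rw [hm'] at hv; simp at hv
        | some l =>
          rw [hm'] at hv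
          simp only [Option.map_some] at hv
          rw [hB₀] at hm'
          obtain ⟨n₀', hn₀, hk⟩ := keepCnt_surj hm'
          have hlne : l ≠ fx := of_decide_eq_true (List.mem_filter.mp (List.mem_of_getElem? hm')).2
          refine ⟨l, q₁ + 1 + n₀', (Option.some.inj hv).symm, ?_, hlne,
            Or.inr (Or.inr ⟨h', ?_, by omega⟩)⟩
          · have he2 : q₁ + 1 + n₀' = left.length + (n₀' + 1) := by omega
            rw [hwsplit, he2, getrk, List.getElem?_cons_succ]
            exact hn₀
          · rw [hkw_right n₀', hk]
            omega
  -- ordering of decoded positions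
  have hord : ∀ {n n' n₀ n₀' : ℕ},
      ((n < m ∧ keepCnt pne w n₀ = n ∧ n₀ < q₁) ∨
       (n = m + 1 ∧ keepCnt pne w n₀ = m ∧ n₀ = q₁) ∨
       (m + 2 < n ∧ keepCnt pne w n₀ = n - 2 ∧ q₁ < n₀)) →
      ((n' < m ∧ keepCnt pne w n₀' = n' ∧ n₀' < q₁) ∨
       (n' = m + 1 ∧ keepCnt pne w n₀' = m ∧ n₀' = q₁) ∨
       (m + 2 < n' ∧ keepCnt pne w n₀' = n' - 2 ∧ q₁ < n₀')) →
      n < n' → n₀ < n₀' := by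
    intro n n' n₀ n₀' h1 h2 hnn
    apply keepCnt_reflect (p := pne) (w := w)
    rcases h1 with ⟨h1a, h1b, h1c⟩ | ⟨h1a, h1b, h1c⟩ | ⟨h1a, h1b, h1c⟩ <;>
      rcases h2 with ⟨h2a, h2b, h2c⟩ | ⟨h2a, h2b, h2c⟩ | ⟨h2a, h2b, h2c⟩ <;>
      rw [h1b, h2b] <;> omega
  have hzweak : ∀ (n n₀ : ℕ) (l : L),
      ((n < m ∧ keepCnt pne w n₀ = n ∧ n₀ < q₁) ∨
       (n = m + 1 ∧ keepCnt pne w n₀ = m ∧ n₀ = q₁ ∧ l = fy) ∨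
       (m + 2 < n ∧ keepCnt pne w n₀ = n - 2 ∧ q₁ < n₀)) →
      ((n < m ∧ keepCnt pne w n₀ = n ∧ n₀ < q₁) ∨
       (n = m + 1 ∧ keepCnt pne w n₀ = m ∧ n₀ = q₁) ∨
       (m + 2 < n ∧ keepCnt pne w n₀ = n - 2 ∧ q₁ < n₀)) := by
    intro n n₀ l h
    rcases h with h | ⟨h1, h2, h3, _⟩ | h
    · exact Or.inl h
    · exact Or.inr (Or.inl ⟨h1, h2, h3⟩)
    · exact Or.inr (Or.inr h)
  have hval : ∀ (n : ℕ) (v : Lex (L × Bool)), w'[n]? = some v → n = m ∨ n = m + 2 →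
      v = x' := by
    intro n v hv hn
    rcases hn with rfl | rfl
    · rw [hw'm] at hv; exact (Option.some.inj hv).symm
    · rw [hw'm2] at hv; exact (Option.some.inj hv).symm
  have hAvoid : Avoids123 w' := by
    rintro ⟨i, j, k, a, b, c, hij, hjk, hi, hj, hk, hab, hbc⟩
    by_cases hiA : i = m ∨ i = m + 2 <;> by_cases hjA : j = m ∨ j = m + 2 <;>
      by_cases hkA : k = m ∨ k = m + 2
    · rw [hval i a hi hiA, hval j b hj hjA] at hab; exact lt_irrefl _ hab
    · rw [hval i a hi hiA, hval j b hj hjA] at hab; exact lt_irrefl _ hab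
    · rw [hval i a hi hiA] at hab; rw [hval k c hk hkA] at hbc
      exact lt_irrefl _ (hab.trans hbc)
    · -- only i is an artifact
      obtain ⟨l_b, n_b, rfl, hnb, hlbne, hzb⟩ :=
        hdec j b hj (fun h => hjA (Or.inl h)) (fun h => hjA (Or.inr h))
      obtain ⟨l_c, n_c, rfl, hnc, hlcne, hzc⟩ :=
        hdec k c hk (fun h => hkA (Or.inl h)) (fun h => hkA (Or.inr h))
      rw [hval i a hi hiA] at hab
      have hfb : fx < l_b := lt_of_le_of_ne (hxg.mp hab) (Ne.symm hlbne)
      rcases hzb with ⟨hb1, hb2, hb3⟩ | ⟨hb1, hb2, hb3, hb4⟩ | ⟨hb1, hb2, hb3⟩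
      · rcases hiA with rfl | rfl <;> omega
      · subst hb4
        rcases hzc with ⟨hc1, _, _⟩ | ⟨hc1, _, _, _⟩ | ⟨hc1, hc2, hc3⟩
        · omega
        · omega
        · exact factC n_c l_c hc3 hnc (hgg.mp hbc)
      · rcases hzc with ⟨hc1, _, _⟩ | ⟨hc1, _, _, _⟩ | ⟨hc1, hc2, hc3⟩
        · omega
        · omega
        · have hbc' : n_b < n_c :=
            hord (Or.inr (Or.inr ⟨hb1, hb2, hb3⟩)) (Or.inr (Or.inr ⟨hc1, hc2, hc3⟩)) hjk
          exact mk123 hav (show P₁ < n_b by omega) hbc' hP₁ hnb hnc hfb (hgg.mp hbc)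
    · -- j and k artifacts
      rw [hval j b hj hjA, hval k c hk hkA] at hbc; exact lt_irrefl _ hbc
    · -- only j is an artifact
      obtain ⟨l_a, n_a, rfl, hna, hlane, hza⟩ :=
        hdec i a hi (fun h => hiA (Or.inl h)) (fun h => hiA (Or.inr h))
      rw [hval j b hj hjA] at hab
      have hla : l_a < fx := hgx.mp hab
      rcases hza with ⟨ha1, ha2, ha3⟩ | ⟨ha1, ha2, ha3, ha4⟩ | ⟨ha1, ha2, ha3⟩
      · exact lt_asymm hla (factA n_a l_a ha3 hna hlane)
      · subst ha4; exact lt_asymm hlt hla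
      · rcases hjA with rfl | rfl <;> omega
    · -- only k is an artifact
      obtain ⟨l_b, n_b, rfl, hnb, hlbne, hzb⟩ :=
        hdec j b hj (fun h => hjA (Or.inl h)) (fun h => hjA (Or.inr h))
      rw [hval k c hk hkA] at hbc
      have hlb : l_b < fx := hgx.mp hbc
      rcases hzb with ⟨hb1, hb2, hb3⟩ | ⟨hb1, hb2, hb3, hb4⟩ | ⟨hb1, hb2, hb3⟩
      · exact lt_asymm hlb (factA n_b l_b hb3 hnb hlbne)
      · subst hb4; exact lt_asymm hlt hlb
      · rcases hkA with rfl | rfl <;> omega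
    · -- no artifacts
      obtain ⟨l_a, n_a, rfl, hna, hlane, hza⟩ :=
        hdec i a hi (fun h => hiA (Or.inl h)) (fun h => hiA (Or.inr h))
      obtain ⟨l_b, n_b, rfl, hnb, hlbne, hzb⟩ :=
        hdec j b hj (fun h => hjA (Or.inl h)) (fun h => hjA (Or.inr h))
      obtain ⟨l_c, n_c, rfl, hnc, hlcne, hzc⟩ :=
        hdec k c hk (fun h => hkA (Or.inl h)) (fun h => hkA (Or.inr h))
      have h1 : n_a < n_b := hord (hzweak _ _ _ hza) (hzweak _ _ _ hzb) hij
      have h2 : n_b < n_c := hord (hzweak _ _ _ hzb) (hzweak _ _ _ hzc) hjk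
      exact mk123 hav h1 h2 hna hnb hnc (hgg.mp hab) (hgg.mp hbc)
  set t₀ := keepCnt pne right s₀ with ht₀
  have occX : ∀ n : ℕ, w'[n]? = some x' → n = m ∨ n = m + 2 := by
    intro n hn
    by_contra hc
    push_neg at hc
    obtain ⟨l, n₀, hlx, _, _, _⟩ := hdec n x' hn hc.1 hc.2
    exact hgnex l hlx.symm
  have occY : ∀ n : ℕ, w'[n]? = some (g fy) → n = m + 1 ∨ n = m + 3 + t₀ := by
    intro n hn
    by_cases hn1 : n = m ∨ n = m + 2
    · exact absurd (hval n _ hn hn1) (hgnex fy)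
    · push_neg at hn1
      obtain ⟨l, n₀, hly, hn₀, hlne, hz⟩ := hdec n (g fy) hn hn1.1 hn1.2
      have hlfy : l = fy := (hginj hly).symm
      subst hlfy
      rcases hz with ⟨hz1, hz2, hz3⟩ | ⟨hz1, _, _, _⟩ | ⟨hz1, hz2, hz3⟩
      · exfalso
        rcases hyocc n₀ hn₀ with rfl | rfl <;> omega
      · exact Or.inl hz1
      · rcases hyocc n₀ hn₀ with rfl | rfl
        · omega
        · right
          rw [hq₂def] at hz2
          have hkr := hkw_right s₀
          omega
  have hget_t : w'[m + 3 + t₀]? = some (g fy) := by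
    have h1 : B₀[t₀]? = some fy := by
      rw [hB₀, ht₀]; exact keepCnt_get hs₀ hpfy
    have h2 : w'[m + 3 + t₀]? = B[t₀]? := by
      rw [hw', hm, show A.length + 3 + t₀ = A.length + (t₀ + 3) from by omega, getrk]
      simp only [List.getElem?_cons_succ]
    rw [h2, hB, List.getElem?_map, h1]
    rfl
  have hAxy' : Alternates w' x' (g fy) := by
    constructor
    · intro i j hij hi hj
      rcases occX i hi with rfl | rfl <;> rcases occX j hj with rfl | rfl <;> try omega
      exact ⟨m + 1, by omega, by omega, hw'm1⟩
    · intro i j hij hi hj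
      rcases occY i hi with rfl | rfl <;> rcases occY j hj with rfl | rfl <;> try omega
      exact ⟨m + 2, by omega, by omega, hw'm2⟩
  have hnone : ∀ u : V, u ≠ vx → u ≠ vy → ¬ Alternates w' x' (g (f u)) := by
    intro u h1 h2 hAlt
    obtain ⟨k, hk1, hk2, hk3⟩ := hAlt.1 m (m + 2) (by omega) hw'm hw'm2
    have hk' : k = m + 1 := by omega
    subst hk'
    rw [hw'm1] at hk3
    exact h2 (hf (hginj (Option.some.inj hk3))).symm
  set f' : V → Lex (L × Bool) := fun v => if v = vx then x' else g (f v) with hf'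
  have hf'x : f' vx = x' := by simp [hf']
  have hf'o : ∀ v : V, v ≠ vx → f' v = g (f v) := by intro v hv; simp [hf', hv]
  have hpfv : ∀ v : V, v ≠ vx → pne (f v) = true :=
    fun v hv => decide_eq_true (fun h => hv (hf h))
  have hchain : ∀ y z : V, y ≠ vx → z ≠ vx → y ≠ z →
      (Alternates w' (g (f y)) (g (f z)) ↔ Alternates w (f y) (f z)) := by
    intro y z hy hz hyz
    have hfyz : f y ≠ f z := fun h => hyz (hf h)
    have hmap : (w.filter pne).map g = A ++ g fy :: B := by
      rw [hwsplit, List.filter_append, List.filter_cons_of_pos hpfy, List.map_append,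
        List.map_cons, hA, hB, hA₀, hB₀]
    have h1 := alternates_insert2 (A := A) (B := B) (y₀ := g fy) (e := x')
      (a := g (f y)) (b := g (f z)) (fun h => hfyz (hginj h))
      (Ne.symm (hgnex _)) (Ne.symm (hgnex _))
    rw [hw', ← h1, ← hmap, alternates_map hginj hfyz,
      alternates_filter hfyz (hpfv y hy) (hpfv z hz)]
  refine ⟨f', w', ?_, hAvoid, ⟨?_, ?_, ?_⟩, ?_⟩
  · intro u v h
    by_cases hu : u = vx <;> by_cases hv : v = vx
    · rw [hu, hv]
    · rw [hu, hf'x, hf'o v hv] at h; exact absurd h.symm (hgnex _)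
    · rw [hv, hf'x, hf'o u hu] at h; exact absurd h (hgnex _)
    · rw [hf'o u hu, hf'o v hv] at h; exact hf (hginj h)
  · intro l' hl'
    rw [hw'] at hl'
    rcases List.mem_append.mp hl' with hl' | hl'
    · rw [hA] at hl'
      obtain ⟨l, hlmem, rfl⟩ := List.mem_map.mp hl'
      rw [hA₀] at hlmem
      have hlw : l ∈ w := by
        rw [hwsplit]
        exact List.mem_append.mpr (Or.inl (List.mem_filter.mp hlmem).1)
      have hlnx : l ≠ fx := of_decide_eq_true (List.mem_filter.mp hlmem).2
      obtain ⟨v, rfl⟩ := hrep.1 l hlw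
      exact ⟨v, hf'o v (fun h => hlnx (by rw [h]))⟩
    rcases List.mem_cons.mp hl' with rfl | hl'
    · exact ⟨vx, hf'x⟩
    rcases List.mem_cons.mp hl' with rfl | hl'
    · exact ⟨vy, by rw [hf'o vy (Ne.symm hvxy)]⟩
    rcases List.mem_cons.mp hl' with rfl | hl'
    · exact ⟨vx, hf'x⟩
    · rw [hB] at hl'
      obtain ⟨l, hlmem, rfl⟩ := List.mem_map.mp hl'
      rw [hB₀] at hlmem
      have hlw : l ∈ w := by
        rw [hwsplit]
        exact List.mem_append.mpr (Or.inr (List.mem_cons_of_mem _ (List.mem_filter.mp hlmem).1))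
      have hlnx : l ≠ fx := of_decide_eq_true (List.mem_filter.mp hlmem).2
      obtain ⟨v, rfl⟩ := hrep.1 l hlw
      exact ⟨v, hf'o v (fun h => hlnx (by rw [h]))⟩
  · intro v
    by_cases hv : v = vx
    · rw [hv, hf'x, hw']
      exact List.mem_append.mpr (Or.inr (List.mem_cons_self))
    · rw [hf'o v hv, hw']
      have hfv : f v ∈ w := hrep.2.1 v
      rw [hwsplit] at hfv
      rcases List.mem_append.mp hfv with hmem | hmem
      · refine List.mem_append.mpr (Or.inl ?_)
        rw [hA, hA₀]
        exact List.mem_map_of_mem (f := g) (List.mem_filter.mpr ⟨hmem, hpfv v hv⟩)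
      · rcases List.mem_cons.mp hmem with heq | hmem
        · refine List.mem_append.mpr (Or.inr ?_)
          rw [heq]
          exact List.mem_cons_of_mem _ (List.mem_cons_self)
        · refine List.mem_append.mpr (Or.inr ?_)
          refine List.mem_cons_of_mem _ (List.mem_cons_of_mem _ (List.mem_cons_of_mem _ ?_))
          rw [hB, hB₀]
          exact List.mem_map_of_mem (f := g) (List.mem_filter.mpr ⟨hmem, hpfv v hv⟩)
  · intro y z hyz
    by_cases hy : y = vx
    · subst hy
      by_cases hz : z = vy
      · rw [hz, hf'x, hf'o vy (Ne.symm hvxy)]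
        exact ⟨fun _ => hadj, fun _ => hAxy'⟩
      · rw [hf'x, hf'o z (Ne.symm hyz)]
        constructor
        · intro hAlt; exact absurd hAlt (hnone z (Ne.symm hyz) hz)
        · intro hAdj; exact absurd (huX z hAdj) hz
    · by_cases hz : z = vx
      · subst hz
        by_cases hy2 : y = vy
        · rw [hy2, hf'x, hf'o vy (Ne.symm hvxy)]
          exact ⟨fun _ => G.adj_symm hadj, fun _ => alternates_comm.mp hAxy'⟩
        · rw [hf'x, hf'o y hy]
          constructor
          · intro hAlt; exact absurd (alternates_comm.mp hAlt) (hnone y hy hy2)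
          · intro hAdj; exact absurd (huX y (G.adj_symm hAdj)) hy2
      · rw [hf'o y hy, hf'o z hz, hchain y z hy hz hyz]
        exact hrep.2.2 y z hyz
  · have hfl := length_filter_ne w fx
    rw [← hpne] at hfl
    have hsplitlen : (w.filter pne).length = A₀.length + (1 + B₀.length) := by
      rw [hwsplit, List.filter_append, List.filter_cons_of_pos hpfy, hA₀, hB₀]
      simp only [List.length_append, List.length_cons]
      omega
    have hAl : A.length = A₀.length := by rw [hA, List.length_map]
    have hBl : B.length = B₀.length := by rw [hB, List.length_map]
    have hw'l : w'.length = A.length + (3 + B.length) := by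
      rw [hw']
      simp only [List.length_append, List.length_cons]
      omega
    omega

end GraphHug

section GraphHugLow

variable {V : Type*} {L : Type} [LinearOrder L] {G : SimpleGraph V} {f : V → L} {w : List L}

/-- The hug surgery, when the letter of `vx` is larger than the letter of `vy`. -/
lemma surgery_hug_low (hf : Function.Injective f) (hav : Avoids123 w)
    (hrep : RepresentsLab G f w) {vx vy : V} (hadj : G.Adj vx vy)
    (huX : ∀ u : V, G.Adj vx u → u = vy)
    (hx3 : 3 ≤ w.count (f vx)) (hy2 : w.count (f vy) = 2) (hlt : f vy < f vx) :
    ∃ (f' : V → Lex (L × Bool)) (w' : List (Lex (L × Bool))), Function.Injective f' ∧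
      Avoids123 w' ∧ RepresentsLab G f' w' ∧ w'.length < w.length := by
  classical
  have hvxy : vx ≠ vy := G.ne_of_adj hadj
  set fx := f vx with hfx
  set fy := f vy with hfy
  have hfxy : fx ≠ fy := (ne_of_lt hlt).symm
  -- decompose w at the last occurrence of fy
  obtain ⟨left, right, hwsplit, hfyr⟩ := exists_last_split (hrep.2.1 vy)
  set q₂ := left.length with hq₂def
  have hcnt1 : left.count fy = 1 := by
    have h1 : w.count fy = left.count fy + (right.count fy + 1) := by
      rw [hwsplit, List.count_append, List.count_cons_self]
    have h2 : right.count fy = 0 := List.count_eq_zero.mpr hfyr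
    omega
  obtain ⟨s₀, hs₀, hs₀u⟩ := count_eq_one_unique hcnt1
  set q₁ := s₀ with hq₁def
  have hq12 : q₁ < q₂ := by
    have := (List.getElem?_eq_some_iff.mp hs₀).1
    omega
  have hq₁get : w[q₁]? = some fy := by
    rw [hwsplit, getl (by omega : q₁ < left.length)]
    exact hs₀
  have hq₂get : w[q₂]? = some fy := by
    rw [hwsplit, hq₂def, getr0]
    exact List.getElem?_cons_zero
  have hyocc : ∀ n : ℕ, w[n]? = some fy → n = q₁ ∨ n = q₂ := by
    intro n hn
    rcases lt_trichotomy n q₂ with h | h | h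
    · left
      rw [hwsplit, getl (by omega : n < left.length)] at hn
      exact hs₀u _ hn
    · exact Or.inr h
    · exfalso
      have he : n = left.length + (n - q₂ - 1 + 1) := by omega
      rw [hwsplit, he, getrk, List.getElem?_cons_succ] at hn
      exact hfyr (List.mem_of_getElem? hn)
  obtain ⟨P₁, P₂, P₃, h12, h23, hP₁, hP₂, hP₃⟩ := exists_three_of_count hx3
  have hAxy : Alternates w fx fy := (hrep.2.2 vx vy hvxy).mpr hadj
  obtain ⟨hP1q, hq1P2, hP2q, hq2P3⟩ := xy_struct hAxy hq12 hyocc h12 h23 hP₁ hP₂ hP₃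
  -- structural fact from 123-avoidance
  have factB : ∀ (n : ℕ) (l : L), q₂ < n → w[n]? = some l → l ≠ fx → l < fx := by
    intro n l hn hl hne
    rcases lt_or_gt_of_ne hne with h | h
    · exact h
    · exact (mk123 hav (show q₁ < P₂ by omega) (show P₂ < n by omega)
        hq₁get hP₂ hl hlt h).elim
  -- the new word
  set g : L → Lex (L × Bool) := fun l => toLex (l, false) with hg
  set x' : Lex (L × Bool) := toLex (fx, true) with hx'
  set pne : L → Bool := fun l => decide (l ≠ fx) with hpne
  set A₀ : List L := left.filter pne with hA₀
  set B₀ : List L := right.filter pne with hB₀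
  set A : List (Lex (L × Bool)) := A₀.map g with hA
  set B : List (Lex (L × Bool)) := B₀.map g with hB
  set m := A.length with hm
  set w' : List (Lex (L × Bool)) := A ++ x' :: g fy :: x' :: B with hw'
  have hginj : Function.Injective g := fun a b h => by
    have := toLex.injective h
    exact congrArg Prod.fst this
  have hgnex : ∀ l : L, g l ≠ x' := by
    intro l h
    have := toLex.injective h
    simp [hg, hx'] at this
  have hgg : ∀ {l l' : L}, g l < g l' ↔ l < l' := by
    intro l l'
    change toLex (l, false) < toLex (l', false) ↔ _
    rw [Prod.Lex.lt_iff]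
    simp
  have hgx : ∀ {l : L}, g l < x' ↔ l ≤ fx := by
    intro l
    change toLex (l, false) < toLex (fx, true) ↔ _
    rw [Prod.Lex.lt_iff]
    constructor
    · rintro (h | ⟨h, _⟩)
      · exact le_of_lt h
      · exact le_of_eq h
    · intro h
      rcases lt_or_eq_of_le h with h' | h'
      · exact Or.inl h'
      · exact Or.inr ⟨h', by simp⟩
  have hxg : ∀ {l : L}, x' < g l ↔ fx < l := by
    intro l
    change toLex (fx, true) < toLex (l, false) ↔ _
    rw [Prod.Lex.lt_iff]
    simp
  have hpfy : pne fy = true := decide_eq_true (Ne.symm hfxy)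
  have hm₀ : A₀.length = m := by rw [hm, hA, List.length_map]
  have hw'm : w'[m]? = some x' := by
    rw [hw', hm, getr0]
    exact List.getElem?_cons_zero
  have hw'm1 : w'[m + 1]? = some (g fy) := by
    rw [hw', hm, getrk, List.getElem?_cons_succ]
    exact List.getElem?_cons_zero
  have hw'm2 : w'[m + 2]? = some x' := by
    rw [hw', hm, getrk, List.getElem?_cons_succ, List.getElem?_cons_succ]
    exact List.getElem?_cons_zero
  have hkw_left : ∀ n₀ : ℕ, n₀ ≤ q₂ → keepCnt pne w n₀ = keepCnt pne left n₀ := by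
    intro n₀ h
    unfold keepCnt
    rw [hwsplit, List.take_append_of_le_length (by omega)]
  have hkw_q2 : keepCnt pne w q₂ = m := by
    unfold keepCnt
    rw [hwsplit, hq₂def, List.take_left, ← hm₀, hA₀]
  have hkw_right : ∀ d : ℕ, keepCnt pne w (q₂ + 1 + d) = m + 1 + keepCnt pne right d := by
    intro d
    unfold keepCnt
    have he : q₂ + 1 + d = left.length + (1 + d) := by omega
    rw [hwsplit, he, List.take_length_add_append, List.filter_append]
    rw [show (fy :: right).take (1 + d) = fy :: right.take d from by
      rw [Nat.add_comm]; rfl]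
    rw [List.filter_cons_of_pos hpfy]
    simp only [List.length_append, List.length_cons]
    rw [← hA₀, hm₀]
    omega
  have hdec : ∀ (n : ℕ) (v : Lex (L × Bool)), w'[n]? = some v → n ≠ m → n ≠ m + 2 →
      ∃ (l : L) (n₀ : ℕ), v = g l ∧ w[n₀]? = some l ∧ l ≠ fx ∧
        ((n < m ∧ keepCnt pne w n₀ = n ∧ n₀ < q₂) ∨
         (n = m + 1 ∧ keepCnt pne w n₀ = m ∧ n₀ = q₂ ∧ l = fy) ∨
         (m + 2 < n ∧ keepCnt pne w n₀ = n - 2 ∧ q₂ < n₀)) := by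
    intro n v hv hn1 hn2
    rcases lt_trichotomy n m with h | h | h
    · rw [hw', getl (by omega : n < A.length)] at hv
      rw [hA, List.getElem?_map] at hv
      cases hm' : A₀[n]? with
      | none => rw [hm'] at hv; simp at hv
      | some l =>
        rw [hm'] at hv
        simp only [Option.map_some] at hv
        rw [hA₀] at hm'
        obtain ⟨n₀, hn₀, hk⟩ := keepCnt_surj hm'
        have hlt₀ : n₀ < left.length := (List.getElem?_eq_some_iff.mp hn₀).1
        have hlne : l ≠ fx := of_decide_eq_true (List.mem_filter.mp (List.mem_of_getElem? hm')).2
        refine ⟨l, n₀, (Option.some.inj hv).symm, ?_, hlne, Or.inl ⟨h, ?_, by omega⟩⟩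
        · rw [hwsplit, getl hlt₀]
          exact hn₀
        · rw [hkw_left n₀ (by omega)]
          exact hk
    · omega
    · rcases (by omega : n = m + 1 ∨ m + 2 < n) with h' | h'
      · subst h'
        rw [hw'm1] at hv
        exact ⟨fy, q₂, (Option.some.inj hv).symm, hq₂get, Ne.symm hfxy,
          Or.inr (Or.inl ⟨rfl, hkw_q2, rfl, rfl⟩)⟩
      · have he : n = A.length + (n - m - 3 + 3) := by omega
        rw [hw', he, getrk] at hv
        simp only [List.getElem?_cons_succ] at hv
        rw [hB, List.getElem?_map] at hv
        cases hm' : B₀[n - m - 3]? with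
        | none => rw [hm'] at hv; simp at hv
        | some l =>
          rw [hm'] at hv
          simp only [Option.map_some] at hv
          rw [hB₀] at hm'
          obtain ⟨n₀', hn₀, hk⟩ := keepCnt_surj hm'
          have hlne : l ≠ fx := of_decide_eq_true (List.mem_filter.mp (List.mem_of_getElem? hm')).2
          refine ⟨l, q₂ + 1 + n₀', (Option.some.inj hv).symm, ?_, hlne,
            Or.inr (Or.inr ⟨h', ?_, by omega⟩)⟩
          · have he2 : q₂ + 1 + n₀' = left.length + (n₀' + 1) := by omega
            rw [hwsplit, he2, getrk, List.getElem?_cons_succ]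
            exact hn₀
          · rw [hkw_right n₀', hk]
            omega
  have hord : ∀ {n n' n₀ n₀' : ℕ},
      ((n < m ∧ keepCnt pne w n₀ = n ∧ n₀ < q₂) ∨
       (n = m + 1 ∧ keepCnt pne w n₀ = m ∧ n₀ = q₂) ∨
       (m + 2 < n ∧ keepCnt pne w n₀ = n - 2 ∧ q₂ < n₀)) →
      ((n' < m ∧ keepCnt pne w n₀' = n' ∧ n₀' < q₂) ∨
       (n' = m + 1 ∧ keepCnt pne w n₀' = m ∧ n₀' = q₂) ∨
       (m + 2 < n' ∧ keepCnt pne w n₀' = n' - 2 ∧ q₂ < n₀')) →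
      n < n' → n₀ < n₀' := by
    intro n n' n₀ n₀' h1 h2 hnn
    apply keepCnt_reflect (p := pne) (w := w)
    rcases h1 with ⟨h1a, h1b, h1c⟩ | ⟨h1a, h1b, h1c⟩ | ⟨h1a, h1b, h1c⟩ <;>
      rcases h2 with ⟨h2a, h2b, h2c⟩ | ⟨h2a, h2b, h2c⟩ | ⟨h2a, h2b, h2c⟩ <;>
      rw [h1b, h2b] <;> omega
  have hzweak : ∀ (n n₀ : ℕ) (l : L),
      ((n < m ∧ keepCnt pne w n₀ = n ∧ n₀ < q₂) ∨
       (n = m + 1 ∧ keepCnt pne w n₀ = m ∧ n₀ = q₂ ∧ l = fy) ∨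
       (m + 2 < n ∧ keepCnt pne w n₀ = n - 2 ∧ q₂ < n₀)) →
      ((n < m ∧ keepCnt pne w n₀ = n ∧ n₀ < q₂) ∨
       (n = m + 1 ∧ keepCnt pne w n₀ = m ∧ n₀ = q₂) ∨
       (m + 2 < n ∧ keepCnt pne w n₀ = n - 2 ∧ q₂ < n₀)) := by
    intro n n₀ l h
    rcases h with h | ⟨h1, h2, h3, _⟩ | h
    · exact Or.inl h
    · exact Or.inr (Or.inl ⟨h1, h2, h3⟩)
    · exact Or.inr (Or.inr h)
  have hval : ∀ (n : ℕ) (v : Lex (L × Bool)), w'[n]? = some v → n = m ∨ n = m + 2 →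
      v = x' := by
    intro n v hv hn
    rcases hn with rfl | rfl
    · rw [hw'm] at hv; exact (Option.some.inj hv).symm
    · rw [hw'm2] at hv; exact (Option.some.inj hv).symm
  have hAvoid : Avoids123 w' := by
    rintro ⟨i, j, k, a, b, c, hij, hjk, hi, hj, hk, hab, hbc⟩
    by_cases hiA : i = m ∨ i = m + 2 <;> by_cases hjA : j = m ∨ j = m + 2 <;>
      by_cases hkA : k = m ∨ k = m + 2
    · rw [hval i a hi hiA, hval j b hj hjA] at hab; exact lt_irrefl _ hab
    · rw [hval i a hi hiA, hval j b hj hjA] at hab; exact lt_irrefl _ hab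
    · rw [hval i a hi hiA] at hab; rw [hval k c hk hkA] at hbc
      exact lt_irrefl _ (hab.trans hbc)
    · -- only i is an artifact : x' in role a
      obtain ⟨l_b, n_b, rfl, hnb, hlbne, hzb⟩ :=
        hdec j b hj (fun h => hjA (Or.inl h)) (fun h => hjA (Or.inr h))
      rw [hval i a hi hiA] at hab
      have hfb : fx < l_b := hxg.mp hab
      rcases hzb with ⟨hb1, hb2, hb3⟩ | ⟨hb1, hb2, hb3, hb4⟩ | ⟨hb1, hb2, hb3⟩
      · rcases hiA with rfl | rfl <;> omega
      · subst hb4; exact lt_asymm hlt hfb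
      · exact lt_irrefl _ (hfb.trans (factB n_b l_b hb3 hnb hlbne))
    · -- j and k artifacts
      rw [hval j b hj hjA, hval k c hk hkA] at hbc; exact lt_irrefl _ hbc
    · -- only j is an artifact : x' in role b
      obtain ⟨l_c, n_c, rfl, hnc, hlcne, hzc⟩ :=
        hdec k c hk (fun h => hkA (Or.inl h)) (fun h => hkA (Or.inr h))
      rw [hval j b hj hjA] at hbc
      have hfc : fx < l_c := hxg.mp hbc
      rcases hzc with ⟨hc1, hc2, hc3⟩ | ⟨hc1, hc2, hc3, hc4⟩ | ⟨hc1, hc2, hc3⟩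
      · rcases hjA with rfl | rfl <;> omega
      · subst hc4; exact lt_asymm hlt hfc
      · exact lt_irrefl _ (hfc.trans (factB n_c l_c hc3 hnc hlcne))
    · -- only k is an artifact : x' in role c
      obtain ⟨l_a, n_a, rfl, hna, hlane, hza⟩ :=
        hdec i a hi (fun h => hiA (Or.inl h)) (fun h => hiA (Or.inr h))
      obtain ⟨l_b, n_b, rfl, hnb, hlbne, hzb⟩ :=
        hdec j b hj (fun h => hjA (Or.inl h)) (fun h => hjA (Or.inr h))
      have hlb : l_b < fx := by
        rw [hval k c hk hkA] at hbc
        exact lt_of_le_of_ne (hgx.mp hbc) hlbne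
      have hlab : l_a < l_b := hgg.mp hab
      rcases hzb with ⟨hb1, hb2, hb3⟩ | ⟨hb1, hb2, hb3, hb4⟩ | ⟨hb1, hb2, hb3⟩
      · -- j in the left zone
        have h1 : n_a < n_b := by
          rcases hza with ⟨ha1, ha2, ha3⟩ | ⟨ha1, ha2, ha3, ha4⟩ | ⟨ha1, ha2, ha3⟩
          · exact hord (Or.inl ⟨ha1, ha2, ha3⟩) (Or.inl ⟨hb1, hb2, hb3⟩) hij
          · omega
          · omega
        exact mk123 hav h1 (show n_b < P₃ by omega) hna hnb hP₃ hlab hlb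
      · -- j = m+1, so b is the hugged occurrence of fy
        subst hb4
        have ha' : n_a < q₂ := by
          rcases hza with ⟨ha1, ha2, ha3⟩ | ⟨ha1, ha2, ha3, ha4⟩ | ⟨ha1, ha2, ha3⟩
          · exact ha3
          · omega
          · omega
        exact mk123 hav ha' (show q₂ < P₃ by omega) hna hq₂get hP₃ hlab hlb
      · rcases hkA with rfl | rfl <;> omega
    · -- no artifacts
      obtain ⟨l_a, n_a, rfl, hna, hlane, hza⟩ :=
        hdec i a hi (fun h => hiA (Or.inl h)) (fun h => hiA (Or.inr h))
      obtain ⟨l_b, n_b, rfl, hnb, hlbne, hzb⟩ :=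
        hdec j b hj (fun h => hjA (Or.inl h)) (fun h => hjA (Or.inr h))
      obtain ⟨l_c, n_c, rfl, hnc, hlcne, hzc⟩ :=
        hdec k c hk (fun h => hkA (Or.inl h)) (fun h => hkA (Or.inr h))
      have h1 : n_a < n_b := hord (hzweak _ _ _ hza) (hzweak _ _ _ hzb) hij
      have h2 : n_b < n_c := hord (hzweak _ _ _ hzb) (hzweak _ _ _ hzc) hjk
      exact mk123 hav h1 h2 hna hnb hnc (hgg.mp hab) (hgg.mp hbc)
  set t₀ := keepCnt pne left s₀ with ht₀
  have ht₀m : t₀ < m := by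
    have h1 := keepCnt_lt_len hs₀ hpfy
    rw [← hA₀, hm₀] at h1
    exact h1
  have occX : ∀ n : ℕ, w'[n]? = some x' → n = m ∨ n = m + 2 := by
    intro n hn
    by_contra hc
    push_neg at hc
    obtain ⟨l, n₀, hlx, _, _, _⟩ := hdec n x' hn hc.1 hc.2
    exact hgnex l hlx.symm
  have occY : ∀ n : ℕ, w'[n]? = some (g fy) → n = t₀ ∨ n = m + 1 := by
    intro n hn
    by_cases hn1 : n = m ∨ n = m + 2
    · exact absurd (hval n _ hn hn1) (hgnex fy)
    · push_neg at hn1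
      obtain ⟨l, n₀, hly, hn₀, hlne, hz⟩ := hdec n (g fy) hn hn1.1 hn1.2
      have hlfy : l = fy := (hginj hly).symm
      subst hlfy
      rcases hz with ⟨hz1, hz2, hz3⟩ | ⟨hz1, _, _, _⟩ | ⟨hz1, hz2, hz3⟩
      · left
        rcases hyocc n₀ hn₀ with h | h
        · have hkl := hkw_left n₀ (le_of_lt hz3)
          have he : keepCnt pne left n₀ = t₀ := by rw [h, ht₀, hq₁def]
          omega
        · exact absurd hz3 (by rw [h]; exact lt_irrefl _)
      · exact Or.inr hz1
      · exfalso
        rcases hyocc n₀ hn₀ with h | h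
        · exact absurd hz3 (by rw [h]; omega)
        · exact absurd hz3 (by rw [h]; exact lt_irrefl _)
  have hget_t : w'[t₀]? = some (g fy) := by
    have h1 : A₀[t₀]? = some fy := by
      rw [hA₀, ht₀]; exact keepCnt_get hs₀ hpfy
    rw [hw', getl (by omega : t₀ < A.length), hA, List.getElem?_map, h1]
    rfl
  have hAxy' : Alternates w' x' (g fy) := by
    constructor
    · intro i j hij hi hj
      rcases occX i hi with rfl | rfl <;> rcases occX j hj with rfl | rfl <;> try omega
      exact ⟨m + 1, by omega, by omega, hw'm1⟩
    · intro i j hij hi hj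
      rcases occY i hi with rfl | rfl <;> rcases occY j hj with rfl | rfl <;> try omega
      exact ⟨m, by omega, by omega, hw'm⟩
  have hnone : ∀ u : V, u ≠ vx → u ≠ vy → ¬ Alternates w' x' (g (f u)) := by
    intro u h1 h2 hAlt
    obtain ⟨k, hk1, hk2, hk3⟩ := hAlt.1 m (m + 2) (by omega) hw'm hw'm2
    have hk' : k = m + 1 := by omega
    subst hk'
    rw [hw'm1] at hk3
    exact h2 (hf (hginj (Option.some.inj hk3))).symm
  set f' : V → Lex (L × Bool) := fun v => if v = vx then x' else g (f v) with hf'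
  have hf'x : f' vx = x' := by simp [hf']
  have hf'o : ∀ v : V, v ≠ vx → f' v = g (f v) := by intro v hv; simp [hf', hv]
  have hpfv : ∀ v : V, v ≠ vx → pne (f v) = true :=
    fun v hv => decide_eq_true (fun h => hv (hf h))
  have hchain : ∀ y z : V, y ≠ vx → z ≠ vx → y ≠ z →
      (Alternates w' (g (f y)) (g (f z)) ↔ Alternates w (f y) (f z)) := by
    intro y z hy hz hyz
    have hfyz : f y ≠ f z := fun h => hyz (hf h)
    have hmap : (w.filter pne).map g = A ++ g fy :: B := by
      rw [hwsplit, List.filter_append, List.filter_cons_of_pos hpfy, List.map_append,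
        List.map_cons, hA, hB, hA₀, hB₀]
    have h1 := alternates_insert2 (A := A) (B := B) (y₀ := g fy) (e := x')
      (a := g (f y)) (b := g (f z)) (fun h => hfyz (hginj h))
      (Ne.symm (hgnex _)) (Ne.symm (hgnex _))
    rw [hw', ← h1, ← hmap, alternates_map hginj hfyz,
      alternates_filter hfyz (hpfv y hy) (hpfv z hz)]
  refine ⟨f', w', ?_, hAvoid, ⟨?_, ?_, ?_⟩, ?_⟩
  · intro u v h
    by_cases hu : u = vx <;> by_cases hv : v = vx
    · rw [hu, hv]
    · rw [hu, hf'x, hf'o v hv] at h; exact absurd h.symm (hgnex _)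
    · rw [hv, hf'x, hf'o u hu] at h; exact absurd h (hgnex _)
    · rw [hf'o u hu, hf'o v hv] at h; exact hf (hginj h)
  · intro l' hl'
    rw [hw'] at hl'
    rcases List.mem_append.mp hl' with hl' | hl'
    · rw [hA] at hl'
      obtain ⟨l, hlmem, rfl⟩ := List.mem_map.mp hl'
      rw [hA₀] at hlmem
      have hlw : l ∈ w := by
        rw [hwsplit]
        exact List.mem_append.mpr (Or.inl (List.mem_filter.mp hlmem).1)
      have hlnx : l ≠ fx := of_decide_eq_true (List.mem_filter.mp hlmem).2
      obtain ⟨v, rfl⟩ := hrep.1 l hlw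
      exact ⟨v, hf'o v (fun h => hlnx (by rw [h]))⟩
    rcases List.mem_cons.mp hl' with rfl | hl'
    · exact ⟨vx, hf'x⟩
    rcases List.mem_cons.mp hl' with rfl | hl'
    · exact ⟨vy, by rw [hf'o vy (Ne.symm hvxy)]⟩
    rcases List.mem_cons.mp hl' with rfl | hl'
    · exact ⟨vx, hf'x⟩
    · rw [hB] at hl'
      obtain ⟨l, hlmem, rfl⟩ := List.mem_map.mp hl'
      rw [hB₀] at hlmem
      have hlw : l ∈ w := by
        rw [hwsplit]
        exact List.mem_append.mpr (Or.inr (List.mem_cons_of_mem _ (List.mem_filter.mp hlmem).1))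
      have hlnx : l ≠ fx := of_decide_eq_true (List.mem_filter.mp hlmem).2
      obtain ⟨v, rfl⟩ := hrep.1 l hlw
      exact ⟨v, hf'o v (fun h => hlnx (by rw [h]))⟩
  · intro v
    by_cases hv : v = vx
    · rw [hv, hf'x, hw']
      exact List.mem_append.mpr (Or.inr (List.mem_cons_self))
    · rw [hf'o v hv, hw']
      have hfv : f v ∈ w := hrep.2.1 v
      rw [hwsplit] at hfv
      rcases List.mem_append.mp hfv with hmem | hmem
      · refine List.mem_append.mpr (Or.inl ?_)
        rw [hA, hA₀]
        exact List.mem_map_of_mem (f := g) (List.mem_filter.mpr ⟨hmem, hpfv v hv⟩)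
      · rcases List.mem_cons.mp hmem with heq | hmem
        · refine List.mem_append.mpr (Or.inr ?_)
          rw [heq]
          exact List.mem_cons_of_mem _ (List.mem_cons_self)
        · refine List.mem_append.mpr (Or.inr ?_)
          refine List.mem_cons_of_mem _ (List.mem_cons_of_mem _ (List.mem_cons_of_mem _ ?_))
          rw [hB, hB₀]
          exact List.mem_map_of_mem (f := g) (List.mem_filter.mpr ⟨hmem, hpfv v hv⟩)
  · intro y z hyz
    by_cases hy : y = vx
    · subst hy
      by_cases hz : z = vy
      · rw [hz, hf'x, hf'o vy (Ne.symm hvxy)]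
        exact ⟨fun _ => hadj, fun _ => hAxy'⟩
      · rw [hf'x, hf'o z (Ne.symm hyz)]
        constructor
        · intro hAlt; exact absurd hAlt (hnone z (Ne.symm hyz) hz)
        · intro hAdj; exact absurd (huX z hAdj) hz
    · by_cases hz : z = vx
      · subst hz
        by_cases hy2 : y = vy
        · rw [hy2, hf'x, hf'o vy (Ne.symm hvxy)]
          exact ⟨fun _ => G.adj_symm hadj, fun _ => alternates_comm.mp hAxy'⟩
        · rw [hf'x, hf'o y hy]
          constructor
          · intro hAlt; exact absurd (alternates_comm.mp hAlt) (hnone y hy hy2)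
          · intro hAdj; exact absurd (huX y (G.adj_symm hAdj)) hy2
      · rw [hf'o y hy, hf'o z hz, hchain y z hy hz hyz]
        exact hrep.2.2 y z hyz
  · have hfl := length_filter_ne w fx
    rw [← hpne] at hfl
    have hsplitlen : (w.filter pne).length = A₀.length + (1 + B₀.length) := by
      rw [hwsplit, List.filter_append, List.filter_cons_of_pos hpfy, hA₀, hB₀]
      simp only [List.length_append, List.length_cons]
      omega
    have hAl : A.length = A₀.length := by rw [hA, List.length_map]
    have hBl : B.length = B₀.length := by rw [hB, List.length_map]
    have hw'l : w'.length = A.length + (3 + B.length) := by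
      rw [hw']
      simp only [List.length_append, List.length_cons]
      omega
    omega

end GraphHugLow

lemma main_ind {V : Type*} (G : SimpleGraph V) :
    ∀ (n : ℕ) (L : Type) (inst : LinearOrder L) (f : V → L), Function.Injective f →
      ∀ w : List L, w.length ≤ n → @Avoids123 L inst w → RepresentsLab G f w →
      ∃ (L' : Type) (inst' : LinearOrder L') (f' : V → L'), Function.Injective f' ∧
        ∃ w' : List L', @Avoids123 L' inst' w' ∧ RepresentsLab G f' w' ∧
          ∀ x : L', w'.count x ≤ 2 := by
  intro n
  induction n with
  | zero =>
    intro L inst f hf w hlen hav hrep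
    refine ⟨L, inst, f, hf, w, hav, hrep, ?_⟩
    intro x
    have hw : w = [] := List.length_eq_zero_iff.mp (by omega)
    rw [hw]
    simp
  | succ n ih =>
    intro L inst f hf w hlen hav hrep
    by_cases hex : ∃ x : L, 3 ≤ w.count x
    · obtain ⟨fx0, h3⟩ := hex
      have hmem : fx0 ∈ w := List.count_pos_iff.mp (by omega)
      obtain ⟨vx, rfl⟩ := hrep.1 fx0 hmem
      by_cases hdeg : ∃ u : V, G.Adj vx u
      · obtain ⟨vy, hadj⟩ := hdeg
        have huX : ∀ u, G.Adj vx u → u = vy := fun u hu =>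
          deg_le_one hf hav hrep h3 hu hadj
        by_cases hy3 : 3 ≤ w.count (f vy)
        · have huY : ∀ u, G.Adj vy u → u = vx := fun u hu =>
            deg_le_one hf hav hrep hy3 hu (G.adj_symm hadj)
          obtain ⟨f', w', hf', hav', hrep', hlen'⟩ :=
            surgery_pair hf hav hrep hadj h3 hy3 huX huY
          exact ih (L ⊕ₗ Fin 2) inferInstance f' hf' w' (by omega) hav' hrep'
        · have hy2 : w.count (f vy) = 2 := by
            have := nbr_two hrep hadj h3
            omega
          rcases lt_trichotomy (f vx) (f vy) with hlt | heq | hgt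
          · obtain ⟨f', w', hf', hav', hrep', hlen'⟩ :=
              surgery_hug_high hf hav hrep hadj huX h3 hy2 hlt
            exact ih (Lex (L × Bool)) inferInstance f' hf' w' (by omega) hav' hrep'
          · exact absurd (hf heq) (G.ne_of_adj hadj)
          · obtain ⟨f', w', hf', hav', hrep', hlen'⟩ :=
              surgery_hug_low hf hav hrep hadj huX h3 hy2 hgt
            exact ih (Lex (L × Bool)) inferInstance f' hf' w' (by omega) hav' hrep'
      · push_neg at hdeg
        obtain ⟨f', w', hf', hav', hrep', hlen'⟩ := surgery_iso hf hav hrep h3 hdeg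
        exact ih (L ⊕ₗ Fin 2) inferInstance f' hf' w' (by omega) hav' hrep'
    · push_neg at hex
      exact ⟨L, inst, f, hf, w, hav, hrep, fun x => by have := hex x; omega⟩

end P123

/-- if a finite graph `G` is 123-representable, then there is a 123-avoiding
word representing `G` (after a suitable injective relabeling of the vertices) in which every
letter appears at most twice (i.e. no letter occurs at three distinct positions). -/
theorem stmt_3 {V : Type*} [Fintype V] (G : SimpleGraph V) (h : Rep123 G) :
    ∃ (L : Type) (inst : LinearOrder L) (f : V → L), Function.Injective f ∧
      ∃ w : List L, @Avoids123 L inst w ∧ RepresentsLab G f w ∧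
        ¬ ∃ (x : L) (i j m : ℕ), i < j ∧ j < m ∧
          w[i]? = some x ∧ w[j]? = some x ∧ w[m]? = some x := by
  obtain ⟨L, inst, f, hf, w, hav, hrep⟩ := h
  obtain ⟨L', inst', f', hf', w', hav', hrep', hcnt⟩ :=
    P123.main_ind G w.length L inst f hf w (le_refl _) hav hrep
  refine ⟨L', inst', f', hf', w', hav', hrep', ?_⟩
  rintro ⟨x, i, j, m, hij, hjm, hi, hj, hm⟩
  have h1 := P123.three_le_count_of hij hjm hi hj hm
  have h2 := hcnt x
  omega
end

section
/- Let w be a word representing a graph G = (V, E) in which every letter appears at most twice, and let x, a, b be vertices with xa ∈ E, xb ∈ E, and ab ∉ E. Suppose w = u·x·v for some occurrence of x such that the letters a and b each occur both in u and in v. Then a and b appear in opposite relative orders on the two sides: a precedes b in u if and only if b precedes a in v. -/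
/-- `a` precedes `b` in the word `w`: some occurrence of `a` comes before some occurrence
of `b`. (When each of `a`, `b` occurs exactly once in `w`, this says the occurrence of `a`
is before the occurrence of `b`.) -/
def PrecedesIn {α : Type*} (w : List α) (a b : α) : Prop :=
  ∃ i j : ℕ, i < j ∧ w[i]? = some a ∧ w[j]? = some b

private lemma atMostTwo {α : Type*} {w : List α}
    (hcount : ¬ ∃ (y : α) (i j m : ℕ), i < j ∧ j < m ∧
      w[i]? = some y ∧ w[j]? = some y ∧ w[m]? = some y)
    {y : α} {p q : ℕ} (hpq : p < q) (hp : w[p]? = some y) (hq : w[q]? = some y) :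
    ∀ k, w[k]? = some y → k = p ∨ k = q := by
  intro k hk
  by_contra h
  push_neg at h
  obtain ⟨h1, h2⟩ := h
  apply hcount
  rcases lt_trichotomy k p with hkp | hkp | hkp
  · exact ⟨y, k, p, q, hkp, hpq, hk, hp, hq⟩
  · exact absurd hkp h1
  · rcases lt_trichotomy k q with hkq | hkq | hkq
    · exact ⟨y, p, k, q, hkp, hkq, hp, hk, hq⟩
    · exact absurd hkq h2
    · exact ⟨y, p, q, k, hpq, hkq, hp, hq, hk⟩

private lemma keyAlt {α : Type*} {u v : List α} {x a b : α}
    (hcount : ¬ ∃ (y : α) (i j m : ℕ), i < j ∧ j < m ∧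
      (u ++ x :: v)[i]? = some y ∧ (u ++ x :: v)[j]? = some y ∧
      (u ++ x :: v)[m]? = some y)
    (h1 : PrecedesIn u a b) (h2 : PrecedesIn v a b) :
    Alternates (u ++ x :: v) a b := by
  obtain ⟨i, j, hij, hia, hjb⟩ := h1
  obtain ⟨i', j', hij', hia', hjb'⟩ := h2
  have hju : j < u.length := by
    by_contra h
    push_neg at h
    rw [List.getElem?_eq_none h] at hjb
    exact Option.some_ne_none b hjb.symm
  have hiu : i < u.length := lt_trans hij hju
  have wa1 : (u ++ x :: v)[i]? = some a := by
    rw [List.getElem?_append_left hiu]; exact hia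
  have wb1 : (u ++ x :: v)[j]? = some b := by
    rw [List.getElem?_append_left hju]; exact hjb
  have hv : ∀ (m : ℕ) (c : α), v[m]? = some c →
      (u ++ x :: v)[u.length + 1 + m]? = some c := by
    intro m c hm
    rw [List.getElem?_append_right (by omega)]
    have : u.length + 1 + m - u.length = m + 1 := by omega
    rw [this]
    simpa using hm
  have wa2 : (u ++ x :: v)[u.length + 1 + i']? = some a := hv _ _ hia'
  have wb2 : (u ++ x :: v)[u.length + 1 + j']? = some b := hv _ _ hjb'
  have hAa := atMostTwo hcount (p := i) (q := u.length + 1 + i') (by omega) wa1 wa2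
  have hBb := atMostTwo hcount (p := j) (q := u.length + 1 + j') (by omega) wb1 wb2
  constructor
  · intro p q hpq hpa hqa
    rcases hAa p hpa with rfl | rfl <;> rcases hAa q hqa with rfl | rfl
    · omega
    · exact ⟨j, hij, by omega, wb1⟩
    · omega
    · omega
  · intro p q hpq hpb hqb
    rcases hBb p hpb with rfl | rfl <;> rcases hBb q hqb with rfl | rfl
    · omega
    · exact ⟨u.length + 1 + i', by omega, by omega, wa2⟩
    · omega
    · omega

private lemma precOr {α : Type*} {l : List α} {a b : α} (hne : a ≠ b)
    (ha : a ∈ l) (hb : b ∈ l) : PrecedesIn l a b ∨ PrecedesIn l b a := by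
  obtain ⟨i, hi, hia⟩ := List.mem_iff_getElem.mp ha
  obtain ⟨j, hj, hjb⟩ := List.mem_iff_getElem.mp hb
  have hia' : l[i]? = some a := by rw [List.getElem?_eq_getElem hi, hia]
  have hjb' : l[j]? = some b := by rw [List.getElem?_eq_getElem hj, hjb]
  rcases lt_trichotomy i j with h | h | h
  · exact Or.inl ⟨i, j, h, hia', hjb'⟩
  · subst h; exact absurd (hia ▸ hjb) hne
  · exact Or.inr ⟨j, i, h, hjb', hia'⟩

/-- let `w` be a word representing `G` in which every letter appears at most
twice, and let `x, a, b` be vertices with `xa ∈ E`, `xb ∈ E`, `ab ∉ E`. If `w = u·x·v` for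
some occurrence of `x` such that `a` and `b` each occur both in `u` and in `v`, then `a` and
`b` appear in opposite relative orders on the two sides of `x`: `a` precedes `b` in `u` iff
`b` precedes `a` in `v`. -/
theorem stmt_4 {α : Type*} (G : SimpleGraph α) (w : List α)
    (hcount : ¬ ∃ (y : α) (i j m : ℕ), i < j ∧ j < m ∧
      w[i]? = some y ∧ w[j]? = some y ∧ w[m]? = some y)
    (hrep : Represents G w)
    (x a b : α) (hxa : G.Adj x a) (hxb : G.Adj x b) (hab : a ≠ b) (hnadj : ¬ G.Adj a b)
    (u v : List α) (hw : w = u ++ x :: v)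
    (hau : a ∈ u) (hav : a ∈ v) (hbu : b ∈ u) (hbv : b ∈ v) :
    PrecedesIn u a b ↔ PrecedesIn v b a := by
  subst hw
  have hnalt : ¬ Alternates (u ++ x :: v) a b :=
    fun h => hnadj ((hrep.2 a b hab).mp h)
  have hnalt' : ¬ Alternates (u ++ x :: v) b a :=
    fun h => hnadj (G.adj_symm ((hrep.2 b a hab.symm).mp h))
  constructor
  · intro h
    rcases precOr hab hav hbv with h2 | h2
    · exact absurd (keyAlt hcount h h2) hnalt
    · exact h2
  · intro h
    rcases precOr hab hau hbu with h2 | h2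
    · exact h2
    · exact absurd (keyAlt hcount h2 h) hnalt'
end

section
/- The star K_{1,6} (the graph on 7 vertices consisting of one center vertex adjacent to 6 leaves, with no other edges) is not 123-representable: for every injective labeling of its vertices by elements of a linearly ordered set, no 123-avoiding word represents it. -/
section Basics

variable {L : Type*} [LinearOrder L] {w : List L}

lemma avoid123_elim (hAv : Avoids123 w) {i j k : ℕ} {a b c : L} (hij : i < j) (hjk : j < k)
    (ha : w[i]? = some a) (hb : w[j]? = some b) (hc : w[k]? = some c)
    (hab : a < b) (hbc : b < c) : False :=
  hAv ⟨i, j, k, a, b, c, hij, hjk, ha, hb, hc, hab, hbc⟩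

lemma alt_symm {x y : L} (h : Alternates w x y) : Alternates w y x := ⟨h.2, h.1⟩

lemma pos_ne {x y : L} {i j : ℕ} (hx : w[i]? = some x) (hy : w[j]? = some y)
    (hxy : x ≠ y) : i ≠ j := by
  rintro rfl; rw [hx] at hy; exact hxy (Option.some.inj hy)

lemma alt_one_one {x y : L} {i j : ℕ}
    (hx : w[i]? = some x) (hxu : ∀ k, w[k]? = some x → k = i)
    (hy : w[j]? = some y) (hyu : ∀ k, w[k]? = some y → k = j) : Alternates w x y := by
  constructor
  · intro a b hlt h1 h2; have := hxu a h1; have := hxu b h2; omega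
  · intro a b hlt h1 h2; have := hyu a h1; have := hyu b h2; omega

lemma alt_two_one {x y : L} {i1 i2 j : ℕ} (h1 : i1 < j) (h2 : j < i2)
    (hxu : ∀ k, w[k]? = some x → k = i1 ∨ k = i2)
    (hy : w[j]? = some y) (hyu : ∀ k, w[k]? = some y → k = j) : Alternates w x y := by
  constructor
  · intro a b hlt ha hb
    rcases hxu a ha with rfl | rfl <;> rcases hxu b hb with rfl | rfl
    · omega
    · exact ⟨j, h1, h2, hy⟩
    · omega
    · omega
  · intro a b hlt ha hb; have := hyu a ha; have := hyu b hb; omega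

lemma alt_two_two {x y : L} {i1 j1 i2 j2 : ℕ} (h1 : i1 < j1) (h2 : j1 < i2) (h3 : i2 < j2)
    (hx2 : w[i2]? = some x) (hy1 : w[j1]? = some y)
    (hxu : ∀ k, w[k]? = some x → k = i1 ∨ k = i2)
    (hyu : ∀ k, w[k]? = some y → k = j1 ∨ k = j2) : Alternates w x y := by
  constructor
  · intro a b hlt ha hb
    rcases hxu a ha with rfl | rfl <;> rcases hxu b hb with rfl | rfl
    · omega
    · exact ⟨j1, h1, h2, hy1⟩
    · omega
    · omega
  · intro a b hlt ha hb
    rcases hyu a ha with rfl | rfl <;> rcases hyu b hb with rfl | rfl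
    · omega
    · exact ⟨i2, h2, h3, hx2⟩
    · omega
    · omega

end Basics
set_option linter.unusedSectionVars false
set_option linter.unusedVariables false

/-- `x` is a letter distinct from `c`, occurring in `w`, such that between any two
occurrences of `x` there is a `c` and between any two occurrences of `c` there is an `x`. -/
def LeafAt {L : Type*} (w : List L) (c x : L) : Prop :=
  x ≠ c ∧ x ∈ w ∧
  (∀ i j : ℕ, i < j → w[i]? = some x → w[j]? = some x →
      ∃ k : ℕ, i < k ∧ k < j ∧ w[k]? = some c) ∧
  (∀ i j : ℕ, i < j → w[i]? = some c → w[j]? = some c →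
      ∃ k : ℕ, i < k ∧ k < j ∧ w[k]? = some x)

section M1

variable {L : Type*} [LinearOrder L] {w : List L} {c : L} {p : ℕ}

lemma m1_case (hAv : Avoids123 w) (hp : w[p]? = some c)
    (hcu : ∀ k, w[k]? = some c → k = p)
    (e : Fin 6 → L) (he : StrictMono e)
    (hL : ∀ i, LeafAt w c (e i))
    (hnl : ∀ i j : Fin 6, i ≠ j → ¬ Alternates w (e i) (e j)) : False := by
  classical
  -- separation: any two occurrences of a leaf straddle p
  have hSep : ∀ (i : Fin 6) (a b : ℕ), a < b → w[a]? = some (e i) → w[b]? = some (e i) →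
      a < p ∧ p < b := by
    intro i a b hab ha hb
    obtain ⟨k, hk1, hk2, hk⟩ := (hL i).2.2.1 a b hab ha hb
    have := hcu k hk
    omega
  set Dbl : Fin 6 → Prop :=
    fun i => (∃ k : ℕ, k < p ∧ w[k]? = some (e i)) ∧ (∃ k : ℕ, p < k ∧ w[k]? = some (e i)) with hDbl
  have hUnique : ∀ i, ¬ Dbl i → ∃ k : ℕ, w[k]? = some (e i) ∧
      ∀ k' : ℕ, w[k']? = some (e i) → k' = k := by
    intro i hnd
    obtain ⟨k0, hk0⟩ := List.mem_iff_getElem?.mp (hL i).2.1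
    refine ⟨k0, hk0, fun k' hk' => ?_⟩
    by_contra hne
    rcases Nat.lt_or_ge k' k0 with h | h
    · obtain ⟨h1, h2⟩ := hSep i k' k0 h hk' hk0
      exact hnd ⟨⟨k', h1, hk'⟩, ⟨k0, h2, hk0⟩⟩
    · have h : k0 < k' := by omega
      obtain ⟨h1, h2⟩ := hSep i k0 k' h hk0 hk'
      exact hnd ⟨⟨k0, h1, hk0⟩, ⟨k', h2, hk'⟩⟩
  have hDblPair : ∀ i j : Fin 6, i ≠ j → Dbl i ∨ Dbl j := by
    intro i j hij
    by_contra hno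
    push_neg at hno
    obtain ⟨ki, hki, hkiu⟩ := hUnique i hno.1
    obtain ⟨kj, hkj, hkju⟩ := hUnique j hno.2
    exact hnl i j hij (alt_one_one hki hkiu hkj hkju)
  have hTriple : ∃ i1 i2 i3 : Fin 6, i1 < i2 ∧ i2 < i3 ∧ Dbl i1 ∧ Dbl i2 ∧ Dbl i3 := by
    by_cases d0 : Dbl 0
    · by_cases d1 : Dbl 1
      · by_cases d2 : Dbl 2
        · exact ⟨0, 1, 2, by decide, by decide, d0, d1, d2⟩
        · have d3 : Dbl 3 := (hDblPair 2 3 (by decide)).resolve_left d2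
          exact ⟨0, 1, 3, by decide, by decide, d0, d1, d3⟩
      · have d2 : Dbl 2 := (hDblPair 1 2 (by decide)).resolve_left d1
        have d3 : Dbl 3 := (hDblPair 1 3 (by decide)).resolve_left d1
        exact ⟨0, 2, 3, by decide, by decide, d0, d2, d3⟩
    · have d1 : Dbl 1 := (hDblPair 0 1 (by decide)).resolve_left d0
      have d2 : Dbl 2 := (hDblPair 0 2 (by decide)).resolve_left d0
      have d3 : Dbl 3 := (hDblPair 0 3 (by decide)).resolve_left d0
      exact ⟨1, 2, 3, by decide, by decide, d1, d2, d3⟩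
  obtain ⟨i1, i2, i3, h12, h23, D1, D2, D3⟩ := hTriple
  have h13' : i1 < i3 := lt_trans h12 h23
  -- extract positions
  obtain ⟨⟨a1, ha1p, ha1⟩, ⟨b1, hb1p, hb1⟩⟩ := D1
  obtain ⟨⟨a2, ha2p, ha2⟩, ⟨b2, hb2p, hb2⟩⟩ := D2
  obtain ⟨⟨a3, ha3p, ha3⟩, ⟨b3, hb3p, hb3⟩⟩ := D3
  have hvne : ∀ s t : Fin 6, s ≠ t → e s ≠ e t := fun s t h => he.injective.ne h
  -- exactness of positions for a double leaf
  have hOnly : ∀ (i : Fin 6) (a b : ℕ), a < p → p < b →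
      w[a]? = some (e i) → w[b]? = some (e i) →
      ∀ k : ℕ, w[k]? = some (e i) → k = a ∨ k = b := by
    intro i a b hap hpb ha hb k hk
    by_contra hno
    push_neg at hno
    rcases Nat.lt_or_ge k p with h | h
    · rcases Nat.lt_or_ge k a with h' | h'
      · have := hSep i k a h' hk ha; omega
      · have h'' : a < k := by omega
        have := hSep i a k h'' ha hk; omega
    · rcases Nat.lt_or_ge k b with h' | h'
      · have := hSep i k b h' hk hb; omega
      · have h'' : b < k := by omega
        have := hSep i b k h'' hb hk; omega
  -- reversal
  have hRev : ∀ (s t : Fin 6) (as bs at' bt : ℕ), s ≠ t →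
      as < p → p < bs → at' < p → p < bt →
      w[as]? = some (e s) → w[bs]? = some (e s) →
      w[at']? = some (e t) → w[bt]? = some (e t) →
      as < at' → bt < bs := by
    intro s t as bs at' bt hst hasp hpbs hatp hpbt hws hwbs hwt hwbt haa
    by_contra hge
    have hne : bs ≠ bt := pos_ne hwbs hwbt (hvne s t hst)
    have hlt : bs < bt := by omega
    exact hnl s t hst
      (alt_two_two (by omega) (by omega) hlt hwbs hwt
        (hOnly s as bs hasp hpbs hws hwbs) (hOnly t at' bt hatp hpbt hwt hwbt))
  have v12 : e i1 < e i2 := he h12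
  have v23 : e i2 < e i3 := he h23
  have v13 : e i1 < e i3 := lt_trans v12 v23
  have hc1 : c ≠ e i1 := fun h => (hL i1).1 h.symm
  have hc3 : c ≠ e i3 := fun h => (hL i3).1 h.symm
  have hne12 : a1 ≠ a2 := pos_ne ha1 ha2 (hvne i1 i2 (ne_of_lt h12))
  have hne13 : a1 ≠ a3 := pos_ne ha1 ha3 (hvne i1 i3 (ne_of_lt h13'))
  have hne23 : a2 ≠ a3 := pos_ne ha2 ha3 (hvne i2 i3 (ne_of_lt h23))
  have hn21 : i2 ≠ i1 := (ne_of_lt h12).symm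
  have hn32 : i3 ≠ i2 := (ne_of_lt h23).symm
  have hn31 : i3 ≠ i1 := (ne_of_lt h13').symm
  rcases (show a1 < a2 ∨ a2 < a1 by omega) with h12a | h12a
  · rcases (show a2 < a3 ∨ a3 < a2 by omega) with h23a | h23a
    · exact avoid123_elim hAv h12a h23a ha1 ha2 ha3 v12 v23
    · rcases (show a1 < a3 ∨ a3 < a1 by omega) with h13a | h13a
      · have hbb : b2 < b3 :=
          hRev i3 i2 a3 b3 a2 b2 hn32 ha3p hb3p ha2p hb2p ha3 hb3 ha2 hb2 h23a
        exact avoid123_elim hAv (show a1 < b2 by omega) hbb ha1 hb2 hb3 v12 v23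
      · exact avoid123_elim hAv h12a (show a2 < b3 by omega) ha1 ha2 hb3 v12 v23
  · rcases (show a1 < a3 ∨ a3 < a1 by omega) with h13a | h13a
    · rcases lt_trichotomy c (e i1) with hg | hg | hg
      · have hbb : b1 < b2 :=
          hRev i2 i1 a2 b2 a1 b1 hn21 ha2p hb2p ha1p hb1p ha2 hb2 ha1 hb1 h12a
        exact avoid123_elim hAv hb1p hbb hp hb1 hb2 hg v12
      · exact hc1 hg
      · rcases lt_trichotomy c (e i3) with hg3 | hg3 | hg3
        · exact avoid123_elim hAv ha1p hb3p ha1 hp hb3 hg hg3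
        · exact hc3 hg3
        · exact avoid123_elim hAv h13a ha3p ha1 ha3 hp v13 hg3
    · rcases (show a2 < a3 ∨ a3 < a2 by omega) with h23a | h23a
      · rcases lt_trichotomy c (e i1) with hg | hg | hg
        · have hbb : b1 < b3 :=
            hRev i3 i1 a3 b3 a1 b1 hn31 ha3p hb3p ha1p hb1p ha3 hb3 ha1 hb1 h13a
          exact avoid123_elim hAv hb1p hbb hp hb1 hb3 hg v13
        · exact hc1 hg
        · rcases lt_trichotomy c (e i3) with hg3 | hg3 | hg3
          · exact avoid123_elim hAv ha1p hb3p ha1 hp hb3 hg hg3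
          · exact hc3 hg3
          · exact avoid123_elim hAv h23a ha3p ha2 ha3 hp v23 hg3
      · have hb12 : b1 < b2 :=
          hRev i2 i1 a2 b2 a1 b1 hn21 ha2p hb2p ha1p hb1p ha2 hb2 ha1 hb1 h12a
        have hb23 : b2 < b3 :=
          hRev i3 i2 a3 b3 a2 b2 hn32 ha3p hb3p ha2p hb2p ha3 hb3 ha2 hb2 h23a
        exact avoid123_elim hAv hb12 hb23 hb1 hb2 hb3 v12 v23

end M1
section M2

variable {L : Type*} [LinearOrder L] {w : List L} {c : L} {p q : ℕ}

lemma m2_struct {x : L}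
    (hpq : p < q) (hp : w[p]? = some c) (hq : w[q]? = some c)
    (hcu : ∀ k : ℕ, w[k]? = some c → k = p ∨ k = q)
    (hx : LeafAt w c x) :
    ∃ b : ℕ, p < b ∧ b < q ∧ w[b]? = some x ∧
      (∀ k : ℕ, w[k]? = some x → k < p ∨ k = b ∨ q < k) ∧
      (∀ k k' : ℕ, k < p → k' < p → w[k]? = some x → w[k']? = some x → k = k') ∧
      (∀ k k' : ℕ, q < k → q < k' → w[k]? = some x → w[k']? = some x → k = k') := by
  obtain ⟨b, hb1, hb2, hb⟩ := hx.2.2.2 p q hpq hp hq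
  have hsep : ∀ a b' : ℕ, a < b' → w[a]? = some x → w[b']? = some x →
      (a < p ∧ p < b') ∨ (a < q ∧ q < b') := by
    intro a b' hab ha hb'
    obtain ⟨k, h1, h2, hk⟩ := hx.2.2.1 a b' hab ha hb'
    rcases hcu k hk with rfl | rfl
    · exact Or.inl ⟨h1, h2⟩
    · exact Or.inr ⟨h1, h2⟩
  have hcls : ∀ k : ℕ, w[k]? = some x → k < p ∨ k = b ∨ q < k := by
    intro k hk
    have h1 : k ≠ p := pos_ne hk hp hx.1
    have h2 : k ≠ q := pos_ne hk hq hx.1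
    rcases (show k < p ∨ (p < k ∧ k < q) ∨ q < k by omega) with h | h | h
    · exact Or.inl h
    · right; left
      by_contra hne
      rcases (show k < b ∨ b < k by omega) with h' | h'
      · rcases hsep k b h' hk hb with h'' | h'' <;> omega
      · rcases hsep b k h' hb hk with h'' | h'' <;> omega
    · exact Or.inr (Or.inr h)
  refine ⟨b, hb1, hb2, hb, hcls, ?_, ?_⟩
  · intro k k' h1 h2 hk hk'
    by_contra hne
    rcases (show k < k' ∨ k' < k by omega) with h | h
    · rcases hsep k k' h hk hk' with h'' | h'' <;> omega
    · rcases hsep k' k h hk' hk with h'' | h'' <;> omega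
  · intro k k' h1 h2 hk hk'
    by_contra hne
    rcases (show k < k' ∨ k' < k by omega) with h | h
    · rcases hsep k k' h hk hk' with h'' | h'' <;> omega
    · rcases hsep k' k h hk' hk with h'' | h'' <;> omega

lemma m2_forceA {x y : L} {bx by' : ℕ}
    (hxy : x ≠ y) (hnalt : ¬ Alternates w x y)
    (hbx1 : p < bx) (hbx : w[bx]? = some x)
    (hby1 : p < by') (hby : w[by']? = some y)
    (hclx : ∀ k : ℕ, w[k]? = some x → k < p ∨ k = bx ∨ q < k)
    (hcly : ∀ k : ℕ, w[k]? = some y → k < p ∨ k = by' ∨ q < k)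
    (hulx : ∀ k k' : ℕ, k < p → k' < p → w[k]? = some x → w[k']? = some x → k = k')
    (huly : ∀ k k' : ℕ, k < p → k' < p → w[k]? = some y → w[k']? = some y → k = k')
    (hbo : by' < bx)
    (hnCx : ¬ ∃ k : ℕ, q < k ∧ w[k]? = some x)
    (hnCy : ¬ ∃ k : ℕ, q < k ∧ w[k]? = some y) :
    (∃ k : ℕ, k < p ∧ w[k]? = some y) ∧
      ∀ ax ay : ℕ, ax < p → ay < p → w[ax]? = some x → w[ay]? = some y → ax < ay := by
  constructor
  · by_contra hnAy
    have hyu : ∀ k : ℕ, w[k]? = some y → k = by' := by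
      intro k hk
      rcases hcly k hk with h | h | h
      · exact absurd ⟨k, h, hk⟩ hnAy
      · exact h
      · exact absurd ⟨k, h, hk⟩ hnCy
    by_cases hAx : ∃ k : ℕ, k < p ∧ w[k]? = some x
    · obtain ⟨ax, haxp, hax⟩ := hAx
      have hxu : ∀ k : ℕ, w[k]? = some x → k = ax ∨ k = bx := by
        intro k hk
        rcases hclx k hk with h | h | h
        · exact Or.inl (hulx k ax h haxp hk hax)
        · exact Or.inr h
        · exact absurd ⟨k, h, hk⟩ hnCx
      exact hnalt (alt_two_one (by omega) (by omega) hxu hby hyu)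
    · have hxu : ∀ k : ℕ, w[k]? = some x → k = bx := by
        intro k hk
        rcases hclx k hk with h | h | h
        · exact absurd ⟨k, h, hk⟩ hAx
        · exact h
        · exact absurd ⟨k, h, hk⟩ hnCx
      exact hnalt (alt_one_one hbx hxu hby hyu)
  · intro ax ay haxp hayp hax hay
    by_contra hge
    have hne : ax ≠ ay := pos_ne hax hay hxy
    have hlt : ay < ax := by omega
    have hxu : ∀ k : ℕ, w[k]? = some x → k = ax ∨ k = bx := by
      intro k hk
      rcases hclx k hk with h | h | h
      · exact Or.inl (hulx k ax h haxp hk hax)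
      · exact Or.inr h
      · exact absurd ⟨k, h, hk⟩ hnCx
    have hyu : ∀ k : ℕ, w[k]? = some y → k = ay ∨ k = by' := by
      intro k hk
      rcases hcly k hk with h | h | h
      · exact Or.inl (huly k ay h hayp hk hay)
      · exact Or.inr h
      · exact absurd ⟨k, h, hk⟩ hnCy
    exact hnalt (alt_symm
      (alt_two_two hlt (by omega) hbo hby hax hyu hxu))

lemma m2_forceC {x y : L} {bx by' : ℕ}
    (hxy : x ≠ y) (hnalt : ¬ Alternates w x y)
    (hbx2 : bx < q) (hbx : w[bx]? = some x)
    (hby2 : by' < q) (hby : w[by']? = some y)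
    (hclx : ∀ k : ℕ, w[k]? = some x → k < p ∨ k = bx ∨ q < k)
    (hcly : ∀ k : ℕ, w[k]? = some y → k < p ∨ k = by' ∨ q < k)
    (huhx : ∀ k k' : ℕ, q < k → q < k' → w[k]? = some x → w[k']? = some x → k = k')
    (huhy : ∀ k k' : ℕ, q < k → q < k' → w[k]? = some y → w[k']? = some y → k = k')
    (hbo : by' < bx)
    (hnAx : ¬ ∃ k : ℕ, k < p ∧ w[k]? = some x)
    (hnAy : ¬ ∃ k : ℕ, k < p ∧ w[k]? = some y) :
    (∃ k : ℕ, q < k ∧ w[k]? = some x) ∧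
      ∀ gx gy : ℕ, q < gx → q < gy → w[gx]? = some x → w[gy]? = some y → gx < gy := by
  constructor
  · by_contra hnCx
    have hxu : ∀ k : ℕ, w[k]? = some x → k = bx := by
      intro k hk
      rcases hclx k hk with h | h | h
      · exact absurd ⟨k, h, hk⟩ hnAx
      · exact h
      · exact absurd ⟨k, h, hk⟩ hnCx
    by_cases hCy : ∃ k : ℕ, q < k ∧ w[k]? = some y
    · obtain ⟨gy, hgyq, hgy⟩ := hCy
      have hyu : ∀ k : ℕ, w[k]? = some y → k = by' ∨ k = gy := by
        intro k hk
        rcases hcly k hk with h | h | h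
        · exact absurd ⟨k, h, hk⟩ hnAy
        · exact Or.inl h
        · exact Or.inr (huhy k gy h hgyq hk hgy)
      exact hnalt (alt_symm (alt_two_one hbo (by omega) hyu hbx hxu))
    · have hyu : ∀ k : ℕ, w[k]? = some y → k = by' := by
        intro k hk
        rcases hcly k hk with h | h | h
        · exact absurd ⟨k, h, hk⟩ hnAy
        · exact h
        · exact absurd ⟨k, h, hk⟩ hCy
      exact hnalt (alt_one_one hbx hxu hby hyu)
  · intro gx gy hgxq hgyq hgx hgy
    by_contra hge
    have hne : gx ≠ gy := pos_ne hgx hgy hxy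
    have hlt : gy < gx := by omega
    have hxu : ∀ k : ℕ, w[k]? = some x → k = bx ∨ k = gx := by
      intro k hk
      rcases hclx k hk with h | h | h
      · exact absurd ⟨k, h, hk⟩ hnAx
      · exact Or.inl h
      · exact Or.inr (huhx k gx h hgxq hk hgx)
    have hyu : ∀ k : ℕ, w[k]? = some y → k = by' ∨ k = gy := by
      intro k hk
      rcases hcly k hk with h | h | h
      · exact absurd ⟨k, h, hk⟩ hnAy
      · exact Or.inl h
      · exact Or.inr (huhy k gy h hgyq hk hgy)
    exact hnalt (alt_symm
      (alt_two_two hbo (by omega) hlt hgy hbx hyu hxu))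

end M2
section M2cases

variable {L : Type*} [LinearOrder L] {w : List L} {c : L} {p q : ℕ}

/-- m = 2 and the centre letter is below the five leaves. -/
lemma m2_lo {z1 z2 z3 z4 z5 : L}
    (hAv : Avoids123 w)
    (hpq : p < q) (hp : w[p]? = some c) (hq : w[q]? = some c)
    (hcu : ∀ k : ℕ, w[k]? = some c → k = p ∨ k = q)
    (o12 : z1 < z2) (o23 : z2 < z3) (o34 : z3 < z4) (o45 : z4 < z5)
    (hg : c < z1)
    (hL1 : LeafAt w c z1) (hL2 : LeafAt w c z2) (hL3 : LeafAt w c z3)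
    (hL4 : LeafAt w c z4) (hL5 : LeafAt w c z5)
    (hn23 : ¬ Alternates w z2 z3) (hn34 : ¬ Alternates w z3 z4) : False := by
  obtain ⟨b1, hb11, hb12, hb1, hcl1, hul1, huh1⟩ := m2_struct hpq hp hq hcu hL1
  obtain ⟨b2, hb21, hb22, hb2, hcl2, hul2, huh2⟩ := m2_struct hpq hp hq hcu hL2
  obtain ⟨b3, hb31, hb32, hb3, hcl3, hul3, huh3⟩ := m2_struct hpq hp hq hcu hL3
  obtain ⟨b4, hb41, hb42, hb4, hcl4, hul4, huh4⟩ := m2_struct hpq hp hq hcu hL4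
  obtain ⟨b5, hb51, hb52, hb5, hcl5, hul5, huh5⟩ := m2_struct hpq hp hq hcu hL5
  have hbo32 : b3 < b2 := by
    have hne : b2 ≠ b3 := pos_ne hb2 hb3 (ne_of_lt o23)
    by_contra h
    exact avoid123_elim hAv hb21 (show b2 < b3 by omega) hp hb2 hb3 (lt_trans hg o12) o23
  have hbo43 : b4 < b3 := by
    have hne : b3 ≠ b4 := pos_ne hb3 hb4 (ne_of_lt o34)
    by_contra h
    exact avoid123_elim hAv hb31 (show b3 < b4 by omega) hp hb3 hb4
      (lt_trans (lt_trans hg o12) o23) o34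
  have hnC2 : ¬ ∃ k : ℕ, q < k ∧ w[k]? = some z2 := by
    rintro ⟨g, hg1, hgw⟩
    exact avoid123_elim hAv hb11 (show b1 < g by omega) hp hb1 hgw hg o12
  have hnC3 : ¬ ∃ k : ℕ, q < k ∧ w[k]? = some z3 := by
    rintro ⟨g, hg1, hgw⟩
    exact avoid123_elim hAv hb11 (show b1 < g by omega) hp hb1 hgw hg (lt_trans o12 o23)
  have hnC4 : ¬ ∃ k : ℕ, q < k ∧ w[k]? = some z4 := by
    rintro ⟨g, hg1, hgw⟩
    exact avoid123_elim hAv hb11 (show b1 < g by omega) hp hb1 hgw hg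
      (lt_trans (lt_trans o12 o23) o34)
  have hF23 := m2_forceA (ne_of_lt o23) hn23 hb21 hb2 hb31 hb3 hcl2 hcl3 hul2 hul3
    hbo32 hnC2 hnC3
  have hF34 := m2_forceA (ne_of_lt o34) hn34 hb31 hb3 hb41 hb4 hcl3 hcl4 hul3 hul4
    hbo43 hnC3 hnC4
  obtain ⟨a3, ha3p, ha3⟩ := hF23.1
  obtain ⟨a4, ha4p, ha4⟩ := hF34.1
  have ha34 : a3 < a4 := hF34.2 a3 a4 ha3p ha4p ha3 ha4
  exact avoid123_elim hAv ha34 (show a4 < b5 by omega) ha3 ha4 hb5 o34 o45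

/-- m = 2 and the centre letter is above the five leaves. -/
lemma m2_hi {z1 z2 z3 z4 z5 : L}
    (hAv : Avoids123 w)
    (hpq : p < q) (hp : w[p]? = some c) (hq : w[q]? = some c)
    (hcu : ∀ k : ℕ, w[k]? = some c → k = p ∨ k = q)
    (o12 : z1 < z2) (o23 : z2 < z3) (o34 : z3 < z4) (o45 : z4 < z5)
    (hg : z5 < c)
    (hL1 : LeafAt w c z1) (hL2 : LeafAt w c z2) (hL3 : LeafAt w c z3)
    (hL4 : LeafAt w c z4) (hL5 : LeafAt w c z5)
    (hn23 : ¬ Alternates w z2 z3) (hn34 : ¬ Alternates w z3 z4) : False := by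
  obtain ⟨b1, hb11, hb12, hb1, hcl1, hul1, huh1⟩ := m2_struct hpq hp hq hcu hL1
  obtain ⟨b2, hb21, hb22, hb2, hcl2, hul2, huh2⟩ := m2_struct hpq hp hq hcu hL2
  obtain ⟨b3, hb31, hb32, hb3, hcl3, hul3, huh3⟩ := m2_struct hpq hp hq hcu hL3
  obtain ⟨b4, hb41, hb42, hb4, hcl4, hul4, huh4⟩ := m2_struct hpq hp hq hcu hL4
  obtain ⟨b5, hb51, hb52, hb5, hcl5, hul5, huh5⟩ := m2_struct hpq hp hq hcu hL5
  have hbo32 : b3 < b2 := by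
    have hne : b2 ≠ b3 := pos_ne hb2 hb3 (ne_of_lt o23)
    by_contra h
    exact avoid123_elim hAv (show b2 < b3 by omega) hb32 hb2 hb3 hq o23
      (lt_trans (lt_trans o34 o45) hg)
  have hbo43 : b4 < b3 := by
    have hne : b3 ≠ b4 := pos_ne hb3 hb4 (ne_of_lt o34)
    by_contra h
    exact avoid123_elim hAv (show b3 < b4 by omega) hb42 hb3 hb4 hq o34
      (lt_trans o45 hg)
  have hnA2 : ¬ ∃ k : ℕ, k < p ∧ w[k]? = some z2 := by
    rintro ⟨a, ha1, haw⟩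
    exact avoid123_elim hAv (show a < b5 by omega) hb52 haw hb5 hq
      (lt_trans o23 (lt_trans o34 o45)) hg
  have hnA3 : ¬ ∃ k : ℕ, k < p ∧ w[k]? = some z3 := by
    rintro ⟨a, ha1, haw⟩
    exact avoid123_elim hAv (show a < b5 by omega) hb52 haw hb5 hq
      (lt_trans o34 o45) hg
  have hnA4 : ¬ ∃ k : ℕ, k < p ∧ w[k]? = some z4 := by
    rintro ⟨a, ha1, haw⟩
    exact avoid123_elim hAv (show a < b5 by omega) hb52 haw hb5 hq o45 hg
  have hF23 := m2_forceC (ne_of_lt o23) hn23 hb22 hb2 hb32 hb3 hcl2 hcl3 huh2 huh3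
    hbo32 hnA2 hnA3
  have hF34 := m2_forceC (ne_of_lt o34) hn34 hb32 hb3 hb42 hb4 hcl3 hcl4 huh3 huh4
    hbo43 hnA3 hnA4
  obtain ⟨g2, hg2q, hg2⟩ := hF23.1
  obtain ⟨g3, hg3q, hg3⟩ := hF34.1
  have hg23 : g2 < g3 := hF23.2 g2 g3 hg2q hg3q hg2 hg3
  exact avoid123_elim hAv (show b1 < g2 by omega) hg23 hb1 hg2 hg3 o12 o23

end M2cases
section M2mid

variable {L : Type*} [LinearOrder L] {w : List L} {c : L} {p q : ℕ}

/-- m = 2, four leaves below the centre letter, one above. -/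
lemma m2_mid_lo {z1 z2 z3 z4 z5 : L}
    (hAv : Avoids123 w)
    (hpq : p < q) (hp : w[p]? = some c) (hq : w[q]? = some c)
    (hcu : ∀ k : ℕ, w[k]? = some c → k = p ∨ k = q)
    (o12 : z1 < z2) (o23 : z2 < z3) (o34 : z3 < z4)
    (hg4 : z4 < c) (hg5 : c < z5)
    (hL1 : LeafAt w c z1) (hL2 : LeafAt w c z2) (hL3 : LeafAt w c z3)
    (hL4 : LeafAt w c z4) (hL5 : LeafAt w c z5)
    (hn12 : ¬ Alternates w z1 z2) (hn23 : ¬ Alternates w z2 z3)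
    (hn34 : ¬ Alternates w z3 z4) : False := by
  obtain ⟨b1, hb11, hb12, hb1, hcl1, hul1, huh1⟩ := m2_struct hpq hp hq hcu hL1
  obtain ⟨b2, hb21, hb22, hb2, hcl2, hul2, huh2⟩ := m2_struct hpq hp hq hcu hL2
  obtain ⟨b3, hb31, hb32, hb3, hcl3, hul3, huh3⟩ := m2_struct hpq hp hq hcu hL3
  obtain ⟨b4, hb41, hb42, hb4, hcl4, hul4, huh4⟩ := m2_struct hpq hp hq hcu hL4
  obtain ⟨b5, hb51, hb52, hb5, hcl5, hul5, huh5⟩ := m2_struct hpq hp hq hcu hL5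
  have hnA1 : ¬ ∃ k : ℕ, k < p ∧ w[k]? = some z1 := by
    rintro ⟨a, ha1, haw⟩
    exact avoid123_elim hAv ha1 hb51 haw hp hb5
      (lt_trans (lt_trans (lt_trans o12 o23) o34) hg4) hg5
  have hnA2 : ¬ ∃ k : ℕ, k < p ∧ w[k]? = some z2 := by
    rintro ⟨a, ha1, haw⟩
    exact avoid123_elim hAv ha1 hb51 haw hp hb5
      (lt_trans (lt_trans o23 o34) hg4) hg5
  have hnA3 : ¬ ∃ k : ℕ, k < p ∧ w[k]? = some z3 := by
    rintro ⟨a, ha1, haw⟩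
    exact avoid123_elim hAv ha1 hb51 haw hp hb5 (lt_trans o34 hg4) hg5
  have hnA4 : ¬ ∃ k : ℕ, k < p ∧ w[k]? = some z4 := by
    rintro ⟨a, ha1, haw⟩
    exact avoid123_elim hAv ha1 hb51 haw hp hb5 hg4 hg5
  have hbo21 : b2 < b1 := by
    have hne : b1 ≠ b2 := pos_ne hb1 hb2 (ne_of_lt o12)
    by_contra h
    exact avoid123_elim hAv (show b1 < b2 by omega) hb22 hb1 hb2 hq o12
      (lt_trans (lt_trans o23 o34) hg4)
  have hbo32 : b3 < b2 := by
    have hne : b2 ≠ b3 := pos_ne hb2 hb3 (ne_of_lt o23)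
    by_contra h
    exact avoid123_elim hAv (show b2 < b3 by omega) hb32 hb2 hb3 hq o23
      (lt_trans o34 hg4)
  have hbo43 : b4 < b3 := by
    have hne : b3 ≠ b4 := pos_ne hb3 hb4 (ne_of_lt o34)
    by_contra h
    exact avoid123_elim hAv (show b3 < b4 by omega) hb42 hb3 hb4 hq o34 hg4
  have hF12 := m2_forceC (ne_of_lt o12) hn12 hb12 hb1 hb22 hb2 hcl1 hcl2 huh1 huh2
    hbo21 hnA1 hnA2
  have hF23 := m2_forceC (ne_of_lt o23) hn23 hb22 hb2 hb32 hb3 hcl2 hcl3 huh2 huh3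
    hbo32 hnA2 hnA3
  have hF34 := m2_forceC (ne_of_lt o34) hn34 hb32 hb3 hb42 hb4 hcl3 hcl4 huh3 huh4
    hbo43 hnA3 hnA4
  obtain ⟨g1, hg1q, hg1⟩ := hF12.1
  obtain ⟨g2, hg2q, hg2⟩ := hF23.1
  obtain ⟨g3, hg3q, hg3⟩ := hF34.1
  have h12 : g1 < g2 := hF12.2 g1 g2 hg1q hg2q hg1 hg2
  have h23 : g2 < g3 := hF23.2 g2 g3 hg2q hg3q hg2 hg3
  exact avoid123_elim hAv h12 h23 hg1 hg2 hg3 o12 o23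

/-- m = 2, one leaf below the centre letter, four above. -/
lemma m2_mid_hi {z1 z2 z3 z4 z5 : L}
    (hAv : Avoids123 w)
    (hpq : p < q) (hp : w[p]? = some c) (hq : w[q]? = some c)
    (hcu : ∀ k : ℕ, w[k]? = some c → k = p ∨ k = q)
    (o23 : z2 < z3) (o34 : z3 < z4) (o45 : z4 < z5)
    (hg1 : z1 < c) (hg2 : c < z2)
    (hL1 : LeafAt w c z1) (hL2 : LeafAt w c z2) (hL3 : LeafAt w c z3)
    (hL4 : LeafAt w c z4) (hL5 : LeafAt w c z5)
    (hn23 : ¬ Alternates w z2 z3) (hn34 : ¬ Alternates w z3 z4)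
    (hn45 : ¬ Alternates w z4 z5) : False := by
  obtain ⟨b1, hb11, hb12, hb1, hcl1, hul1, huh1⟩ := m2_struct hpq hp hq hcu hL1
  obtain ⟨b2, hb21, hb22, hb2, hcl2, hul2, huh2⟩ := m2_struct hpq hp hq hcu hL2
  obtain ⟨b3, hb31, hb32, hb3, hcl3, hul3, huh3⟩ := m2_struct hpq hp hq hcu hL3
  obtain ⟨b4, hb41, hb42, hb4, hcl4, hul4, huh4⟩ := m2_struct hpq hp hq hcu hL4
  obtain ⟨b5, hb51, hb52, hb5, hcl5, hul5, huh5⟩ := m2_struct hpq hp hq hcu hL5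
  have hnC2 : ¬ ∃ k : ℕ, q < k ∧ w[k]? = some z2 := by
    rintro ⟨g, hgq, hgw⟩
    exact avoid123_elim hAv hb12 hgq hb1 hq hgw hg1 hg2
  have hnC3 : ¬ ∃ k : ℕ, q < k ∧ w[k]? = some z3 := by
    rintro ⟨g, hgq, hgw⟩
    exact avoid123_elim hAv hb12 hgq hb1 hq hgw hg1 (lt_trans hg2 o23)
  have hnC4 : ¬ ∃ k : ℕ, q < k ∧ w[k]? = some z4 := by
    rintro ⟨g, hgq, hgw⟩
    exact avoid123_elim hAv hb12 hgq hb1 hq hgw hg1 (lt_trans (lt_trans hg2 o23) o34)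
  have hnC5 : ¬ ∃ k : ℕ, q < k ∧ w[k]? = some z5 := by
    rintro ⟨g, hgq, hgw⟩
    exact avoid123_elim hAv hb12 hgq hb1 hq hgw hg1
      (lt_trans (lt_trans (lt_trans hg2 o23) o34) o45)
  have hbo32 : b3 < b2 := by
    have hne : b2 ≠ b3 := pos_ne hb2 hb3 (ne_of_lt o23)
    by_contra h
    exact avoid123_elim hAv hb21 (show b2 < b3 by omega) hp hb2 hb3 hg2 o23
  have hbo43 : b4 < b3 := by
    have hne : b3 ≠ b4 := pos_ne hb3 hb4 (ne_of_lt o34)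
    by_contra h
    exact avoid123_elim hAv hb31 (show b3 < b4 by omega) hp hb3 hb4 (lt_trans hg2 o23) o34
  have hbo54 : b5 < b4 := by
    have hne : b4 ≠ b5 := pos_ne hb4 hb5 (ne_of_lt o45)
    by_contra h
    exact avoid123_elim hAv hb41 (show b4 < b5 by omega) hp hb4 hb5
      (lt_trans (lt_trans hg2 o23) o34) o45
  have hF23 := m2_forceA (ne_of_lt o23) hn23 hb21 hb2 hb31 hb3 hcl2 hcl3 hul2 hul3
    hbo32 hnC2 hnC3
  have hF34 := m2_forceA (ne_of_lt o34) hn34 hb31 hb3 hb41 hb4 hcl3 hcl4 hul3 hul4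
    hbo43 hnC3 hnC4
  have hF45 := m2_forceA (ne_of_lt o45) hn45 hb41 hb4 hb51 hb5 hcl4 hcl5 hul4 hul5
    hbo54 hnC4 hnC5
  obtain ⟨a3, ha3p, ha3⟩ := hF23.1
  obtain ⟨a4, ha4p, ha4⟩ := hF34.1
  obtain ⟨a5, ha5p, ha5⟩ := hF45.1
  have h34 : a3 < a4 := hF34.2 a3 a4 ha3p ha4p ha3 ha4
  have h45 : a4 < a5 := hF45.2 a4 a5 ha4p ha5p ha4 ha5
  exact avoid123_elim hAv h34 h45 ha3 ha4 ha5 o34 o45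

/-- m = 2, three leaves below the centre letter, three above. -/
lemma m2_33 {z1 z2 z3 z4 z5 z6 : L}
    (hAv : Avoids123 w)
    (hpq : p < q) (hp : w[p]? = some c) (hq : w[q]? = some c)
    (hcu : ∀ k : ℕ, w[k]? = some c → k = p ∨ k = q)
    (o12 : z1 < z2) (o23 : z2 < z3) (o45 : z4 < z5) (o56 : z5 < z6)
    (hg3 : z3 < c) (hg4 : c < z4)
    (hL1 : LeafAt w c z1) (hL2 : LeafAt w c z2) (hL3 : LeafAt w c z3)
    (hL4 : LeafAt w c z4) (hL5 : LeafAt w c z5) (hL6 : LeafAt w c z6)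
    (hn12 : ¬ Alternates w z1 z2) (hn23 : ¬ Alternates w z2 z3)
    (hn45 : ¬ Alternates w z4 z5) (hn56 : ¬ Alternates w z5 z6)
    (hn34 : ¬ Alternates w z3 z4) : False := by
  obtain ⟨b1, hb11, hb12, hb1, hcl1, hul1, huh1⟩ := m2_struct hpq hp hq hcu hL1
  obtain ⟨b2, hb21, hb22, hb2, hcl2, hul2, huh2⟩ := m2_struct hpq hp hq hcu hL2
  obtain ⟨b3, hb31, hb32, hb3, hcl3, hul3, huh3⟩ := m2_struct hpq hp hq hcu hL3
  obtain ⟨b4, hb41, hb42, hb4, hcl4, hul4, huh4⟩ := m2_struct hpq hp hq hcu hL4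
  obtain ⟨b5, hb51, hb52, hb5, hcl5, hul5, huh5⟩ := m2_struct hpq hp hq hcu hL5
  obtain ⟨b6, hb61, hb62, hb6, hcl6, hul6, huh6⟩ := m2_struct hpq hp hq hcu hL6
  -- the three low leaves never occur before p
  have hnA1 : ¬ ∃ k : ℕ, k < p ∧ w[k]? = some z1 := by
    rintro ⟨a, ha1, haw⟩
    exact avoid123_elim hAv ha1 hb41 haw hp hb4
      (lt_trans (lt_trans o12 o23) hg3) hg4
  have hnA2 : ¬ ∃ k : ℕ, k < p ∧ w[k]? = some z2 := by
    rintro ⟨a, ha1, haw⟩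
    exact avoid123_elim hAv ha1 hb41 haw hp hb4 (lt_trans o23 hg3) hg4
  have hnA3 : ¬ ∃ k : ℕ, k < p ∧ w[k]? = some z3 := by
    rintro ⟨a, ha1, haw⟩
    exact avoid123_elim hAv ha1 hb41 haw hp hb4 hg3 hg4
  -- the three high leaves never occur after q
  have hnC4 : ¬ ∃ k : ℕ, q < k ∧ w[k]? = some z4 := by
    rintro ⟨g, hgq, hgw⟩
    exact avoid123_elim hAv hb12 hgq hb1 hq hgw
      (lt_trans (lt_trans o12 o23) hg3) hg4
  have hnC5 : ¬ ∃ k : ℕ, q < k ∧ w[k]? = some z5 := by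
    rintro ⟨g, hgq, hgw⟩
    exact avoid123_elim hAv hb12 hgq hb1 hq hgw
      (lt_trans (lt_trans o12 o23) hg3) (lt_trans hg4 o45)
  have hnC6 : ¬ ∃ k : ℕ, q < k ∧ w[k]? = some z6 := by
    rintro ⟨g, hgq, hgw⟩
    exact avoid123_elim hAv hb12 hgq hb1 hq hgw
      (lt_trans (lt_trans o12 o23) hg3) (lt_trans (lt_trans hg4 o45) o56)
  -- middle-block orderings
  have hbo21 : b2 < b1 := by
    have hne : b1 ≠ b2 := pos_ne hb1 hb2 (ne_of_lt o12)
    by_contra h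
    exact avoid123_elim hAv (show b1 < b2 by omega) hb22 hb1 hb2 hq o12
      (lt_trans o23 hg3)
  have hbo32 : b3 < b2 := by
    have hne : b2 ≠ b3 := pos_ne hb2 hb3 (ne_of_lt o23)
    by_contra h
    exact avoid123_elim hAv (show b2 < b3 by omega) hb32 hb2 hb3 hq o23 hg3
  have hbo54 : b5 < b4 := by
    have hne : b4 ≠ b5 := pos_ne hb4 hb5 (ne_of_lt o45)
    by_contra h
    exact avoid123_elim hAv hb41 (show b4 < b5 by omega) hp hb4 hb5 hg4 o45
  have hbo65 : b6 < b5 := by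
    have hne : b5 ≠ b6 := pos_ne hb5 hb6 (ne_of_lt o56)
    by_contra h
    exact avoid123_elim hAv hb51 (show b5 < b6 by omega) hp hb5 hb6
      (lt_trans hg4 o45) o56
  -- low-pair forcing
  have hF12 := m2_forceC (ne_of_lt o12) hn12 hb12 hb1 hb22 hb2 hcl1 hcl2 huh1 huh2
    hbo21 hnA1 hnA2
  have hF23 := m2_forceC (ne_of_lt o23) hn23 hb22 hb2 hb32 hb3 hcl2 hcl3 huh2 huh3
    hbo32 hnA2 hnA3
  have hnC3 : ¬ ∃ k : ℕ, q < k ∧ w[k]? = some z3 := by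
    rintro ⟨g3, hg3q, hg3w⟩
    obtain ⟨g1, hg1q, hg1⟩ := hF12.1
    obtain ⟨g2, hg2q, hg2⟩ := hF23.1
    have h12 : g1 < g2 := hF12.2 g1 g2 hg1q hg2q hg1 hg2
    have h23 : g2 < g3 := hF23.2 g2 g3 hg2q hg3q hg2 hg3w
    exact avoid123_elim hAv h12 h23 hg1 hg2 hg3w o12 o23
  -- high-pair forcing
  have hF45 := m2_forceA (ne_of_lt o45) hn45 hb41 hb4 hb51 hb5 hcl4 hcl5 hul4 hul5
    hbo54 hnC4 hnC5
  have hF56 := m2_forceA (ne_of_lt o56) hn56 hb51 hb5 hb61 hb6 hcl5 hcl6 hul5 hul6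
    hbo65 hnC5 hnC6
  have hnA4' : ¬ ∃ k : ℕ, k < p ∧ w[k]? = some z4 := by
    rintro ⟨a4, ha4p, ha4w⟩
    obtain ⟨a5, ha5p, ha5⟩ := hF45.1
    obtain ⟨a6, ha6p, ha6⟩ := hF56.1
    have h45 : a4 < a5 := hF45.2 a4 a5 ha4p ha5p ha4w ha5
    have h56 : a5 < a6 := hF56.2 a5 a6 ha5p ha6p ha5 ha6
    exact avoid123_elim hAv h45 h56 ha4w ha5 ha6 o45 o56
  -- z3 and z4 each occur exactly once
  have hxu3 : ∀ k : ℕ, w[k]? = some z3 → k = b3 := by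
    intro k hk
    rcases hcl3 k hk with h | h | h
    · exact absurd ⟨k, h, hk⟩ hnA3
    · exact h
    · exact absurd ⟨k, h, hk⟩ hnC3
  have hxu4 : ∀ k : ℕ, w[k]? = some z4 → k = b4 := by
    intro k hk
    rcases hcl4 k hk with h | h | h
    · exact absurd ⟨k, h, hk⟩ hnA4'
    · exact h
    · exact absurd ⟨k, h, hk⟩ hnC4
  exact hn34 (alt_one_one hb3 hxu3 hb4 hxu4)

end M2mid
section Master

variable {L : Type*} [LinearOrder L] {w : List L} {c : L}

lemma star_core (hAv : Avoids123 w) (hcw : c ∈ w)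
    (e : Fin 6 → L) (he : StrictMono e)
    (hL : ∀ i, LeafAt w c (e i))
    (hnl : ∀ i j : Fin 6, i ≠ j → ¬ Alternates w (e i) (e j)) : False := by
  have o01 : e 0 < e 1 := he (by decide)
  have o12 : e 1 < e 2 := he (by decide)
  have o23 : e 2 < e 3 := he (by decide)
  have o34 : e 3 < e 4 := he (by decide)
  have o45 : e 4 < e 5 := he (by decide)
  -- there are no three occurrences of c
  have hno3 : ∀ p1 p2 p3 : ℕ, p1 < p2 → p2 < p3 →
      w[p1]? = some c → w[p2]? = some c → w[p3]? = some c → False := by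
    intro p1 p2 p3 h12 h23 hp1 hp2 hp3
    obtain ⟨qu, hqu1, hqu2, hqu⟩ := (hL 0).2.2.2 p1 p2 h12 hp1 hp2
    obtain ⟨rv, hrv1, hrv2, hrv⟩ := (hL 1).2.2.2 p2 p3 h23 hp2 hp3
    rcases lt_trichotomy c (e 0) with hg | hg | hg
    · exact avoid123_elim hAv hqu1 (show qu < rv by omega) hp1 hqu hrv hg o01
    · exact (hL 0).1 hg.symm
    · rcases lt_trichotomy c (e 1) with hg1 | hg1 | hg1
      · exact avoid123_elim hAv hqu2 hrv1 hqu hp2 hrv hg hg1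
      · exact (hL 1).1 hg1.symm
      · exact avoid123_elim hAv (show qu < rv by omega) hrv2 hqu hrv hp3 o01 hg1
  obtain ⟨p0, hp0⟩ := List.mem_iff_getElem?.mp hcw
  by_cases h2 : ∃ k : ℕ, w[k]? = some c ∧ k ≠ p0
  · obtain ⟨k1, hk1, hk1ne⟩ := h2
    obtain ⟨p, q, hpq, hp, hq⟩ : ∃ p q : ℕ, p < q ∧ w[p]? = some c ∧ w[q]? = some c := by
      rcases (show k1 < p0 ∨ p0 < k1 by omega) with h | h
      · exact ⟨k1, p0, h, hk1, hp0⟩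
      · exact ⟨p0, k1, h, hp0, hk1⟩
    have hcu : ∀ k : ℕ, w[k]? = some c → k = p ∨ k = q := by
      intro k hk
      by_contra hno
      push_neg at hno
      rcases (show k < p ∨ (p < k ∧ k < q) ∨ q < k by omega) with h | h | h
      · exact hno3 k p q h hpq hk hp hq
      · exact hno3 p k q h.1 h.2 hp hk hq
      · exact hno3 p q k hpq h hp hq hk
    rcases lt_trichotomy c (e 0) with hg0 | hg0 | hg0
    · exact m2_lo hAv hpq hp hq hcu o01 o12 o23 o34 hg0
        (hL 0) (hL 1) (hL 2) (hL 3) (hL 4)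
        (hnl 1 2 (by decide)) (hnl 2 3 (by decide))
    · exact (hL 0).1 hg0.symm
    · rcases lt_trichotomy c (e 1) with hg1 | hg1 | hg1
      · exact m2_mid_hi hAv hpq hp hq hcu o12 o23 o34 hg0 hg1
          (hL 0) (hL 1) (hL 2) (hL 3) (hL 4)
          (hnl 1 2 (by decide)) (hnl 2 3 (by decide)) (hnl 3 4 (by decide))
      · exact (hL 1).1 hg1.symm
      · rcases lt_trichotomy c (e 2) with hg2 | hg2 | hg2
        · exact m2_mid_hi hAv hpq hp hq hcu o23 o34 o45 hg0 hg2
            (hL 0) (hL 2) (hL 3) (hL 4) (hL 5)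
            (hnl 2 3 (by decide)) (hnl 3 4 (by decide)) (hnl 4 5 (by decide))
        · exact (hL 2).1 hg2.symm
        · rcases lt_trichotomy c (e 3) with hg3 | hg3 | hg3
          · exact m2_33 hAv hpq hp hq hcu o01 o12 o34 o45 hg2 hg3
              (hL 0) (hL 1) (hL 2) (hL 3) (hL 4) (hL 5)
              (hnl 0 1 (by decide)) (hnl 1 2 (by decide))
              (hnl 3 4 (by decide)) (hnl 4 5 (by decide)) (hnl 2 3 (by decide))
          · exact (hL 3).1 hg3.symm
          · rcases lt_trichotomy c (e 4) with hg4 | hg4 | hg4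
            · exact m2_mid_lo hAv hpq hp hq hcu o01 o12 o23 hg3 hg4
                (hL 0) (hL 1) (hL 2) (hL 3) (hL 4)
                (hnl 0 1 (by decide)) (hnl 1 2 (by decide)) (hnl 2 3 (by decide))
            · exact (hL 4).1 hg4.symm
            · rcases lt_trichotomy c (e 5) with hg5 | hg5 | hg5
              · exact m2_mid_lo hAv hpq hp hq hcu o01 o12 o23 hg3 hg5
                  (hL 0) (hL 1) (hL 2) (hL 3) (hL 5)
                  (hnl 0 1 (by decide)) (hnl 1 2 (by decide)) (hnl 2 3 (by decide))
              · exact (hL 5).1 hg5.symm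
              · exact m2_hi hAv hpq hp hq hcu o01 o12 o23 o34 hg4
                  (hL 0) (hL 1) (hL 2) (hL 3) (hL 4)
                  (hnl 1 2 (by decide)) (hnl 2 3 (by decide))
  · have hcu : ∀ k : ℕ, w[k]? = some c → k = p0 := by
      intro k hk; by_contra hne; exact h2 ⟨k, hk, hne⟩
    exact m1_case hAv hp0 hcu e he hL hnl

end Master
/-- the star `K_{1,6}` (the complete bipartite graph with parts of sizes 1 and
6) is not 123-representable: for every injective labeling of its vertices by elements of a
linearly ordered set, no 123-avoiding word represents it. -/
theorem stmt_5 :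
    ∀ (L : Type*) [LinearOrder L] (f : Fin 1 ⊕ Fin 6 → L), Function.Injective f →
      ¬ ∃ w : List L, Avoids123 w ∧
        RepresentsLab (completeBipartiteGraph (Fin 1) (Fin 6)) f w := by
  intro L _ f hf
  rintro ⟨w, hAv, hLet, hMem, hAlt⟩
  set c : L := f (Sum.inl 0) with hc
  set a : Fin 6 → L := fun k => f (Sum.inr k) with ha
  have hainj : Function.Injective a := fun i j h => Sum.inr.inj (hf h)
  have hcard : (Finset.univ.image a).card = 6 := by
    rw [Finset.card_image_of_injective _ hainj, Finset.card_univ, Fintype.card_fin]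
  set E := (Finset.univ.image a).orderIsoOfFin hcard with hE
  set e : Fin 6 → L := fun i => (E i : L) with he'
  have he : StrictMono e := fun i j hij => by
    have := E.strictMono hij
    exact_mod_cast this
  have hrange : ∀ i, ∃ k : Fin 6, a k = e i := by
    intro i
    have hmem : (E i : L) ∈ Finset.univ.image a := (E i).2
    rw [Finset.mem_image] at hmem
    obtain ⟨k, _, hk⟩ := hmem
    exact ⟨k, hk⟩
  have hLeaf : ∀ i, LeafAt w c (e i) := by
    intro i
    obtain ⟨k, hk⟩ := hrange i
    have hne : Sum.inl (0 : Fin 1) ≠ (Sum.inr k : Fin 1 ⊕ Fin 6) := by simp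
    have halt : Alternates w c (a k) := by
      refine (hAlt (Sum.inl 0) (Sum.inr k) hne).mpr ?_
      simp [completeBipartiteGraph]
    rw [← hk]
    refine ⟨?_, hMem (Sum.inr k), halt.2, halt.1⟩
    intro h
    exact hne.symm (hf h)
  have hnl : ∀ i j : Fin 6, i ≠ j → ¬ Alternates w (e i) (e j) := by
    intro i j hij halt
    obtain ⟨k, hk⟩ := hrange i
    obtain ⟨k', hk'⟩ := hrange j
    have hkk' : k ≠ k' := by
      rintro rfl
      exact hij (he.injective (hk.symm.trans hk'))
    have hne : (Sum.inr k : Fin 1 ⊕ Fin 6) ≠ Sum.inr k' := by simp [hkk']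
    have := (hAlt (Sum.inr k) (Sum.inr k') hne).mp (by rw [show f (Sum.inr k) = e i from hk, show f (Sum.inr k') = e j from hk']; exact halt)
    simp [completeBipartiteGraph] at this
  exact star_core hAv (hMem (Sum.inl 0)) e he hLeaf hnl
end
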